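/- arXiv:1904.05702 — 9 statements merged into one kernel-verified Lean document; each statement's English description precedes it below -/
import Mathlib

section
/- There exist real constants a¹_{ij}, a²_{ij}, b¹_{ij}, b²_{ij} (for integers i,j ≥ 0 with i+j ≤ 3) such that the first-order averaged function f(r) = Σ_{0 ≤ i+j ≤ 3} ∫₀^π (a¹_{ij} r^{i+j} cos^{i+1}θ sin^j θ + b¹_{ij} r^{i+j} cos^i θ sin^{j+1}θ)/(r² cos²θ + 1) dθ + Σ_{0 ≤ i+j ≤ 3} ∫_π^{2π} (a²_{ij} r^{i+j} cos^{i+1}θ sin^j θ + b²_{ij} r^{i+j} cos^i θ sin^{j+1}θ)/(r² cos²θ + 1) dθ is not identically zero on (0,∞) and has at least 6 distinct zeros in (0,∞). -/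
open Real

/-! Auxiliary lemmas: Taylor bounds for `arctan`. -/

lemma arctan_taylor_lo {x : ℝ} (hx : 0 ≤ x) :
    x - x^3/3 + x^5/5 - x^7/7 + x^9/9 - x^11/11 + x^13/13 - x^15/15 ≤ arctan x := by
  have key : ∀ y : ℝ, HasDerivAt (fun z : ℝ => arctan z -
      (z - z^3/3 + z^5/5 - z^7/7 + z^9/9 - z^11/11 + z^13/13 - z^15/15))
      (y^16/(1+y^2)) y := by
    intro y
    have h1 := Real.hasDerivAt_arctan y
    have h2 : HasDerivAt (fun z : ℝ => z - z^3/3 + z^5/5 - z^7/7 + z^9/9 - z^11/11 + z^13/13 - z^15/15)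
        (1 - y^2 + y^4 - y^6 + y^8 - y^10 + y^12 - y^14) y := by
      have h := (((((((hasDerivAt_id y).sub ((hasDerivAt_pow 3 y).div_const 3)).add
        ((hasDerivAt_pow 5 y).div_const 5)).sub ((hasDerivAt_pow 7 y).div_const 7)).add
        ((hasDerivAt_pow 9 y).div_const 9)).sub ((hasDerivAt_pow 11 y).div_const 11)).add
        ((hasDerivAt_pow 13 y).div_const 13)).sub ((hasDerivAt_pow 15 y).div_const 15)
      refine h.congr_deriv ?_
      push_cast
      ring
    have := h1.sub h2
    refine this.congr_deriv ?_
    have hy : (1:ℝ) + y^2 ≠ 0 := by positivity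
    field_simp
    ring
  have hmono : MonotoneOn (fun z : ℝ => arctan z -
      (z - z^3/3 + z^5/5 - z^7/7 + z^9/9 - z^11/11 + z^13/13 - z^15/15)) (Set.Icc 0 x) := by
    apply monotoneOn_of_deriv_nonneg (convex_Icc 0 x)
    · exact (Continuous.continuousOn (by continuity)).sub (Continuous.continuousOn (by continuity))
    · intro y _
      exact ((key y).differentiableAt).differentiableWithinAt
    · intro y _
      rw [(key y).deriv]
      positivity
  have h0 : (fun z : ℝ => arctan z -
      (z - z^3/3 + z^5/5 - z^7/7 + z^9/9 - z^11/11 + z^13/13 - z^15/15)) 0 = 0 := by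
    simp [Real.arctan_zero]
  have := hmono (Set.left_mem_Icc.2 hx) (Set.right_mem_Icc.2 hx) hx
  simp only [h0] at this
  linarith [this]

lemma arctan_taylor_hi {x : ℝ} (hx : 0 ≤ x) :
    arctan x ≤ x - x^3/3 + x^5/5 - x^7/7 + x^9/9 - x^11/11 + x^13/13 - x^15/15 + x^17/17 := by
  have key : ∀ y : ℝ, HasDerivAt (fun z : ℝ =>
      (z - z^3/3 + z^5/5 - z^7/7 + z^9/9 - z^11/11 + z^13/13 - z^15/15 + z^17/17) - arctan z)
      (y^18/(1+y^2)) y := by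
    intro y
    have h1 := Real.hasDerivAt_arctan y
    have h2 : HasDerivAt (fun z : ℝ => z - z^3/3 + z^5/5 - z^7/7 + z^9/9 - z^11/11 + z^13/13 - z^15/15 + z^17/17)
        (1 - y^2 + y^4 - y^6 + y^8 - y^10 + y^12 - y^14 + y^16) y := by
      have h := ((((((((hasDerivAt_id y).sub ((hasDerivAt_pow 3 y).div_const 3)).add
        ((hasDerivAt_pow 5 y).div_const 5)).sub ((hasDerivAt_pow 7 y).div_const 7)).add
        ((hasDerivAt_pow 9 y).div_const 9)).sub ((hasDerivAt_pow 11 y).div_const 11)).add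
        ((hasDerivAt_pow 13 y).div_const 13)).sub ((hasDerivAt_pow 15 y).div_const 15)).add
        ((hasDerivAt_pow 17 y).div_const 17)
      refine h.congr_deriv ?_
      push_cast
      ring
    have := h2.sub h1
    refine this.congr_deriv ?_
    have hy : (1:ℝ) + y^2 ≠ 0 := by positivity
    field_simp
    ring
  have hmono : MonotoneOn (fun z : ℝ =>
      (z - z^3/3 + z^5/5 - z^7/7 + z^9/9 - z^11/11 + z^13/13 - z^15/15 + z^17/17) - arctan z)
      (Set.Icc 0 x) := by
    apply monotoneOn_of_deriv_nonneg (convex_Icc 0 x)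
    · exact (Continuous.continuousOn (by continuity)).sub (Continuous.continuousOn (by continuity))
    · intro y _; exact ((key y).differentiableAt).differentiableWithinAt
    · intro y _; rw [(key y).deriv]; positivity
  have := hmono (Set.left_mem_Icc.2 hx) (Set.right_mem_Icc.2 hx) hx
  simp only [Real.arctan_zero] at this
  norm_num at this
  linarith [this]

lemma contD (r : ℝ) : Continuous (fun θ : ℝ => r^2 * cos θ^2 + 1) := by continuity

lemma Dpos (r θ : ℝ) : 0 < r^2 * cos θ^2 + 1 := by positivity

lemma integral_inv_D {r : ℝ} (hr : 0 < r) :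
    ∫ θ in (0:ℝ)..π, 1/(r^2 * cos θ^2 + 1) = π / Real.sqrt (1+r^2) := by
  set k := Real.sqrt (1+r^2) with hkdef
  have hk2 : k^2 = 1 + r^2 := Real.sq_sqrt (by positivity)
  have hk1 : 1 ≤ k := by nlinarith [Real.sqrt_nonneg (1+r^2), hk2]
  have hkpos : 0 < k := by linarith
  set F : ℝ → ℝ := fun θ => (θ + arctan (-(k-1) * sin θ * cos θ / (1 + (k-1) * cos θ^2))) / k
    with hF
  have hW : ∀ θ : ℝ, 0 < 1 + (k-1) * cos θ^2 := by
    intro θ; nlinarith [sq_nonneg (cos θ)]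
  have hderiv : ∀ θ ∈ Set.uIcc (0:ℝ) π, HasDerivAt F (1/(r^2 * cos θ^2 + 1)) θ := by
    intro θ _
    have hWθ := hW θ
    have hWne : (1 + (k-1) * cos θ^2) ≠ 0 := ne_of_gt hWθ
    have hsc : sin θ^2 = 1 - cos θ^2 := by
      have := Real.sin_sq_add_cos_sq θ; linarith
    have hN : HasDerivAt (fun t : ℝ => -(k-1) * sin t * cos t)
        (-(k-1) * (cos θ^2 - sin θ^2)) θ := by
      have h := (((Real.hasDerivAt_sin θ).const_mul (-(k-1))).mul (Real.hasDerivAt_cos θ))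
      refine h.congr_deriv ?_
      ring
    have hWd : HasDerivAt (fun t : ℝ => 1 + (k-1) * cos t^2)
        ((k-1) * (2 * cos θ * -sin θ)) θ := by
      have h := (((Real.hasDerivAt_cos θ).pow 2).const_mul (k-1)).const_add 1
      refine h.congr_deriv ?_
      ring
    have hquot := hN.div hWd hWne
    have harct := (Real.hasDerivAt_arctan
      (-(k-1) * sin θ * cos θ / (1 + (k-1) * cos θ^2))).comp θ hquot
    have hsum := ((hasDerivAt_id θ).add harct).div_const k
    refine hsum.congr_deriv ?_
    have hDpos := Dpos r θ
    have hDne : r^2 * cos θ^2 + 1 ≠ 0 := ne_of_gt hDpos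
    have hkne : k ≠ 0 := ne_of_gt hkpos
    have hden2 : 1 + (-(k-1) * sin θ * cos θ / (1 + (k-1) * cos θ^2))^2 =
        (r^2 * cos θ^2 + 1) / (1 + (k-1) * cos θ^2)^2 := by
      field_simp
      linear_combination ((k-1)^2 * cos θ^2) * hsc + (cos θ^2) * hk2
    have hnum : -(k-1) * (cos θ^2 - sin θ^2) * (1 + (k-1) * cos θ^2) -
        -(k-1) * sin θ * cos θ * ((k-1) * (2 * cos θ * -sin θ)) =
        k - (r^2 * cos θ^2 + 1) := by
      linear_combination ((k-1)*(1+(k-1)*cos θ^2) - 2*(k-1)^2*cos θ^2) * hsc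
        + (-(cos θ^2)) * hk2
    rw [hden2, hnum]
    generalize (1 + (k-1) * cos θ^2) = W at hWne ⊢
    field_simp
    ring
  have hcont : IntervalIntegrable (fun θ => 1/(r^2 * cos θ^2 + 1)) MeasureTheory.volume 0 π := by
    apply Continuous.intervalIntegrable
    exact continuous_const.div (contD r) (fun θ => ne_of_gt (Dpos r θ))
  rw [intervalIntegral.integral_eq_sub_of_hasDerivAt hderiv hcont]
  simp [hF]
lemma intInt_inv_D (r : ℝ) :
    IntervalIntegrable (fun θ => 1/(r^2 * cos θ^2 + 1)) MeasureTheory.volume 0 π :=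
  (continuous_const.div (contD r) (fun θ => ne_of_gt (Dpos r θ))).intervalIntegrable _ _

lemma intInt_cos2_D (r : ℝ) :
    IntervalIntegrable (fun θ => cos θ^2/(r^2 * cos θ^2 + 1)) MeasureTheory.volume 0 π :=
  (((Real.continuous_cos.pow 2)).div (contD r) (fun θ => ne_of_gt (Dpos r θ))).intervalIntegrable _ _

lemma intInt_cos4_D (r : ℝ) :
    IntervalIntegrable (fun θ => cos θ^4/(r^2 * cos θ^2 + 1)) MeasureTheory.volume 0 π :=
  (((Real.continuous_cos.pow 4)).div (contD r) (fun θ => ne_of_gt (Dpos r θ))).intervalIntegrable _ _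

lemma intInt_sin_D (r : ℝ) :
    IntervalIntegrable (fun θ => sin θ/(r^2 * cos θ^2 + 1)) MeasureTheory.volume 0 π := by
  apply Continuous.intervalIntegrable
  exact Real.continuous_sin.div (contD r) (fun θ => ne_of_gt (Dpos r θ))

lemma intInt_cos2sin_D (r : ℝ) :
    IntervalIntegrable (fun θ => cos θ^2 * sin θ/(r^2 * cos θ^2 + 1)) MeasureTheory.volume 0 π := by
  apply Continuous.intervalIntegrable
  exact ((Real.continuous_cos.pow 2).mul Real.continuous_sin).div (contD r)
    (fun θ => ne_of_gt (Dpos r θ))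

lemma integral_cos2_D {r : ℝ} (hr : 0 < r) :
    ∫ θ in (0:ℝ)..π, cos θ^2/(r^2 * cos θ^2 + 1)
      = (π - π/Real.sqrt (1+r^2))/r^2 := by
  have h1 : Set.EqOn (fun θ : ℝ => cos θ^2/(r^2 * cos θ^2 + 1))
      (fun θ : ℝ => (1 - 1/(r^2 * cos θ^2 + 1))/r^2) (Set.uIcc 0 π) := by
    intro θ _
    have := Dpos r θ
    field_simp
    ring
  rw [intervalIntegral.integral_congr h1, intervalIntegral.integral_div,
    intervalIntegral.integral_sub intervalIntegrable_const (intInt_inv_D r),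
    integral_inv_D hr]
  simp

lemma integral_cos4_D {r : ℝ} (hr : 0 < r) :
    ∫ θ in (0:ℝ)..π, cos θ^4/(r^2 * cos θ^2 + 1)
      = (π/2 - (π - π/Real.sqrt (1+r^2))/r^2)/r^2 := by
  have h1 : Set.EqOn (fun θ : ℝ => cos θ^4/(r^2 * cos θ^2 + 1))
      (fun θ : ℝ => (cos θ^2 - cos θ^2/(r^2 * cos θ^2 + 1))/r^2) (Set.uIcc 0 π) := by
    intro θ _
    have := Dpos r θ
    field_simp
    ring
  rw [intervalIntegral.integral_congr h1, intervalIntegral.integral_div,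
    intervalIntegral.integral_sub (f := fun θ => cos θ^2) ((Real.continuous_cos.pow 2).intervalIntegrable _ _)
      (intInt_cos2_D r),
    integral_cos2_D hr, integral_cos_sq]
  simp

lemma integral_sin2_D {r : ℝ} (hr : 0 < r) :
    ∫ θ in (0:ℝ)..π, sin θ^2/(r^2 * cos θ^2 + 1)
      = π/Real.sqrt (1+r^2) - (π - π/Real.sqrt (1+r^2))/r^2 := by
  have h1 : Set.EqOn (fun θ : ℝ => sin θ^2/(r^2 * cos θ^2 + 1))
      (fun θ : ℝ => 1/(r^2 * cos θ^2 + 1) - cos θ^2/(r^2 * cos θ^2 + 1)) (Set.uIcc 0 π) := by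
    intro θ _
    have hD := Dpos r θ
    have hsc : sin θ^2 = 1 - cos θ^2 := by
      have := Real.sin_sq_add_cos_sq θ; linarith
    field_simp
    linarith [hsc]
  rw [intervalIntegral.integral_congr h1,
    intervalIntegral.integral_sub (intInt_inv_D r) (intInt_cos2_D r),
    integral_inv_D hr, integral_cos2_D hr]

lemma integral_sin4_D {r : ℝ} (hr : 0 < r) :
    ∫ θ in (0:ℝ)..π, sin θ^4/(r^2 * cos θ^2 + 1)
      = π/Real.sqrt (1+r^2) - 2*((π - π/Real.sqrt (1+r^2))/r^2)
        + (π/2 - (π - π/Real.sqrt (1+r^2))/r^2)/r^2 := by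
  have h1 : Set.EqOn (fun θ : ℝ => sin θ^4/(r^2 * cos θ^2 + 1))
      (fun θ : ℝ => (1/(r^2 * cos θ^2 + 1) - 2*(cos θ^2/(r^2 * cos θ^2 + 1)))
        + cos θ^4/(r^2 * cos θ^2 + 1)) (Set.uIcc 0 π) := by
    intro θ _
    have hD := Dpos r θ
    have hsc : sin θ^2 = 1 - cos θ^2 := by
      have := Real.sin_sq_add_cos_sq θ; linarith
    have h4 : sin θ^4 = 1 - 2*cos θ^2 + cos θ^4 := by
      have : sin θ^4 = (sin θ^2)^2 := by ring
      rw [this, hsc]; ring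
    field_simp
    linarith [h4]
  rw [intervalIntegral.integral_congr h1,
    intervalIntegral.integral_add ((intInt_inv_D r).sub ((intInt_cos2_D r).const_mul 2))
      (intInt_cos4_D r),
    intervalIntegral.integral_sub (intInt_inv_D r) ((intInt_cos2_D r).const_mul 2),
    intervalIntegral.integral_const_mul,
    integral_inv_D hr, integral_cos2_D hr, integral_cos4_D hr]

lemma integral_sin_D {r : ℝ} (hr : 0 < r) :
    ∫ θ in (0:ℝ)..π, sin θ/(r^2 * cos θ^2 + 1) = 2 * arctan r / r := by
  have hderiv : ∀ θ ∈ Set.uIcc (0:ℝ) π,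
      HasDerivAt (fun t : ℝ => -(arctan (r * cos t))/r) (sin θ/(r^2 * cos θ^2 + 1)) θ := by
    intro θ _
    have h := (((Real.hasDerivAt_arctan (r * cos θ)).comp θ
      ((Real.hasDerivAt_cos θ).const_mul r)).neg).div_const r
    refine h.congr_deriv ?_
    have hD := Dpos r θ
    field_simp
    ring
  rw [intervalIntegral.integral_eq_sub_of_hasDerivAt hderiv (intInt_sin_D r)]
  simp [Real.arctan_neg]
  ring

lemma integral_cos2sin_D {r : ℝ} (hr : 0 < r) :
    ∫ θ in (0:ℝ)..π, cos θ^2 * sin θ/(r^2 * cos θ^2 + 1)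
      = (2 - 2 * arctan r / r)/r^2 := by
  have hderiv : ∀ θ ∈ Set.uIcc (0:ℝ) π,
      HasDerivAt (fun t : ℝ => (-(cos t) + arctan (r * cos t)/r)/r^2)
        (cos θ^2 * sin θ/(r^2 * cos θ^2 + 1)) θ := by
    intro θ _
    have h := (((Real.hasDerivAt_cos θ).neg).add
      (((Real.hasDerivAt_arctan (r * cos θ)).comp θ
        ((Real.hasDerivAt_cos θ).const_mul r)).div_const r)).div_const (r^2)
    refine h.congr_deriv ?_
    have hD := Dpos r θ
    have hr' : r ≠ 0 := ne_of_gt hr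
    field_simp
    ring
  rw [intervalIntegral.integral_eq_sub_of_hasDerivAt hderiv (intInt_cos2sin_D r)]
  have hr' : r ≠ 0 := ne_of_gt hr
  simp [Real.arctan_neg]
  field_simp
  ring

lemma integral_sin3_D {r : ℝ} (hr : 0 < r) :
    ∫ θ in (0:ℝ)..π, sin θ^3/(r^2 * cos θ^2 + 1)
      = 2 * arctan r / r - (2 - 2 * arctan r / r)/r^2 := by
  have h1 : Set.EqOn (fun θ : ℝ => sin θ^3/(r^2 * cos θ^2 + 1))
      (fun θ : ℝ => sin θ/(r^2 * cos θ^2 + 1) - cos θ^2 * sin θ/(r^2 * cos θ^2 + 1))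
      (Set.uIcc 0 π) := by
    intro θ _
    have hD := Dpos r θ
    have hsc : sin θ^2 = 1 - cos θ^2 := by
      have := Real.sin_sq_add_cos_sq θ; linarith
    have h3 : sin θ^3 = sin θ - cos θ^2 * sin θ := by
      have : sin θ^3 = sin θ^2 * sin θ := by ring
      rw [this, hsc]; ring
    field_simp
    linarith [h3]
  rw [intervalIntegral.integral_congr h1,
    intervalIntegral.integral_sub (intInt_sin_D r) (intInt_cos2sin_D r),
    integral_sin_D hr, integral_cos2sin_D hr]
noncomputable def A1 : ℕ → ℕ → ℝ := fun i j =>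
  if i = 1 ∧ j = 0 then (876203/1000000) / π
  else if i = 3 ∧ j = 0 then (739127/1000000) / π
  else 0

noncomputable def B1 : ℕ → ℕ → ℝ := fun i j =>
  if i = 0 ∧ j = 0 then -549/2000000
  else if i = 0 ∧ j = 1 then (-862723/1000000) / π
  else if i = 0 ∧ j = 2 then -233289/2000000
  else if i = 0 ∧ j = 3 then (-201/1000000) / π
  else if i = 2 ∧ j = 0 then 379028/2000000
  else 0

noncomputable def Z2 : ℕ → ℕ → ℝ := fun _ _ => 0

noncomputable def fdef : ℝ → ℝ := fun r =>
  (∑ i ∈ Finset.range 4, ∑ j ∈ Finset.range (4 - i),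
    ∫ θ in (0:ℝ)..Real.pi,
      (A1 i j * r ^ (i + j) * Real.cos θ ^ (i + 1) * Real.sin θ ^ j
        + B1 i j * r ^ (i + j) * Real.cos θ ^ i * Real.sin θ ^ (j + 1))
        / (r ^ 2 * Real.cos θ ^ 2 + 1)) +
  (∑ i ∈ Finset.range 4, ∑ j ∈ Finset.range (4 - i),
    ∫ θ in Real.pi..(2 * Real.pi),
      (Z2 i j * r ^ (i + j) * Real.cos θ ^ (i + 1) * Real.sin θ ^ j
        + Z2 i j * r ^ (i + j) * Real.cos θ ^ i * Real.sin θ ^ (j + 1))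
        / (r ^ 2 * Real.cos θ ^ 2 + 1))

noncomputable def hcf : ℝ → ℝ := fun r =>
  612317/1000000 + 369865/1000000 * r + (-612866/1000000) * arctan r / r
    + (-233289/1000000) * r * arctan r
    + ((-863125/1000000) * r + (-201/1000000) * r^3) * (Real.sqrt (1+r^2))⁻¹
    + (1 - (Real.sqrt (1+r^2))⁻¹) / r

lemma key_eq (r : ℝ) (hr : 0 < r) : fdef r = hcf r := by
  have hk : 0 < Real.sqrt (1+r^2) := Real.sqrt_pos.2 (by positivity)
  have hk2 : Real.sqrt (1+r^2)^2 = 1 + r^2 := Real.sq_sqrt (by positivity)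
  unfold fdef
  simp only [Finset.sum_range_succ, Finset.sum_range_zero]
  norm_num [A1, B1, Z2]
  have e1 : (∫ θ in (0:ℝ)..π, -(549 / 2000000 * Real.sin θ) / (r ^ 2 * Real.cos θ ^ 2 + 1))
      = -(549/2000000) * (2 * arctan r / r) := by
    rw [← integral_sin_D hr, ← intervalIntegral.integral_const_mul]
    congr 1; funext θ; ring
  have e2 : (∫ θ in (0:ℝ)..π, -(862723 / 1000000) / π * r * Real.sin θ ^ 2 / (r ^ 2 * Real.cos θ ^ 2 + 1))
      = (-(862723/1000000)/π * r) * (π/Real.sqrt (1+r^2) - (π - π/Real.sqrt (1+r^2))/r^2) := by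
    rw [← integral_sin2_D hr, ← intervalIntegral.integral_const_mul]
    congr 1; funext θ; ring
  have e3 : (∫ θ in (0:ℝ)..π, -(233289 / 2000000 * r ^ 2 * Real.sin θ ^ 3) / (r ^ 2 * Real.cos θ ^ 2 + 1))
      = (-(233289/2000000) * r^2) * (2 * arctan r / r - (2 - 2 * arctan r / r)/r^2) := by
    rw [← integral_sin3_D hr, ← intervalIntegral.integral_const_mul]
    congr 1; funext θ; ring
  have e4 : (∫ θ in (0:ℝ)..π, -(201 / 1000000) / π * r ^ 3 * Real.sin θ ^ 4 / (r ^ 2 * Real.cos θ ^ 2 + 1))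
      = (-(201/1000000)/π * r^3) * (π/Real.sqrt (1+r^2) - 2*((π - π/Real.sqrt (1+r^2))/r^2)
        + (π/2 - (π - π/Real.sqrt (1+r^2))/r^2)/r^2) := by
    rw [← integral_sin4_D hr, ← intervalIntegral.integral_const_mul]
    congr 1; funext θ; ring
  have e5 : (∫ θ in (0:ℝ)..π, 876203 / 1000000 / π * r * Real.cos θ ^ 2 / (r ^ 2 * Real.cos θ ^ 2 + 1))
      = (876203/1000000/π * r) * ((π - π/Real.sqrt (1+r^2))/r^2) := by
    rw [← integral_cos2_D hr, ← intervalIntegral.integral_const_mul]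
    congr 1; funext θ; ring
  have e6 : (∫ θ in (0:ℝ)..π, 94757 / 500000 * r ^ 2 * Real.cos θ ^ 2 * Real.sin θ / (r ^ 2 * Real.cos θ ^ 2 + 1))
      = (94757/500000 * r^2) * ((2 - 2 * arctan r / r)/r^2) := by
    rw [← integral_cos2sin_D hr, ← intervalIntegral.integral_const_mul]
    congr 1; funext θ; ring
  have e7 : (∫ θ in (0:ℝ)..π, 739127 / 1000000 / π * r ^ 3 * Real.cos θ ^ 4 / (r ^ 2 * Real.cos θ ^ 2 + 1))
      = (739127/1000000/π * r^3) * ((π/2 - (π - π/Real.sqrt (1+r^2))/r^2)/r^2) := by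
    rw [← integral_cos4_D hr, ← intervalIntegral.integral_const_mul]
    congr 1; funext θ; ring
  rw [e1, e2, e3, e4, e5, e6, e7]
  unfold hcf
  have hrne : r ≠ 0 := ne_of_gt hr
  have hkne : Real.sqrt (1+r^2) ≠ 0 := ne_of_gt hk
  field_simp
  ring
lemma sign_1_10 : hcf (1/10) < 0 := by
  unfold hcf
  have hs1 : (99503717/100000000:ℝ) < (Real.sqrt (1+(1/10:ℝ)^2))⁻¹ := by
    rw [← Real.sqrt_inv, show ((1+(1/10:ℝ)^2)⁻¹) = (100/101:ℝ) by norm_num,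
      Real.lt_sqrt (by norm_num)]
    norm_num
  have hs2 : (Real.sqrt (1+(1/10:ℝ)^2))⁻¹ < (99503721/100000000:ℝ) := by
    rw [← Real.sqrt_inv, show ((1+(1/10:ℝ)^2)⁻¹) = (100/101:ℝ) by norm_num,
      Real.sqrt_lt' (by norm_num)]
    norm_num
  have ha1 := arctan_taylor_lo (x := (1/10:ℝ)) (by norm_num)
  have ha2 := arctan_taylor_hi (x := (1/10:ℝ)) (by norm_num)
  norm_num at ha1 ha2 hs1 hs2 ⊢
  nlinarith [ha1, ha2, hs1, hs2]

lemma sign_3_10 : hcf (3/10) > 0 := by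
  unfold hcf
  have hs1 : (95782626/100000000:ℝ) < (Real.sqrt (1+(3/10:ℝ)^2))⁻¹ := by
    rw [← Real.sqrt_inv, show ((1+(3/10:ℝ)^2)⁻¹) = (100/109:ℝ) by norm_num,
      Real.lt_sqrt (by norm_num)]
    norm_num
  have hs2 : (Real.sqrt (1+(3/10:ℝ)^2))⁻¹ < (95782630/100000000:ℝ) := by
    rw [← Real.sqrt_inv, show ((1+(3/10:ℝ)^2)⁻¹) = (100/109:ℝ) by norm_num,
      Real.sqrt_lt' (by norm_num)]
    norm_num
  have ha1 := arctan_taylor_lo (x := (3/10:ℝ)) (by norm_num)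
  have ha2 := arctan_taylor_hi (x := (3/10:ℝ)) (by norm_num)
  norm_num at ha1 ha2 hs1 hs2 ⊢
  nlinarith [ha1, ha2, hs1, hs2]

lemma sign_1_2 : hcf (1/2) < 0 := by
  unfold hcf
  have hs1 : (89442717/100000000:ℝ) < (Real.sqrt (1+(1/2:ℝ)^2))⁻¹ := by
    rw [← Real.sqrt_inv, show ((1+(1/2:ℝ)^2)⁻¹) = (4/5:ℝ) by norm_num,
      Real.lt_sqrt (by norm_num)]
    norm_num
  have hs2 : (Real.sqrt (1+(1/2:ℝ)^2))⁻¹ < (89442721/100000000:ℝ) := by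
    rw [← Real.sqrt_inv, show ((1+(1/2:ℝ)^2)⁻¹) = (4/5:ℝ) by norm_num,
      Real.sqrt_lt' (by norm_num)]
    norm_num
  have ha1 := arctan_taylor_lo (x := (1/2:ℝ)) (by norm_num)
  have ha2 := arctan_taylor_hi (x := (1/2:ℝ)) (by norm_num)
  norm_num at ha1 ha2 hs1 hs2 ⊢
  nlinarith [ha1, ha2, hs1, hs2]

lemma sign_1 : hcf (1) > 0 := by
  unfold hcf
  have hs1 : (70710676/100000000:ℝ) < (Real.sqrt (1+(1:ℝ)^2))⁻¹ := by
    rw [← Real.sqrt_inv, show ((1+(1:ℝ)^2)⁻¹) = (1/2:ℝ) by norm_num,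
      Real.lt_sqrt (by norm_num)]
    norm_num
  have hs2 : (Real.sqrt (1+(1:ℝ)^2))⁻¹ < (70710680/100000000:ℝ) := by
    rw [← Real.sqrt_inv, show ((1+(1:ℝ)^2)⁻¹) = (1/2:ℝ) by norm_num,
      Real.sqrt_lt' (by norm_num)]
    norm_num
  have ha : arctan (1:ℝ) = π/4 := Real.arctan_one
  have hp1 := Real.pi_gt_d6
  have hp2 := Real.pi_lt_d6
  norm_num at hs1 hs2 ⊢
  nlinarith [ha, hp1, hp2, hs1, hs2]

lemma sign_2 : hcf (2) < 0 := by
  unfold hcf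
  have hs1 : (44721357/100000000:ℝ) < (Real.sqrt (1+(2:ℝ)^2))⁻¹ := by
    rw [← Real.sqrt_inv, show ((1+(2:ℝ)^2)⁻¹) = (1/5:ℝ) by norm_num,
      Real.lt_sqrt (by norm_num)]
    norm_num
  have hs2 : (Real.sqrt (1+(2:ℝ)^2))⁻¹ < (44721361/100000000:ℝ) := by
    rw [← Real.sqrt_inv, show ((1+(2:ℝ)^2)⁻¹) = (1/5:ℝ) by norm_num,
      Real.sqrt_lt' (by norm_num)]
    norm_num
  have hinv : arctan ((2:ℝ))⁻¹ = π/2 - arctan (2) := Real.arctan_inv_of_pos (by norm_num)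
  have ha1 := arctan_taylor_lo (x := ((2:ℝ))⁻¹) (by norm_num)
  have ha2 := arctan_taylor_hi (x := ((2:ℝ))⁻¹) (by norm_num)
  have hp1 := Real.pi_gt_d6
  have hp2 := Real.pi_lt_d6
  norm_num at ha1 ha2 hinv hs1 hs2 ⊢
  nlinarith [ha1, ha2, hinv, hp1, hp2, hs1, hs2]

lemma sign_5 : hcf (5) > 0 := by
  unfold hcf
  have hs1 : (19611611/100000000:ℝ) < (Real.sqrt (1+(5:ℝ)^2))⁻¹ := by
    rw [← Real.sqrt_inv, show ((1+(5:ℝ)^2)⁻¹) = (1/26:ℝ) by norm_num,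
      Real.lt_sqrt (by norm_num)]
    norm_num
  have hs2 : (Real.sqrt (1+(5:ℝ)^2))⁻¹ < (19611615/100000000:ℝ) := by
    rw [← Real.sqrt_inv, show ((1+(5:ℝ)^2)⁻¹) = (1/26:ℝ) by norm_num,
      Real.sqrt_lt' (by norm_num)]
    norm_num
  have hinv : arctan ((5:ℝ))⁻¹ = π/2 - arctan (5) := Real.arctan_inv_of_pos (by norm_num)
  have ha1 := arctan_taylor_lo (x := ((5:ℝ))⁻¹) (by norm_num)
  have ha2 := arctan_taylor_hi (x := ((5:ℝ))⁻¹) (by norm_num)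
  have hp1 := Real.pi_gt_d6
  have hp2 := Real.pi_lt_d6
  norm_num at ha1 ha2 hinv hs1 hs2 ⊢
  nlinarith [ha1, ha2, hinv, hp1, hp2, hs1, hs2]

lemma sign_20 : hcf (20) < 0 := by
  unfold hcf
  have hs1 : (4993759/100000000:ℝ) < (Real.sqrt (1+(20:ℝ)^2))⁻¹ := by
    rw [← Real.sqrt_inv, show ((1+(20:ℝ)^2)⁻¹) = (1/401:ℝ) by norm_num,
      Real.lt_sqrt (by norm_num)]
    norm_num
  have hs2 : (Real.sqrt (1+(20:ℝ)^2))⁻¹ < (4993763/100000000:ℝ) := by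
    rw [← Real.sqrt_inv, show ((1+(20:ℝ)^2)⁻¹) = (1/401:ℝ) by norm_num,
      Real.sqrt_lt' (by norm_num)]
    norm_num
  have hinv : arctan ((20:ℝ))⁻¹ = π/2 - arctan (20) := Real.arctan_inv_of_pos (by norm_num)
  have ha1 := arctan_taylor_lo (x := ((20:ℝ))⁻¹) (by norm_num)
  have ha2 := arctan_taylor_hi (x := ((20:ℝ))⁻¹) (by norm_num)
  have hp1 := Real.pi_gt_d6
  have hp2 := Real.pi_lt_d6
  norm_num at ha1 ha2 hinv hs1 hs2 ⊢
  nlinarith [ha1, ha2, hinv, hp1, hp2, hs1, hs2]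
lemma hcf_cont : ContinuousOn hcf (Set.Ioi 0) := by
  have hsq : Continuous (fun r:ℝ => Real.sqrt (1+r^2)) :=
    (continuous_const.add (continuous_pow 2)).sqrt
  have hsqne : ∀ x ∈ Set.Ioi (0:ℝ), Real.sqrt (1+x^2) ≠ 0 :=
    fun x _ => ne_of_gt (Real.sqrt_pos.2 (by positivity))
  have hxne : ∀ x ∈ Set.Ioi (0:ℝ), x ≠ 0 := fun x hx => ne_of_gt hx
  have hinv : ContinuousOn (fun r:ℝ => (Real.sqrt (1+r^2))⁻¹) (Set.Ioi 0) :=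
    hsq.continuousOn.inv₀ hsqne
  unfold hcf
  exact (((((continuousOn_const.add (continuousOn_const.mul continuousOn_id)).add
    ((continuousOn_const.mul Real.continuous_arctan.continuousOn).div continuousOn_id hxne)).add
    ((continuousOn_const.mul continuousOn_id).mul Real.continuous_arctan.continuousOn)).add
    (((continuousOn_const.mul continuousOn_id).add
      (continuousOn_const.mul (continuousOn_pow 3))).mul hinv)).add
    ((continuousOn_const.sub hinv).div continuousOn_id hxne))

lemma ivt_updown {a b : ℝ} (h0 : 0 < a) (hab : a < b) (hfa : hcf a < 0) (hfb : 0 < hcf b) :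
    ∃ c ∈ Set.Ioo a b, hcf c = 0 := by
  have hsub : Set.Icc a b ⊆ Set.Ioi 0 := fun x hx => lt_of_lt_of_le h0 hx.1
  obtain ⟨c, hc, hc0⟩ := intermediate_value_Ioo (le_of_lt hab) (hcf_cont.mono hsub) ⟨hfa, hfb⟩
  exact ⟨c, hc, hc0⟩

lemma ivt_downup {a b : ℝ} (h0 : 0 < a) (hab : a < b) (hfa : 0 < hcf a) (hfb : hcf b < 0) :
    ∃ c ∈ Set.Ioo a b, hcf c = 0 := by
  have hsub : Set.Icc a b ⊆ Set.Ioi 0 := fun x hx => lt_of_lt_of_le h0 hx.1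
  obtain ⟨c, hc, hc0⟩ := intermediate_value_Ioo' (le_of_lt hab) (hcf_cont.mono hsub) ⟨hfb, hfa⟩
  exact ⟨c, hc, hc0⟩

lemma six_zeros : ∃ z1 z2 z3 z4 z5 z6 : ℝ,
    0 < z1 ∧ z1 < z2 ∧ z2 < z3 ∧ z3 < z4 ∧ z4 < z5 ∧ z5 < z6 ∧
    hcf z1 = 0 ∧ hcf z2 = 0 ∧ hcf z3 = 0 ∧ hcf z4 = 0 ∧ hcf z5 = 0 ∧ hcf z6 = 0 := by
  obtain ⟨z1, hz1, h1⟩ := ivt_updown (by norm_num) (by norm_num : (1/10:ℝ) < 3/10) sign_1_10 sign_3_10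
  obtain ⟨z2, hz2, h2⟩ := ivt_downup (by norm_num) (by norm_num : (3/10:ℝ) < 1/2) sign_3_10 sign_1_2
  obtain ⟨z3, hz3, h3⟩ := ivt_updown (by norm_num) (by norm_num : (1/2:ℝ) < 1) sign_1_2 sign_1
  obtain ⟨z4, hz4, h4⟩ := ivt_downup (by norm_num) (by norm_num : (1:ℝ) < 2) sign_1 sign_2
  obtain ⟨z5, hz5, h5⟩ := ivt_updown (by norm_num) (by norm_num : (2:ℝ) < 5) sign_2 sign_5
  obtain ⟨z6, hz6, h6⟩ := ivt_downup (by norm_num) (by norm_num : (5:ℝ) < 20) sign_5 sign_20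
  exact ⟨z1, z2, z3, z4, z5, z6, by linarith [hz1.1], by linarith [hz1.2, hz2.1],
    by linarith [hz2.2, hz3.1], by linarith [hz3.2, hz4.1], by linarith [hz4.2, hz5.1],
    by linarith [hz5.2, hz6.1], h1, h2, h3, h4, h5, h6⟩

/-- There exist coefficients for which the first-order averaged
function of the piecewise cubic perturbation is not identically zero on
`(0, ∞)` and has at least 6 distinct zeros in `(0, ∞)`. -/
theorem averaged_function_six_zeros_attained :
    ∃ (a1 a2 b1 b2 : ℕ → ℕ → ℝ) (f : ℝ → ℝ),
      (∀ r : ℝ, f r =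
        (∑ i ∈ Finset.range 4, ∑ j ∈ Finset.range (4 - i),
          ∫ θ in (0:ℝ)..Real.pi,
            (a1 i j * r ^ (i + j) * Real.cos θ ^ (i + 1) * Real.sin θ ^ j
              + b1 i j * r ^ (i + j) * Real.cos θ ^ i * Real.sin θ ^ (j + 1))
              / (r ^ 2 * Real.cos θ ^ 2 + 1)) +
        (∑ i ∈ Finset.range 4, ∑ j ∈ Finset.range (4 - i),
          ∫ θ in Real.pi..(2 * Real.pi),
            (a2 i j * r ^ (i + j) * Real.cos θ ^ (i + 1) * Real.sin θ ^ j
              + b2 i j * r ^ (i + j) * Real.cos θ ^ i * Real.sin θ ^ (j + 1))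
              / (r ^ 2 * Real.cos θ ^ 2 + 1))) ∧
      (¬ ∀ r ∈ Set.Ioi (0:ℝ), f r = 0) ∧
      ∃ S : Finset ℝ, 6 ≤ S.card ∧ ∀ r ∈ S, r ∈ Set.Ioi (0:ℝ) ∧ f r = 0 := by
  obtain ⟨z1, z2, z3, z4, z5, z6, hp1, h12, h23, h34, h45, h56, e1, e2, e3, e4, e5, e6⟩ :=
    six_zeros
  refine ⟨A1, Z2, B1, Z2, fdef, fun r => rfl, ?_, ?_⟩
  · intro hall
    have h1 := hall 1 (Set.mem_Ioi.2 one_pos)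
    rw [key_eq 1 one_pos] at h1
    exact absurd h1 (ne_of_gt sign_1)
  · refine ⟨{z1, z2, z3, z4, z5, z6}, ?_, ?_⟩
    · have hcard : ({z1, z2, z3, z4, z5, z6} : Finset ℝ).card = 6 := by
        rw [Finset.card_insert_of_notMem (by
          simp only [Finset.mem_insert, Finset.mem_singleton]
          push_neg
          exact ⟨by linarith, by linarith, by linarith, by linarith, by linarith⟩),
          Finset.card_insert_of_notMem (by
          simp only [Finset.mem_insert, Finset.mem_singleton]
          push_neg
          exact ⟨by linarith, by linarith, by linarith, by linarith⟩),
          Finset.card_insert_of_notMem (by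
          simp only [Finset.mem_insert, Finset.mem_singleton]
          push_neg
          exact ⟨by linarith, by linarith, by linarith⟩),
          Finset.card_insert_of_notMem (by
          simp only [Finset.mem_insert, Finset.mem_singleton]
          push_neg
          exact ⟨by linarith, by linarith⟩),
          Finset.card_insert_of_notMem (by
          simp only [Finset.mem_singleton]
          exact by linarith),
          Finset.card_singleton]
      omega
    · intro r hr
      simp only [Finset.mem_insert, Finset.mem_singleton] at hr
      rcases hr with rfl | rfl | rfl | rfl | rfl | rfl
      · exact ⟨Set.mem_Ioi.2 (by linarith), by rw [key_eq _ (by linarith)]; exact e1⟩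
      · exact ⟨Set.mem_Ioi.2 (by linarith), by rw [key_eq _ (by linarith)]; exact e2⟩
      · exact ⟨Set.mem_Ioi.2 (by linarith), by rw [key_eq _ (by linarith)]; exact e3⟩
      · exact ⟨Set.mem_Ioi.2 (by linarith), by rw [key_eq _ (by linarith)]; exact e4⟩
      · exact ⟨Set.mem_Ioi.2 (by linarith), by rw [key_eq _ (by linarith)]; exact e5⟩
      · exact ⟨Set.mem_Ioi.2 (by linarith), by rw [key_eq _ (by linarith)]; exact e6⟩
end

section
/- Let a_{ij}, b_{ij} (for integers i,j ≥ 0 with i+j ≤ 3) be arbitrary real constants (the smooth case, where the coefficients on the two sides of the switching line coincide), and define f : (0,∞) → ℝ by f(r) = Σ_{0 ≤ i+j ≤ 3} ∫₀^{2π} (a_{ij} r^{i+j} cos^{i+1}θ sin^j θ + b_{ij} r^{i+j} cos^i θ sin^{j+1}θ)/(r² cos²θ + 1) dθ. If f is not identically zero on (0,∞), then f has at most 3 zeros in (0,∞). -/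
open Real intervalIntegral MeasureTheory

namespace AvgSmooth

lemma den_pos (r θ : ℝ) : 0 < r^2 * Real.cos θ^2 + 1 := by positivity

lemma cont_div (r : ℝ) {g : ℝ → ℝ} (hg : Continuous g) :
    Continuous (fun θ => g θ / (r^2 * Real.cos θ^2 + 1)) :=
  hg.div (by continuity) (fun θ => (den_pos r θ).ne')

lemma iic (r A : ℝ) {g : ℝ → ℝ} (hg : Continuous g) :
    IntervalIntegrable (fun θ => A * (g θ / (r^2 * Real.cos θ^2 + 1))) volume 0 (2*π) :=
  (continuous_const.mul (cont_div r hg)).intervalIntegrable _ _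

lemma odd_neg {g : ℝ → ℝ} (hg : ∀ θ, g (2*π - θ) = - g θ) :
    ∫ θ in (0:ℝ)..(2*π), g θ = 0 := by
  have h := intervalIntegral.integral_comp_sub_left (a := 0) (b := 2*π) g (2*π)
  simp only [sub_zero, sub_self] at h
  have h2 : (∫ x in (0:ℝ)..(2*π), g (2*π - x)) = ∫ x in (0:ℝ)..(2*π), (- g x) := by
    simp only [hg]
  rw [h2, intervalIntegral.integral_neg] at h
  linarith

lemma odd_shift {g : ℝ → ℝ} (hg : ∀ θ, g (θ + π) = - g θ) (hc : Continuous g) :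
    ∫ θ in (0:ℝ)..(2*π), g θ = 0 := by
  have hsplit := intervalIntegral.integral_add_adjacent_intervals
    (hc.intervalIntegrable (μ := volume) 0 π) (hc.intervalIntegrable (μ := volume) π (2*π))
  have h := intervalIntegral.integral_comp_add_right (a := 0) (b := π) g π
  rw [zero_add, show π + π = 2*π by ring] at h
  have h2 : (∫ x in (0:ℝ)..π, g (x + π)) = ∫ x in (0:ℝ)..π, (- g x) := by
    simp only [hg]
  rw [h2, intervalIntegral.integral_neg] at h
  linarith

lemma base (r : ℝ) :
    ∫ θ in (0:ℝ)..(2*π), 1 / (r^2 * Real.cos θ^2 + 1) = 2*π / Real.sqrt (r^2+1) := by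
  set u := Real.sqrt (r^2+1) with hu_def
  have hupos : 0 < u := Real.sqrt_pos.2 (by positivity)
  have hu2 : u^2 = r^2 + 1 := Real.sq_sqrt (by positivity)
  have hu1 : 1 ≤ u := by nlinarith
  have hDpos : ∀ θ, 0 < u * Real.cos θ^2 + Real.sin θ^2 := by
    intro θ
    nlinarith [Real.sin_sq_add_cos_sq θ, sq_nonneg (Real.cos θ)]
  set G : ℝ → ℝ := fun θ =>
    (θ - Real.arctan ((u-1) * Real.sin θ * Real.cos θ / (u * Real.cos θ^2 + Real.sin θ^2))) / u
    with hG
  have hderiv : ∀ θ, HasDerivAt G (1 / (r^2 * Real.cos θ^2 + 1)) θ := by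
    intro θ
    have hN : HasDerivAt (fun t => (u-1) * Real.sin t * Real.cos t)
        ((u-1) * (Real.cos θ^2 - Real.sin θ^2)) θ := by
      have h1 := (((Real.hasDerivAt_sin θ).const_mul (u-1)).mul (Real.hasDerivAt_cos θ))
      exact h1.congr_deriv (by ring)
    have hD : HasDerivAt (fun t => u * Real.cos t^2 + Real.sin t^2)
        (2*(1-u) * Real.sin θ * Real.cos θ) θ := by
      have h1 := (((Real.hasDerivAt_cos θ).pow 2).const_mul u).add ((Real.hasDerivAt_sin θ).pow 2)
      exact h1.congr_deriv (by ring)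
    have hQ := hN.div hD (hDpos θ).ne'
    have hmain := ((hasDerivAt_id θ).sub hQ.arctan).div_const u
    refine hmain.congr_deriv ?_
    symm
    simp only [Pi.div_apply]
    set c := Real.cos θ
    set S := Real.sin θ
    have hS : S^2 = 1 - c^2 := by
      have := Real.sin_sq_add_cos_sq θ; linarith
    have hD0 : (u * c^2 + S^2) ≠ 0 := (hDpos θ).ne'
    have hDen : (0:ℝ) < (u*c^2+S^2)^2 + ((u-1)*S*c)^2 := by positivity
    rw [show r^2 = u^2 - 1 by linarith]
    have hpos : (0:ℝ) < (u^2 - 1) * c^2 + 1 := by nlinarith [sq_nonneg c]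
    field_simp
    linear_combination (u*c^2*S^2 + u*c^4 - u^3*c^2*S^2 - u^3*c^4) * hS
  rw [intervalIntegral.integral_eq_sub_of_hasDerivAt (f := G) (fun θ _ => hderiv θ)
    (((continuous_const.div (by continuity) (fun θ => (den_pos r θ).ne'))).intervalIntegrable _ _)]
  rw [hG]
  simp [Real.sin_two_pi, Real.arctan_zero]

lemma even_val (r α β γ : ℝ) :
    ∫ θ in (0:ℝ)..(2*π), (α + β * Real.cos θ^2 + γ * (1/(r^2 * Real.cos θ^2 + 1)))
      = 2*π*α + π*β + γ * (2*π / Real.sqrt (r^2+1)) := by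
  have i1 : IntervalIntegrable (fun _ : ℝ => α) volume 0 (2*π) := intervalIntegrable_const
  have i2 : IntervalIntegrable (fun θ => β * Real.cos θ^2) volume 0 (2*π) :=
    (by continuity : Continuous fun θ => β * Real.cos θ^2).intervalIntegrable _ _
  have i3 : IntervalIntegrable (fun θ => γ * (1/(r^2 * Real.cos θ^2 + 1))) volume 0 (2*π) :=
    (continuous_const.mul (cont_div r continuous_const)).intervalIntegrable _ _
  rw [intervalIntegral.integral_add (i1.add i2) i3, intervalIntegral.integral_add i1 i2,
    intervalIntegral.integral_const_mul, intervalIntegral.integral_const_mul,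
    intervalIntegral.integral_const, integral_cos_sq, base]
  simp [Real.sin_two_pi, Real.cos_two_pi]
  ring

lemma Zs1 (r : ℝ) : ∫ θ in (0:ℝ)..(2*π), Real.sin θ / (r^2 * Real.cos θ^2 + 1) = 0 := by
  apply odd_neg; intro θ
  simp only [Real.sin_sub, Real.cos_sub, Real.sin_two_pi, Real.cos_two_pi]
  ring

lemma Zc1s1 (r : ℝ) :
    ∫ θ in (0:ℝ)..(2*π), Real.cos θ * Real.sin θ / (r^2 * Real.cos θ^2 + 1) = 0 := by
  apply odd_neg; intro θ
  simp only [Real.sin_sub, Real.cos_sub, Real.sin_two_pi, Real.cos_two_pi]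
  ring

lemma Zc2s1 (r : ℝ) :
    ∫ θ in (0:ℝ)..(2*π), Real.cos θ^2 * Real.sin θ / (r^2 * Real.cos θ^2 + 1) = 0 := by
  apply odd_neg; intro θ
  simp only [Real.sin_sub, Real.cos_sub, Real.sin_two_pi, Real.cos_two_pi]
  ring

lemma Zs3 (r : ℝ) : ∫ θ in (0:ℝ)..(2*π), Real.sin θ^3 / (r^2 * Real.cos θ^2 + 1) = 0 := by
  apply odd_neg; intro θ
  simp only [Real.sin_sub, Real.cos_sub, Real.sin_two_pi, Real.cos_two_pi]
  ring

lemma Zc3s1 (r : ℝ) :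
    ∫ θ in (0:ℝ)..(2*π), Real.cos θ^3 * Real.sin θ / (r^2 * Real.cos θ^2 + 1) = 0 := by
  apply odd_neg; intro θ
  simp only [Real.sin_sub, Real.cos_sub, Real.sin_two_pi, Real.cos_two_pi]
  ring

lemma Zc1s3 (r : ℝ) :
    ∫ θ in (0:ℝ)..(2*π), Real.cos θ * Real.sin θ^3 / (r^2 * Real.cos θ^2 + 1) = 0 := by
  apply odd_neg; intro θ
  simp only [Real.sin_sub, Real.cos_sub, Real.sin_two_pi, Real.cos_two_pi]
  ring

lemma Zc1 (r : ℝ) : ∫ θ in (0:ℝ)..(2*π), Real.cos θ / (r^2 * Real.cos θ^2 + 1) = 0 := by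
  apply odd_shift
  · intro θ
    simp only [Real.sin_add, Real.cos_add, Real.sin_pi, Real.cos_pi]
    ring
  · exact cont_div r (by continuity)

lemma Zc3 (r : ℝ) : ∫ θ in (0:ℝ)..(2*π), Real.cos θ^3 / (r^2 * Real.cos θ^2 + 1) = 0 := by
  apply odd_shift
  · intro θ
    simp only [Real.sin_add, Real.cos_add, Real.sin_pi, Real.cos_pi]
    ring
  · exact cont_div r (by continuity)

lemma Zc1s2 (r : ℝ) :
    ∫ θ in (0:ℝ)..(2*π), Real.cos θ * Real.sin θ^2 / (r^2 * Real.cos θ^2 + 1) = 0 := by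
  apply odd_shift
  · intro θ
    simp only [Real.sin_add, Real.cos_add, Real.sin_pi, Real.cos_pi]
    ring
  · exact cont_div r (by continuity)

lemma V20 (r : ℝ) (hr : 0 < r) :
    ∫ θ in (0:ℝ)..(2*π), Real.cos θ^2 / (r^2 * Real.cos θ^2 + 1)
      = 2*π*(1/r^2) + π*0 + (-(1/r^2)) * (2*π / Real.sqrt (r^2+1)) := by
  rw [← even_val r]
  refine intervalIntegral.integral_congr fun θ _ => ?_
  have hd := (den_pos r θ).ne'
  field_simp
  ring

lemma V02 (r : ℝ) (hr : 0 < r) :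
    ∫ θ in (0:ℝ)..(2*π), Real.sin θ^2 / (r^2 * Real.cos θ^2 + 1)
      = 2*π*(-(1/r^2)) + π*0 + (1+1/r^2) * (2*π / Real.sqrt (r^2+1)) := by
  rw [← even_val r]
  refine intervalIntegral.integral_congr fun θ _ => ?_
  have hd := (den_pos r θ).ne'
  rw [Real.sin_sq]
  field_simp
  ring

lemma V40 (r : ℝ) (hr : 0 < r) :
    ∫ θ in (0:ℝ)..(2*π), Real.cos θ^4 / (r^2 * Real.cos θ^2 + 1)
      = 2*π*(-(1/r^4)) + π*(1/r^2) + (1/r^4) * (2*π / Real.sqrt (r^2+1)) := by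
  rw [← even_val r]
  refine intervalIntegral.integral_congr fun θ _ => ?_
  have hd := (den_pos r θ).ne'
  field_simp
  ring

lemma V22 (r : ℝ) (hr : 0 < r) :
    ∫ θ in (0:ℝ)..(2*π), Real.cos θ^2 * Real.sin θ^2 / (r^2 * Real.cos θ^2 + 1)
      = 2*π*(1/r^2+1/r^4) + π*(-(1/r^2)) + (-(1/r^2)-1/r^4) * (2*π / Real.sqrt (r^2+1)) := by
  rw [← even_val r]
  refine intervalIntegral.integral_congr fun θ _ => ?_
  have hd := (den_pos r θ).ne'
  rw [Real.sin_sq]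
  field_simp
  ring

lemma V04 (r : ℝ) (hr : 0 < r) :
    ∫ θ in (0:ℝ)..(2*π), Real.sin θ^4 / (r^2 * Real.cos θ^2 + 1)
      = 2*π*(-(2/r^2)-1/r^4) + π*(1/r^2) + (1+2/r^2+1/r^4) * (2*π / Real.sqrt (r^2+1)) := by
  rw [← even_val r]
  refine intervalIntegral.integral_congr fun θ _ => ?_
  have hd := (den_pos r θ).ne'
  rw [show Real.sin θ^4 = (Real.sin θ^2)^2 by ring, Real.sin_sq]
  field_simp
  ring

set_option maxHeartbeats 1000000 in
lemma f_formula (a b : ℕ → ℕ → ℝ) (f : ℝ → ℝ)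
    (hf : ∀ r : ℝ, f r =
      ∑ i ∈ Finset.range 4, ∑ j ∈ Finset.range (4 - i),
        ∫ θ in (0:ℝ)..(2 * Real.pi),
          (a i j * r ^ (i + j) * Real.cos θ ^ (i + 1) * Real.sin θ ^ j
            + b i j * r ^ (i + j) * Real.cos θ ^ i * Real.sin θ ^ (j + 1))
            / (r ^ 2 * Real.cos θ ^ 2 + 1))
    (r : ℝ) (hr : 0 < r) :
    f r = π * (Real.sqrt (r^2+1) - 1) *
      (2*(b 0 3) * Real.sqrt (r^2+1)^3
        + (a 1 2 + b 2 1 + a 3 0 - b 0 3) * Real.sqrt (r^2+1)^2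
        + (2*(b 0 1) - (a 1 2 + b 2 1) + a 3 0 - b 0 3) * Real.sqrt (r^2+1)
        + 2*(a 1 0 - a 3 0)) / (r * Real.sqrt (r^2+1)) := by
  have h := hf r
  simp only [Finset.sum_range_succ, Finset.sum_range_zero] at h
  norm_num at h
  have e00 : (∫ θ in (0:ℝ)..(2*π),
      (a 0 0 * Real.cos θ + b 0 0 * Real.sin θ) / (r ^ 2 * Real.cos θ ^ 2 + 1))
      = a 0 0 * (∫ θ in (0:ℝ)..(2*π), Real.cos θ / (r^2 * Real.cos θ^2 + 1))
      + b 0 0 * (∫ θ in (0:ℝ)..(2*π), Real.sin θ / (r^2 * Real.cos θ^2 + 1)) := by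
    rw [← intervalIntegral.integral_const_mul, ← intervalIntegral.integral_const_mul,
      ← intervalIntegral.integral_add (iic r _ (by fun_prop)) (iic r _ (by fun_prop))]
    exact intervalIntegral.integral_congr fun θ _ => by ring
  have e01 : (∫ θ in (0:ℝ)..(2*π),
      (a 0 1 * r * Real.cos θ * Real.sin θ + b 0 1 * r * Real.sin θ ^ 2)
        / (r ^ 2 * Real.cos θ ^ 2 + 1))
      = (a 0 1 * r) * (∫ θ in (0:ℝ)..(2*π), Real.cos θ * Real.sin θ / (r^2 * Real.cos θ^2 + 1))
      + (b 0 1 * r) * (∫ θ in (0:ℝ)..(2*π), Real.sin θ^2 / (r^2 * Real.cos θ^2 + 1)) := by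
    rw [← intervalIntegral.integral_const_mul, ← intervalIntegral.integral_const_mul,
      ← intervalIntegral.integral_add (iic r _ (by fun_prop)) (iic r _ (by fun_prop))]
    exact intervalIntegral.integral_congr fun θ _ => by ring
  have e02 : (∫ θ in (0:ℝ)..(2*π),
      (a 0 2 * r ^ 2 * Real.cos θ * Real.sin θ ^ 2 + b 0 2 * r ^ 2 * Real.sin θ ^ 3)
        / (r ^ 2 * Real.cos θ ^ 2 + 1))
      = (a 0 2 * r^2) * (∫ θ in (0:ℝ)..(2*π), Real.cos θ * Real.sin θ^2 / (r^2 * Real.cos θ^2 + 1))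
      + (b 0 2 * r^2) * (∫ θ in (0:ℝ)..(2*π), Real.sin θ^3 / (r^2 * Real.cos θ^2 + 1)) := by
    rw [← intervalIntegral.integral_const_mul, ← intervalIntegral.integral_const_mul,
      ← intervalIntegral.integral_add (iic r _ (by fun_prop)) (iic r _ (by fun_prop))]
    exact intervalIntegral.integral_congr fun θ _ => by ring
  have e03 : (∫ θ in (0:ℝ)..(2*π),
      (a 0 3 * r ^ 3 * Real.cos θ * Real.sin θ ^ 3 + b 0 3 * r ^ 3 * Real.sin θ ^ 4)
        / (r ^ 2 * Real.cos θ ^ 2 + 1))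
      = (a 0 3 * r^3) * (∫ θ in (0:ℝ)..(2*π), Real.cos θ * Real.sin θ^3 / (r^2 * Real.cos θ^2 + 1))
      + (b 0 3 * r^3) * (∫ θ in (0:ℝ)..(2*π), Real.sin θ^4 / (r^2 * Real.cos θ^2 + 1)) := by
    rw [← intervalIntegral.integral_const_mul, ← intervalIntegral.integral_const_mul,
      ← intervalIntegral.integral_add (iic r _ (by fun_prop)) (iic r _ (by fun_prop))]
    exact intervalIntegral.integral_congr fun θ _ => by ring
  have e10 : (∫ θ in (0:ℝ)..(2*π),
      (a 1 0 * r * Real.cos θ ^ 2 + b 1 0 * r * Real.cos θ * Real.sin θ)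
        / (r ^ 2 * Real.cos θ ^ 2 + 1))
      = (a 1 0 * r) * (∫ θ in (0:ℝ)..(2*π), Real.cos θ^2 / (r^2 * Real.cos θ^2 + 1))
      + (b 1 0 * r) * (∫ θ in (0:ℝ)..(2*π), Real.cos θ * Real.sin θ / (r^2 * Real.cos θ^2 + 1)) := by
    rw [← intervalIntegral.integral_const_mul, ← intervalIntegral.integral_const_mul,
      ← intervalIntegral.integral_add (iic r _ (by fun_prop)) (iic r _ (by fun_prop))]
    exact intervalIntegral.integral_congr fun θ _ => by ring
  have e11 : (∫ θ in (0:ℝ)..(2*π),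
      (a 1 1 * r ^ 2 * Real.cos θ ^ 2 * Real.sin θ + b 1 1 * r ^ 2 * Real.cos θ * Real.sin θ ^ 2)
        / (r ^ 2 * Real.cos θ ^ 2 + 1))
      = (a 1 1 * r^2) * (∫ θ in (0:ℝ)..(2*π), Real.cos θ^2 * Real.sin θ / (r^2 * Real.cos θ^2 + 1))
      + (b 1 1 * r^2) * (∫ θ in (0:ℝ)..(2*π), Real.cos θ * Real.sin θ^2 / (r^2 * Real.cos θ^2 + 1)) := by
    rw [← intervalIntegral.integral_const_mul, ← intervalIntegral.integral_const_mul,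
      ← intervalIntegral.integral_add (iic r _ (by fun_prop)) (iic r _ (by fun_prop))]
    exact intervalIntegral.integral_congr fun θ _ => by ring
  have e12 : (∫ θ in (0:ℝ)..(2*π),
      (a 1 2 * r ^ 3 * Real.cos θ ^ 2 * Real.sin θ ^ 2 + b 1 2 * r ^ 3 * Real.cos θ * Real.sin θ ^ 3)
        / (r ^ 2 * Real.cos θ ^ 2 + 1))
      = (a 1 2 * r^3) * (∫ θ in (0:ℝ)..(2*π), Real.cos θ^2 * Real.sin θ^2 / (r^2 * Real.cos θ^2 + 1))
      + (b 1 2 * r^3) * (∫ θ in (0:ℝ)..(2*π), Real.cos θ * Real.sin θ^3 / (r^2 * Real.cos θ^2 + 1)) := by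
    rw [← intervalIntegral.integral_const_mul, ← intervalIntegral.integral_const_mul,
      ← intervalIntegral.integral_add (iic r _ (by fun_prop)) (iic r _ (by fun_prop))]
    exact intervalIntegral.integral_congr fun θ _ => by ring
  have e20 : (∫ θ in (0:ℝ)..(2*π),
      (a 2 0 * r ^ 2 * Real.cos θ ^ 3 + b 2 0 * r ^ 2 * Real.cos θ ^ 2 * Real.sin θ)
        / (r ^ 2 * Real.cos θ ^ 2 + 1))
      = (a 2 0 * r^2) * (∫ θ in (0:ℝ)..(2*π), Real.cos θ^3 / (r^2 * Real.cos θ^2 + 1))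
      + (b 2 0 * r^2) * (∫ θ in (0:ℝ)..(2*π), Real.cos θ^2 * Real.sin θ / (r^2 * Real.cos θ^2 + 1)) := by
    rw [← intervalIntegral.integral_const_mul, ← intervalIntegral.integral_const_mul,
      ← intervalIntegral.integral_add (iic r _ (by fun_prop)) (iic r _ (by fun_prop))]
    exact intervalIntegral.integral_congr fun θ _ => by ring
  have e21 : (∫ θ in (0:ℝ)..(2*π),
      (a 2 1 * r ^ 3 * Real.cos θ ^ 3 * Real.sin θ + b 2 1 * r ^ 3 * Real.cos θ ^ 2 * Real.sin θ ^ 2)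
        / (r ^ 2 * Real.cos θ ^ 2 + 1))
      = (a 2 1 * r^3) * (∫ θ in (0:ℝ)..(2*π), Real.cos θ^3 * Real.sin θ / (r^2 * Real.cos θ^2 + 1))
      + (b 2 1 * r^3) * (∫ θ in (0:ℝ)..(2*π), Real.cos θ^2 * Real.sin θ^2 / (r^2 * Real.cos θ^2 + 1)) := by
    rw [← intervalIntegral.integral_const_mul, ← intervalIntegral.integral_const_mul,
      ← intervalIntegral.integral_add (iic r _ (by fun_prop)) (iic r _ (by fun_prop))]
    exact intervalIntegral.integral_congr fun θ _ => by ring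
  have e30 : (∫ θ in (0:ℝ)..(2*π),
      (a 3 0 * r ^ 3 * Real.cos θ ^ 4 + b 3 0 * r ^ 3 * Real.cos θ ^ 3 * Real.sin θ)
        / (r ^ 2 * Real.cos θ ^ 2 + 1))
      = (a 3 0 * r^3) * (∫ θ in (0:ℝ)..(2*π), Real.cos θ^4 / (r^2 * Real.cos θ^2 + 1))
      + (b 3 0 * r^3) * (∫ θ in (0:ℝ)..(2*π), Real.cos θ^3 * Real.sin θ / (r^2 * Real.cos θ^2 + 1)) := by
    rw [← intervalIntegral.integral_const_mul, ← intervalIntegral.integral_const_mul,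
      ← intervalIntegral.integral_add (iic r _ (by fun_prop)) (iic r _ (by fun_prop))]
    exact intervalIntegral.integral_congr fun θ _ => by ring
  rw [e00, e01, e02, e03, e10, e11, e12, e20, e21, e30, Zc1 r, Zs1 r, Zc1s1 r, Zc1s2 r,
    Zs3 r, Zc1s3 r, Zc2s1 r, Zc3 r, Zc3s1 r, V02 r hr, V04 r hr, V20 r hr, V22 r hr,
    V40 r hr] at h
  rw [h]
  set u := Real.sqrt (r^2+1) with hu_def
  have hupos : 0 < u := Real.sqrt_pos.2 (by positivity)
  have hu2 : u^2 = r^2 + 1 := Real.sq_sqrt (by positivity)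
  have hr0 : r ≠ 0 := hr.ne'
  field_simp
  linear_combination (-(π*(2*(b 0 1) + (u-2)*(a 1 2 + b 2 1) + u*(a 3 0)
    + (b 0 3)*(-3*u + 2*r^2 + 2*u^2 + 2)))) * hu2

end AvgSmooth

/-- In the smooth case (equal coefficients on both sides of the
switching line), if the first-order averaged function is not identically zero
on `(0, ∞)`, then it has at most 3 zeros in `(0, ∞)`. -/
theorem averaged_function_smooth_at_most_three_zeros
    (a b : ℕ → ℕ → ℝ) (f : ℝ → ℝ)
    (hf : ∀ r : ℝ, f r =
      ∑ i ∈ Finset.range 4, ∑ j ∈ Finset.range (4 - i),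
        ∫ θ in (0:ℝ)..(2 * Real.pi),
          (a i j * r ^ (i + j) * Real.cos θ ^ (i + 1) * Real.sin θ ^ j
            + b i j * r ^ (i + j) * Real.cos θ ^ i * Real.sin θ ^ (j + 1))
            / (r ^ 2 * Real.cos θ ^ 2 + 1))
    (hne : ¬ ∀ r ∈ Set.Ioi (0:ℝ), f r = 0) :
    ∃ S : Finset ℝ, S.card ≤ 3 ∧ ∀ r ∈ Set.Ioi (0:ℝ), f r = 0 → r ∈ S := by
  classical
  by_cases hz : (2*(b 0 3) = 0 ∧ (a 1 2 + b 2 1 + a 3 0 - b 0 3) = 0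
      ∧ (2*(b 0 1) - (a 1 2 + b 2 1) + a 3 0 - b 0 3) = 0 ∧ 2*(a 1 0 - a 3 0) = 0)
  · exfalso
    apply hne
    intro r hr
    rw [AvgSmooth.f_formula a b f hf r hr, hz.1, hz.2.1, hz.2.2.1, hz.2.2.2]
    simp
  · set P : Cubic ℝ := ⟨2*(b 0 3), a 1 2 + b 2 1 + a 3 0 - b 0 3,
      2*(b 0 1) - (a 1 2 + b 2 1) + a 3 0 - b 0 3, 2*(a 1 0 - a 3 0)⟩ with hP
    have hP0 : P.toPoly ≠ 0 := by
      intro h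
      rw [Cubic.toPoly_eq_zero_iff] at h
      exact hz ⟨congrArg Cubic.a h, congrArg Cubic.b h, congrArg Cubic.c h, congrArg Cubic.d h⟩
    refine ⟨(P.toPoly.roots.toFinset).image (fun v => Real.sqrt (v^2 - 1)), ?_, ?_⟩
    · calc ((P.toPoly.roots.toFinset).image (fun v => Real.sqrt (v^2 - 1))).card
          ≤ P.toPoly.roots.toFinset.card := Finset.card_image_le
        _ ≤ 3 := by simpa [Cubic.roots] using Cubic.card_roots_le (P := P)
    · intro r hr hfr
      have hrpos : (0:ℝ) < r := hr
      have hform := AvgSmooth.f_formula a b f hf r hrpos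
      rw [hfr] at hform
      set u := Real.sqrt (r^2+1) with hu_def
      have hupos : 0 < u := Real.sqrt_pos.2 (by positivity)
      have hu2 : u^2 = r^2 + 1 := Real.sq_sqrt (by positivity)
      have hu1 : 1 < u := by nlinarith
      set X : ℝ := 2*(b 0 3) * u^3 + (a 1 2 + b 2 1 + a 3 0 - b 0 3) * u^2
        + (2*(b 0 1) - (a 1 2 + b 2 1) + a 3 0 - b 0 3) * u + 2*(a 1 0 - a 3 0) with hX
      have hX0 : X = 0 := by
        by_contra hc
        have hne1 : π * (u - 1) * X / (r * u) ≠ 0 := by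
          apply div_ne_zero
          · exact mul_ne_zero (mul_ne_zero Real.pi_ne_zero (by linarith)) hc
          · exact (mul_pos hrpos hupos).ne'
        exact hne1 hform.symm
      have hroot : P.toPoly.eval u = 0 := by
        rw [Cubic.toPoly]
        simp only [Polynomial.eval_add, Polynomial.eval_mul, Polynomial.eval_pow,
          Polynomial.eval_C, Polynomial.eval_X]
        linear_combination hX0 - hX
      have hmem : u ∈ P.toPoly.roots := (Polynomial.mem_roots hP0).2 hroot
      refine Finset.mem_image.2 ⟨u, Multiset.mem_toFinset.2 hmem, ?_⟩
      have h1 : u^2 - 1 = r^2 := by rw [hu2]; ring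
      rw [h1, Real.sqrt_sq hrpos.le]
end

section
/- For all real r, I_{0,0}(r) = π / √(1 + r²). -/
open Real Filter intervalIntegral Topology

lemma aux_cont (r : ℝ) : Continuous fun θ : ℝ => 1 / (r ^ 2 * Real.cos θ ^ 2 + 1) := by
  apply Continuous.div continuous_const (by continuity)
  intro θ
  positivity

lemma aux_half (r : ℝ) :
    (∫ θ in (0:ℝ)..(Real.pi/2), 1 / (r ^ 2 * Real.cos θ ^ 2 + 1))
      = Real.pi / (2 * Real.sqrt (1 + r ^ 2)) := by
  set s : ℝ := Real.sqrt (1 + r ^ 2) with hs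
  have hs0 : 0 < s := Real.sqrt_pos.2 (by positivity)
  have hs2 : s ^ 2 = 1 + r ^ 2 := Real.sq_sqrt (by positivity)
  set f : ℝ → ℝ := fun θ => 1 / (r ^ 2 * Real.cos θ ^ 2 + 1) with hf
  have hint : ∀ a b : ℝ, IntervalIntegrable f MeasureTheory.volume a b :=
    fun a b => (aux_cont r).intervalIntegrable a b
  have hF : Continuous fun b => ∫ θ in (0:ℝ)..b, f θ :=
    intervalIntegral.continuous_primitive hint 0
  -- FTC on [0, b] for b < π/2
  have key : ∀ b ∈ Set.Ico (0:ℝ) (Real.pi/2),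
      (∫ θ in (0:ℝ)..b, f θ) = (1/s) * Real.arctan (Real.tan b / s) := by
    intro b hb
    have : (∫ θ in (0:ℝ)..b, f θ)
        = (1/s) * Real.arctan (Real.tan b / s) - (1/s) * Real.arctan (Real.tan 0 / s) := by
      apply intervalIntegral.integral_eq_sub_of_hasDerivAt
      · intro θ hθ
        rw [Set.uIcc_of_le hb.1] at hθ
        have hcos : 0 < Real.cos θ := Real.cos_pos_of_mem_Ioo
          ⟨lt_of_lt_of_le (by linarith [Real.pi_pos]) hθ.1, lt_of_le_of_lt hθ.2 hb.2⟩
        have htan : HasDerivAt Real.tan (1 / Real.cos θ ^ 2) θ :=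
          Real.hasDerivAt_tan hcos.ne'
        have h1 : HasDerivAt (fun x => Real.tan x / s)
            (1 / Real.cos θ ^ 2 / s) θ := htan.div_const s
        have h2 := (Real.hasDerivAt_arctan (Real.tan θ / s)).comp θ h1
        have h3 := h2.const_mul (1/s)
        convert h3 using 1
        · rfl
        · rfl
        have hc2 : Real.cos θ ^ 2 ≠ 0 := by positivity
        have htan_sq : Real.tan θ ^ 2 = Real.sin θ ^ 2 / Real.cos θ ^ 2 := by
          rw [Real.tan_eq_sin_div_cos]; ring
        have hpyth : Real.sin θ ^ 2 = 1 - Real.cos θ ^ 2 := by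
          have := Real.sin_sq_add_cos_sq θ; linarith
        have e1 : 1 + (Real.tan θ / s) ^ 2
            = (r ^ 2 * Real.cos θ ^ 2 + 1) / (s ^ 2 * Real.cos θ ^ 2) := by
          rw [div_pow, htan_sq, hpyth]
          field_simp
          linear_combination (Real.cos θ ^ 2) * hs2
        rw [e1]
        have hd : (r ^ 2 * Real.cos θ ^ 2 + 1) ≠ 0 := by positivity
        have hd' : (1 + r ^ 2 * Real.cos θ ^ 2) ≠ 0 := by positivity
        rw [hf]
        field_simp
      · exact hint 0 b
    simpa [Real.tan_zero] using this
  -- limits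
  have hmem : Set.Ioo (0:ℝ) (Real.pi/2) ∈ 𝓝[<] (Real.pi/2) := by
    apply Ioo_mem_nhdsLT_of_mem
    exact ⟨by linarith [Real.pi_pos], le_refl _⟩
  have t1 : Tendsto (fun b => ∫ θ in (0:ℝ)..b, f θ) (𝓝[<] (Real.pi/2))
      (𝓝 (∫ θ in (0:ℝ)..(Real.pi/2), f θ)) :=
    (hF.tendsto _).mono_left nhdsWithin_le_nhds
  have t2 : Tendsto (fun b => (1/s) * Real.arctan (Real.tan b / s)) (𝓝[<] (Real.pi/2))
      (𝓝 ((1/s) * (Real.pi/2))) := by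
    apply Tendsto.const_mul
    have htt : Tendsto (fun b => Real.tan b / s) (𝓝[<] (Real.pi/2)) atTop :=
      Real.tendsto_tan_pi_div_two.atTop_div_const hs0
    exact (Real.tendsto_arctan_atTop.mono_right nhdsWithin_le_nhds).comp htt
  have t1' : Tendsto (fun b => ∫ θ in (0:ℝ)..b, f θ) (𝓝[<] (Real.pi/2))
      (𝓝 ((1/s) * (Real.pi/2))) := by
    apply t2.congr'
    filter_upwards [hmem] with b hb
    exact (key b ⟨hb.1.le, hb.2⟩).symm
  have := tendsto_nhds_unique t1 t1'
  rw [this]; ring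

/-- `I_{0,0}(r) = π / √(1 + r²)` for all real `r`. -/
theorem I_zero_zero (r : ℝ) :
    (∫ θ in (0:ℝ)..Real.pi,
        Real.cos θ ^ 0 * Real.sin θ ^ 0 / (r ^ 2 * Real.cos θ ^ 2 + 1))
      = Real.pi / Real.sqrt (1 + r ^ 2) := by
  simp only [pow_zero, one_mul]
  set f : ℝ → ℝ := fun θ => 1 / (r ^ 2 * Real.cos θ ^ 2 + 1) with hf
  have hint : ∀ a b : ℝ, IntervalIntegrable f MeasureTheory.volume a b :=
    fun a b => (aux_cont r).intervalIntegrable a b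
  have hsplit : (∫ θ in (0:ℝ)..Real.pi, f θ)
      = (∫ θ in (0:ℝ)..(Real.pi/2), f θ) + ∫ θ in (Real.pi/2)..Real.pi, f θ :=
    (intervalIntegral.integral_add_adjacent_intervals (hint _ _) (hint _ _)).symm
  have hsym : (∫ θ in (Real.pi/2)..Real.pi, f θ) = ∫ θ in (0:ℝ)..(Real.pi/2), f θ := by
    have := intervalIntegral.integral_comp_sub_left (a := (0:ℝ)) (b := Real.pi/2) f Real.pi
    rw [show Real.pi - Real.pi/2 = Real.pi/2 by ring, sub_zero] at this
    rw [← this]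
    apply intervalIntegral.integral_congr
    intro θ _
    simp [hf, Real.cos_pi_sub, neg_sq]
  rw [hsplit, hsym, aux_half r]
  have h0 : Real.sqrt (1 + r ^ 2) ≠ 0 := by positivity
  field_simp
  ring
end

section
/- For all real r > 0, I_{2,1}(r) = (2 / r³)(r − arctan r). -/
/-- `I_{2,1}(r) = (2 / r³)(r − arctan r)` for all real `r > 0`. -/
theorem I_two_one (r : ℝ) (hr : 0 < r) :
    (∫ θ in (0:ℝ)..Real.pi,
        Real.cos θ ^ 2 * Real.sin θ ^ 1 / (r ^ 2 * Real.cos θ ^ 2 + 1))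
      = 2 / r ^ 3 * (r - Real.arctan r) := by
  have hpos : ∀ u : ℝ, 0 < r ^ 2 * u ^ 2 + 1 := fun u => by positivity
  set f : ℝ → ℝ := fun u => u ^ 2 / (r ^ 2 * u ^ 2 + 1) with hf
  have hcont : Continuous f := by
    apply Continuous.div (by continuity) (by continuity)
    intro u; exact (hpos u).ne'
  have key := intervalIntegral.integral_comp_smul_deriv (a := 0) (b := Real.pi)
      (f := Real.cos) (f' := fun θ => -Real.sin θ) (g := f)
      (fun x _ => Real.hasDerivAt_cos x) Real.continuous_sin.neg.continuousOn hcont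
  simp only [Real.cos_zero, Real.cos_pi] at key
  have h1 : (∫ θ in (0:ℝ)..Real.pi,
        Real.cos θ ^ 2 * Real.sin θ ^ 1 / (r ^ 2 * Real.cos θ ^ 2 + 1))
      = ∫ u in (-1:ℝ)..1, f u := by
    have heq : (∫ θ in (0:ℝ)..Real.pi,
          Real.cos θ ^ 2 * Real.sin θ ^ 1 / (r ^ 2 * Real.cos θ ^ 2 + 1))
        = -∫ x in (0:ℝ)..Real.pi, -Real.sin x • (f ∘ Real.cos) x := by
      rw [← intervalIntegral.integral_neg]
      congr 1
      funext θ
      simp only [hf, Function.comp, smul_eq_mul, neg_neg]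
      ring
    rw [heq, key]
    exact (intervalIntegral.integral_symm 1 (-1)).symm
  have h2 : (∫ u in (-1:ℝ)..1, f u)
      = 2 / r ^ 3 * (r - Real.arctan r) := by
    have hF : ∀ u : ℝ, HasDerivAt (fun u => u / r ^ 2 - Real.arctan (r * u) / r ^ 3)
        (f u) u := by
      intro u
      have h := ((Real.hasDerivAt_arctan (r * u)).comp u
        ((hasDerivAt_id u).const_mul r)).div_const (r ^ 3)
      have h' := (hasDerivAt_id u).div_const (r ^ 2)
      have := h'.sub h
      refine this.congr_deriv ?_
      simp only [hf, Function.comp, id, mul_one]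
      have h1 : (1 : ℝ) + (r * u) ^ 2 = r ^ 2 * u ^ 2 + 1 := by ring
      rw [h1]
      field_simp
      ring
    rw [intervalIntegral.integral_eq_sub_of_hasDerivAt (fun u _ => hF u)
      (hcont.intervalIntegrable _ _)]
    rw [mul_one, mul_neg_one, Real.arctan_neg]
    field_simp
    ring
  rw [h1, h2]
end

section
/- For every vector of real coefficients (α₁, α₂, α₃, α₄, α₅, α₆, α₇) ≠ (0,0,0,0,0,0,0), the function r ↦ α₁ f₁(r) + α₂ f₂(r) + α₃ f₃(r) + α₄ f₄(r) + α₅ f₅(r) + α₆ f₆(r) + α₇ f₇(r) has at most 6 zeros in the open interval (0, ∞). -/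
open Real Set

section CombinationSevenAux

lemma hasDerivAt_st (x : ℝ) :
    HasDerivAt (fun y : ℝ => Real.sqrt (1 + y ^ 2)) (x / Real.sqrt (1 + x ^ 2)) x := by
  have h1 : HasDerivAt (fun y : ℝ => 1 + y ^ 2) (2*x) x := by
    simpa using (hasDerivAt_pow 2 x).const_add 1
  have h0 : (0:ℝ) < 1 + x ^ 2 := by positivity
  have h2 := (Real.hasDerivAt_sqrt h0.ne').comp x h1
  exact h2.congr_deriv (by
    rw [eq_div_iff (Real.sqrt_pos.2 h0).ne']
    field_simp)

noncomputable def G3 (c7 c3 c1 c5 c6 c4 : ℝ) (x : ℝ) : ℝ :=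
  ((-c1-c5) + (-2*c1-3*c5+3*c6)*x^2 + (-c1+c6)*x^4) * Real.sqrt (1 + x ^ 2) + ((-3*c7-4*c3+8*c4)*x^3 + (-c3+8*c4)*x^5 + (3*c4)*x^7)

noncomputable def G4 (c3 c1 c5 c6 c4 : ℝ) (x : ℝ) : ℝ :=
  ((-3*c1-3*c5) + (-4*c1-5*c5+3*c6)*x^2 + (c1-c6)*x^4 + (2*c1-2*c6)*x^6) * Real.sqrt (1 + x ^ 2) + ((2*c3-16*c4)*x^5 + (2*c3-28*c4)*x^7 + (-12*c4)*x^9)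

noncomputable def G5 (c1 c5 c6 c4 : ℝ) (x : ℝ) : ℝ :=
  ((15*c1+15*c5) + (30*c1+33*c5-9*c6)*x^2 + (15*c1+20*c5-11*c6)*x^4) * Real.sqrt (1 + x ^ 2) + ((-24*c4)*x^7 + (-48*c4)*x^9 + (-24*c4)*x^11)

noncomputable def G6 (c5 c6 c4 : ℝ) (x : ℝ) : ℝ :=
  ((-84*c4)*x^5 + (-156*c4)*x^7 + (-72*c4)*x^9) * Real.sqrt (1 + x ^ 2) + ((3*c5-9*c6) + (7*c5-13*c6)*x^2)

noncomputable def G7 (c6 c4 : ℝ) (x : ℝ) : ℝ :=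
  ((-105*c4)*x^3 + (-441*c4)*x^5 + (-684*c4)*x^7 + (-336*c4)*x^9) * Real.sqrt (1 + x ^ 2) + ((4*c6))

noncomputable def G8 (c4 : ℝ) (x : ℝ) : ℝ :=
  ((c4)) * Real.sqrt (1 + x ^ 2) + ((0:ℝ))

lemma deriv_G3 (c7 c3 c1 c5 c6 c4 : ℝ) {x : ℝ} (hx : 0 < x) :
    HasDerivAt (fun y => G3 c7 c3 c1 c5 c6 c4 y / ((-3)*y^3)) (G4 c3 c1 c5 c6 c4 x / (3*x^4*(1+x^2))) x := by
  have h0 : (0:ℝ) < 1 + x ^ 2 := by positivity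
  have ht0 : 0 < Real.sqrt (1 + x ^ 2) := Real.sqrt_pos.2 h0
  have ht2 : Real.sqrt (1 + x ^ 2) ^ 2 = 1 + x ^ 2 := Real.sq_sqrt h0.le
  have hts := hasDerivAt_st x
  have hP : HasDerivAt (fun x : ℝ => (-c1-c5) + (-2*c1-3*c5+3*c6)*x^2 + (-c1+c6)*x^4) (2*(-2*c1-3*c5+3*c6)*x^1 + 4*(-c1+c6)*x^3) x := by
    have h := (((hasDerivAt_const x ((-c1-c5))).add ((hasDerivAt_pow 2 x).const_mul ((-2*c1-3*c5+3*c6)))).add ((hasDerivAt_pow 4 x).const_mul ((-c1+c6))))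
    exact h.congr_deriv (by push_cast; ring)
  have hQ : HasDerivAt (fun x : ℝ => (-3*c7-4*c3+8*c4)*x^3 + (-c3+8*c4)*x^5 + (3*c4)*x^7) (3*(-3*c7-4*c3+8*c4)*x^2 + 5*(-c3+8*c4)*x^4 + 7*(3*c4)*x^6) x := by
    have h := ((((hasDerivAt_pow 3 x).const_mul ((-3*c7-4*c3+8*c4))).add ((hasDerivAt_pow 5 x).const_mul ((-c3+8*c4)))).add ((hasDerivAt_pow 7 x).const_mul ((3*c4))))
    exact h.congr_deriv (by push_cast; ring)
  have hD : HasDerivAt (fun y : ℝ => ((-3)*y^3)) (3*((-3):ℝ)*x^2) x := by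
    have h := ((hasDerivAt_pow 3 x).const_mul (((-3):ℝ)))
    exact h.congr_deriv (by push_cast; ring)
  have hN := (hP.mul hts).add hQ
  have hDne : (((-3)*x^3)) ≠ 0 := mul_ne_zero (by norm_num) (pow_ne_zero 3 hx.ne')
  have h := (hN.div hD hDne)
  refine h.congr_deriv ?_
  simp only [G4, Pi.mul_apply, Pi.add_apply]
  have h3 : Real.sqrt (1 + x ^ 2) ^ 3 = (1+x^2) * Real.sqrt (1 + x ^ 2) := by
    rw [pow_succ, ht2]
  have h4 : Real.sqrt (1 + x ^ 2) ^ 4 = (1+x^2)^2 := by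
    rw [show (4:ℕ) = 2*2 by norm_num, pow_mul, ht2]
  have h5 : Real.sqrt (1 + x ^ 2) ^ 5 = (1+x^2)^2 * Real.sqrt (1 + x ^ 2) := by
    rw [pow_succ, h4]
  have h6 : Real.sqrt (1 + x ^ 2) ^ 6 = (1+x^2)^3 := by
    rw [show (6:ℕ) = 2*3 by norm_num, pow_mul, ht2]
  field_simp
  ring_nf
  simp only [ht2, h3, h4, h5, h6]
  ring

lemma deriv_G4 (c3 c1 c5 c6 c4 : ℝ) {x : ℝ} (hx : 0 < x) :
    HasDerivAt (fun y => G4 c3 c1 c5 c6 c4 y / (2*y^5 + 2*y^7)) (G5 c1 c5 c6 c4 x / (2*x^6*(1+x^2)^2)) x := by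
  have h0 : (0:ℝ) < 1 + x ^ 2 := by positivity
  have ht0 : 0 < Real.sqrt (1 + x ^ 2) := Real.sqrt_pos.2 h0
  have ht2 : Real.sqrt (1 + x ^ 2) ^ 2 = 1 + x ^ 2 := Real.sq_sqrt h0.le
  have hts := hasDerivAt_st x
  have hP : HasDerivAt (fun x : ℝ => (-3*c1-3*c5) + (-4*c1-5*c5+3*c6)*x^2 + (c1-c6)*x^4 + (2*c1-2*c6)*x^6) (2*(-4*c1-5*c5+3*c6)*x^1 + 4*(c1-c6)*x^3 + 6*(2*c1-2*c6)*x^5) x := by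
    have h := ((((hasDerivAt_const x ((-3*c1-3*c5))).add ((hasDerivAt_pow 2 x).const_mul ((-4*c1-5*c5+3*c6)))).add ((hasDerivAt_pow 4 x).const_mul ((c1-c6)))).add ((hasDerivAt_pow 6 x).const_mul ((2*c1-2*c6))))
    exact h.congr_deriv (by push_cast; ring)
  have hQ : HasDerivAt (fun x : ℝ => (2*c3-16*c4)*x^5 + (2*c3-28*c4)*x^7 + (-12*c4)*x^9) (5*(2*c3-16*c4)*x^4 + 7*(2*c3-28*c4)*x^6 + 9*(-12*c4)*x^8) x := by
    have h := ((((hasDerivAt_pow 5 x).const_mul ((2*c3-16*c4))).add ((hasDerivAt_pow 7 x).const_mul ((2*c3-28*c4)))).add ((hasDerivAt_pow 9 x).const_mul ((-12*c4))))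
    exact h.congr_deriv (by push_cast; ring)
  have hD : HasDerivAt (fun y : ℝ => (2*y^5 + 2*y^7)) (5*(2:ℝ)*x^4 + 7*(2:ℝ)*x^6) x := by
    have h := (((hasDerivAt_pow 5 x).const_mul ((2:ℝ))).add ((hasDerivAt_pow 7 x).const_mul ((2:ℝ))))
    exact h.congr_deriv (by push_cast; ring)
  have hN := (hP.mul hts).add hQ
  have hDne : ((2*x^5 + 2*x^7)) ≠ 0 := ne_of_gt (by have h5 := pow_pos hx 5; have h7 := pow_pos hx 7; linarith)
  have h := (hN.div hD hDne)
  refine h.congr_deriv ?_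
  simp only [G5, Pi.mul_apply, Pi.add_apply]
  have h3 : Real.sqrt (1 + x ^ 2) ^ 3 = (1+x^2) * Real.sqrt (1 + x ^ 2) := by
    rw [pow_succ, ht2]
  have h4 : Real.sqrt (1 + x ^ 2) ^ 4 = (1+x^2)^2 := by
    rw [show (4:ℕ) = 2*2 by norm_num, pow_mul, ht2]
  have h5 : Real.sqrt (1 + x ^ 2) ^ 5 = (1+x^2)^2 * Real.sqrt (1 + x ^ 2) := by
    rw [pow_succ, h4]
  have h6 : Real.sqrt (1 + x ^ 2) ^ 6 = (1+x^2)^3 := by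
    rw [show (6:ℕ) = 2*3 by norm_num, pow_mul, ht2]
  field_simp
  ring_nf
  simp only [ht2, h3, h4, h5, h6]
  ring

lemma deriv_G5 (c1 c5 c6 c4 : ℝ) {x : ℝ} (hx : 0 < x) :
    HasDerivAt (fun y => G5 c1 c5 c6 c4 y * Real.sqrt (1 + y ^ 2) / (15 + 45*y^2 + 45*y^4 + 15*y^6)) (2*x*G6 c5 c6 c4 x / (15*(1+x^2)^3)) x := by
  have h0 : (0:ℝ) < 1 + x ^ 2 := by positivity
  have ht0 : 0 < Real.sqrt (1 + x ^ 2) := Real.sqrt_pos.2 h0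
  have ht2 : Real.sqrt (1 + x ^ 2) ^ 2 = 1 + x ^ 2 := Real.sq_sqrt h0.le
  have hts := hasDerivAt_st x
  have hP : HasDerivAt (fun x : ℝ => (15*c1+15*c5) + (30*c1+33*c5-9*c6)*x^2 + (15*c1+20*c5-11*c6)*x^4) (2*(30*c1+33*c5-9*c6)*x^1 + 4*(15*c1+20*c5-11*c6)*x^3) x := by
    have h := (((hasDerivAt_const x ((15*c1+15*c5))).add ((hasDerivAt_pow 2 x).const_mul ((30*c1+33*c5-9*c6)))).add ((hasDerivAt_pow 4 x).const_mul ((15*c1+20*c5-11*c6))))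
    exact h.congr_deriv (by push_cast; ring)
  have hQ : HasDerivAt (fun x : ℝ => (-24*c4)*x^7 + (-48*c4)*x^9 + (-24*c4)*x^11) (7*(-24*c4)*x^6 + 9*(-48*c4)*x^8 + 11*(-24*c4)*x^10) x := by
    have h := ((((hasDerivAt_pow 7 x).const_mul ((-24*c4))).add ((hasDerivAt_pow 9 x).const_mul ((-48*c4)))).add ((hasDerivAt_pow 11 x).const_mul ((-24*c4))))
    exact h.congr_deriv (by push_cast; ring)
  have hD : HasDerivAt (fun y : ℝ => (15 + 45*y^2 + 45*y^4 + 15*y^6)) (2*(45:ℝ)*x^1 + 4*(45:ℝ)*x^3 + 6*(15:ℝ)*x^5) x := by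
    have h := ((((hasDerivAt_const x ((15:ℝ))).add ((hasDerivAt_pow 2 x).const_mul ((45:ℝ)))).add ((hasDerivAt_pow 4 x).const_mul ((45:ℝ)))).add ((hasDerivAt_pow 6 x).const_mul ((15:ℝ))))
    exact h.congr_deriv (by push_cast; ring)
  have hN := (hP.mul hts).add hQ
  have hDne : ((15 + 45*x^2 + 45*x^4 + 15*x^6)) ≠ 0 := by positivity
  have h := ((hN.mul hts).div hD hDne)
  refine h.congr_deriv ?_
  simp only [G6, Pi.mul_apply, Pi.add_apply]
  have h3 : Real.sqrt (1 + x ^ 2) ^ 3 = (1+x^2) * Real.sqrt (1 + x ^ 2) := by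
    rw [pow_succ, ht2]
  have h4 : Real.sqrt (1 + x ^ 2) ^ 4 = (1+x^2)^2 := by
    rw [show (4:ℕ) = 2*2 by norm_num, pow_mul, ht2]
  have h5 : Real.sqrt (1 + x ^ 2) ^ 5 = (1+x^2)^2 * Real.sqrt (1 + x ^ 2) := by
    rw [pow_succ, h4]
  have h6 : Real.sqrt (1 + x ^ 2) ^ 6 = (1+x^2)^3 := by
    rw [show (6:ℕ) = 2*3 by norm_num, pow_mul, ht2]
  field_simp
  ring_nf
  simp only [ht2, h3, h4, h5, h6]
  ring

lemma deriv_G6 (c5 c6 c4 : ℝ) {x : ℝ} (hx : 0 < x) :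
    HasDerivAt (fun y => G6 c5 c6 c4 y / (3 + 7*y^2)) (12*x*G7 c6 c4 x / (3+7*x^2)^2) x := by
  have h0 : (0:ℝ) < 1 + x ^ 2 := by positivity
  have ht0 : 0 < Real.sqrt (1 + x ^ 2) := Real.sqrt_pos.2 h0
  have ht2 : Real.sqrt (1 + x ^ 2) ^ 2 = 1 + x ^ 2 := Real.sq_sqrt h0.le
  have hts := hasDerivAt_st x
  have hP : HasDerivAt (fun x : ℝ => (-84*c4)*x^5 + (-156*c4)*x^7 + (-72*c4)*x^9) (5*(-84*c4)*x^4 + 7*(-156*c4)*x^6 + 9*(-72*c4)*x^8) x := by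
    have h := ((((hasDerivAt_pow 5 x).const_mul ((-84*c4))).add ((hasDerivAt_pow 7 x).const_mul ((-156*c4)))).add ((hasDerivAt_pow 9 x).const_mul ((-72*c4))))
    exact h.congr_deriv (by push_cast; ring)
  have hQ : HasDerivAt (fun x : ℝ => (3*c5-9*c6) + (7*c5-13*c6)*x^2) (2*(7*c5-13*c6)*x^1) x := by
    have h := ((hasDerivAt_const x ((3*c5-9*c6))).add ((hasDerivAt_pow 2 x).const_mul ((7*c5-13*c6))))
    exact h.congr_deriv (by push_cast; ring)
  have hD : HasDerivAt (fun y : ℝ => (3 + 7*y^2)) (2*(7:ℝ)*x^1) x := by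
    have h := ((hasDerivAt_const x ((3:ℝ))).add ((hasDerivAt_pow 2 x).const_mul ((7:ℝ))))
    exact h.congr_deriv (by push_cast; ring)
  have hN := (hP.mul hts).add hQ
  have hDne : ((3 + 7*x^2)) ≠ 0 := by positivity
  have h := (hN.div hD hDne)
  refine h.congr_deriv ?_
  simp only [G7, Pi.mul_apply, Pi.add_apply]
  have h3 : Real.sqrt (1 + x ^ 2) ^ 3 = (1+x^2) * Real.sqrt (1 + x ^ 2) := by
    rw [pow_succ, ht2]
  have h4 : Real.sqrt (1 + x ^ 2) ^ 4 = (1+x^2)^2 := by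
    rw [show (4:ℕ) = 2*2 by norm_num, pow_mul, ht2]
  have h5 : Real.sqrt (1 + x ^ 2) ^ 5 = (1+x^2)^2 * Real.sqrt (1 + x ^ 2) := by
    rw [pow_succ, h4]
  have h6 : Real.sqrt (1 + x ^ 2) ^ 6 = (1+x^2)^3 := by
    rw [show (6:ℕ) = 2*3 by norm_num, pow_mul, ht2]
  field_simp
  ring_nf
  simp only [ht2, h3, h4, h5, h6]
  ring

lemma deriv_G7 (c6 c4 : ℝ) {x : ℝ} (hx : 0 < x) :
    HasDerivAt (fun y => G7 c6 c4 y / ((4:ℝ))) (-(1260*x^2+10500*x^4+29736*x^6+33984*x^8+13440*x^10)*G8 c4 x/(16*(1+x^2))) x := by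
  have h0 : (0:ℝ) < 1 + x ^ 2 := by positivity
  have ht0 : 0 < Real.sqrt (1 + x ^ 2) := Real.sqrt_pos.2 h0
  have ht2 : Real.sqrt (1 + x ^ 2) ^ 2 = 1 + x ^ 2 := Real.sq_sqrt h0.le
  have hts := hasDerivAt_st x
  have hP : HasDerivAt (fun x : ℝ => (-105*c4)*x^3 + (-441*c4)*x^5 + (-684*c4)*x^7 + (-336*c4)*x^9) (3*(-105*c4)*x^2 + 5*(-441*c4)*x^4 + 7*(-684*c4)*x^6 + 9*(-336*c4)*x^8) x := by
    have h := (((((hasDerivAt_pow 3 x).const_mul ((-105*c4))).add ((hasDerivAt_pow 5 x).const_mul ((-441*c4)))).add ((hasDerivAt_pow 7 x).const_mul ((-684*c4)))).add ((hasDerivAt_pow 9 x).const_mul ((-336*c4))))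
    exact h.congr_deriv (by push_cast; ring)
  have hQ : HasDerivAt (fun x : ℝ => (4*c6)) ((0:ℝ)) x := by
    have h := (hasDerivAt_const x ((4*c6)))
    exact h.congr_deriv (by push_cast; ring)
  have hD : HasDerivAt (fun y : ℝ => ((4:ℝ))) ((0:ℝ)) x := by
    have h := (hasDerivAt_const x ((4:ℝ)))
    exact h.congr_deriv (by push_cast; ring)
  have hN := (hP.mul hts).add hQ
  have hDne : (((4:ℝ))) ≠ 0 := by norm_num
  have h := (hN.div hD hDne)
  refine h.congr_deriv ?_
  simp only [G8, Pi.mul_apply, Pi.add_apply]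
  have h3 : Real.sqrt (1 + x ^ 2) ^ 3 = (1+x^2) * Real.sqrt (1 + x ^ 2) := by
    rw [pow_succ, ht2]
  have h4 : Real.sqrt (1 + x ^ 2) ^ 4 = (1+x^2)^2 := by
    rw [show (4:ℕ) = 2*2 by norm_num, pow_mul, ht2]
  have h5 : Real.sqrt (1 + x ^ 2) ^ 5 = (1+x^2)^2 * Real.sqrt (1 + x ^ 2) := by
    rw [pow_succ, h4]
  have h6 : Real.sqrt (1 + x ^ 2) ^ 6 = (1+x^2)^3 := by
    rw [show (6:ℕ) = 2*3 by norm_num, pow_mul, ht2]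
  field_simp
  ring_nf
  simp only [ht2, h3, h4, h5, h6]
  ring




/-- Core counting lemma: if between any two points of `Z` there is a point of `S'`,
then `Z` fits in a finset of cardinality `≤ S'.card + 1`. -/
lemma between_bound (Z : Set ℝ) (S' : Finset ℝ)
    (h : ∀ a ∈ Z, ∀ b ∈ Z, a < b → ∃ c ∈ S', a < c ∧ c < b) :
    ∃ S : Finset ℝ, S.card ≤ S'.card + 1 ∧ Z ⊆ ↑S := by
  classical
  set T : Finset (WithTop ℝ) := insert ⊤ (S'.image (↑)) with hT
  set f : ℝ → WithTop ℝ := fun z => (S'.filter (fun s => z < s)).min with hf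
  have hmono : ∀ a ∈ Z, ∀ b ∈ Z, a < b → f a < f b := by
    intro a ha b hb hab
    obtain ⟨c, hcS, hac, hcb⟩ := h a ha b hb hab
    have hfa : f a ≤ (c : WithTop ℝ) :=
      Finset.min_le (Finset.mem_filter.2 ⟨hcS, hac⟩)
    have hfb : (c : WithTop ℝ) < f b := by
      rcases Finset.eq_empty_or_nonempty (S'.filter (fun s => b < s)) with he | hne
      · simp [hf, he]
      · obtain ⟨m, hm⟩ := Finset.min_of_nonempty hne
        have hmmem := Finset.mem_of_min hm
        have : b < m := (Finset.mem_filter.1 hmmem).2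
        show (Finset.filter (fun s => b < s) S').min > (c : WithTop ℝ)
        rw [hm]
        exact_mod_cast lt_trans hcb this
    exact lt_of_le_of_lt hfa hfb
  have hinj : Set.InjOn f Z := by
    intro a ha b hb hfe
    by_contra hne
    rcases lt_or_gt_of_ne hne with hlt | hlt
    · exact absurd hfe (hmono a ha b hb hlt).ne
    · exact absurd hfe.symm (hmono b hb a ha hlt).ne
  have hmaps : ∀ a ∈ Z, f a ∈ (↑T : Set (WithTop ℝ)) := by
    intro a _
    show (Finset.filter (fun s => a < s) S').min ∈ (↑T : Set (WithTop ℝ))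
    rw [Finset.mem_coe, hT]
    have h1 := Finset.min_mem_insert_top_image_coe (Finset.filter (fun s => a < s) S')
    exact Finset.mem_of_subset (Finset.insert_subset_insert _
      (Finset.image_subset_image (Finset.filter_subset _ _))) h1
  have hZfin : Z.Finite := by
    have : (↑T : Set (WithTop ℝ)).Finite := T.finite_toSet
    exact Set.Finite.of_finite_image (this.subset (Set.image_subset_iff.2 hmaps)) hinj
  refine ⟨hZfin.toFinset, ?_, by simp⟩
  have h1 : Z.ncard ≤ (↑T : Set (WithTop ℝ)).ncard :=
    Set.ncard_le_ncard_of_injOn f hmaps hinj T.finite_toSet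
  have h2 : (↑T : Set (WithTop ℝ)).ncard = T.card := Set.ncard_coe_finset T
  have h3 : T.card ≤ S'.card + 1 := by
    calc T.card ≤ (S'.image ((↑) : ℝ → WithTop ℝ)).card + 1 := Finset.card_insert_le _ _
    _ ≤ S'.card + 1 := by gcongr; exact Finset.card_image_le
  have h4 : hZfin.toFinset.card = Z.ncard :=
    (Set.ncard_eq_toFinset_card Z hZfin).symm
  omega

/-- Rolle step: zeros of `g` on `(0,∞)` are bounded by zeros of the derivative of `g/w`
plus one. -/
lemma rolleStep (g φ d : ℝ → ℝ) (S' : Finset ℝ)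
    (hphi : ∀ x ∈ Ioi (0:ℝ), g x = 0 → φ x = 0)
    (hd : ∀ x ∈ Ioi (0:ℝ), HasDerivAt φ (d x) x)
    (hS' : ∀ x ∈ Ioi (0:ℝ), d x = 0 → x ∈ S') :
    ∃ S : Finset ℝ, S.card ≤ S'.card + 1 ∧ ∀ x ∈ Ioi (0:ℝ), g x = 0 → x ∈ S := by
  have hbet : ∀ a ∈ {x | x ∈ Ioi (0:ℝ) ∧ g x = 0}, ∀ b ∈ {x | x ∈ Ioi (0:ℝ) ∧ g x = 0},
      a < b → ∃ c ∈ S', a < c ∧ c < b := by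
    rintro a ⟨ha, hga⟩ b ⟨hb, hgb⟩ hab
    have hsub : Icc a b ⊆ Ioi (0:ℝ) := fun x hx => lt_of_lt_of_le ha hx.1
    obtain ⟨c, hc, hdc⟩ := exists_hasDerivAt_eq_zero (f := φ)
      (f' := d) hab
      (fun x hx => ((hd x (hsub hx)).continuousAt).continuousWithinAt)
      (by rw [hphi a ha hga, hphi b hb hgb])
      (fun x hx => hd x (hsub ⟨le_of_lt hx.1, le_of_lt hx.2⟩))
    exact ⟨c, hS' c (hsub ⟨le_of_lt hc.1, le_of_lt hc.2⟩) hdc, hc.1, hc.2⟩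
  obtain ⟨S, hc, hsub⟩ := between_bound _ S' hbet
  exact ⟨S, hc, fun x hx hgx => hsub ⟨hx, hgx⟩⟩

/-- Rolle step with the extra zero at the origin: if additionally `g 0 = 0` and `g` is
continuous on `[0,∞)`, the `+1` can be dropped. -/
lemma rolleStep0 (g d : ℝ → ℝ) (S' : Finset ℝ)
    (hg0 : g 0 = 0) (hgc : ContinuousOn g (Ici (0:ℝ)))
    (hd : ∀ x ∈ Ioi (0:ℝ), HasDerivAt g (d x) x)
    (hS' : ∀ x ∈ Ioi (0:ℝ), d x = 0 → x ∈ S') :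
    ∃ S : Finset ℝ, S.card ≤ S'.card ∧ ∀ x ∈ Ioi (0:ℝ), g x = 0 → x ∈ S := by
  have hbet : ∀ a ∈ {x | x ∈ Ici (0:ℝ) ∧ g x = 0}, ∀ b ∈ {x | x ∈ Ici (0:ℝ) ∧ g x = 0},
      a < b → ∃ c ∈ S', a < c ∧ c < b := by
    rintro a ⟨ha, hga⟩ b ⟨hb, hgb⟩ hab
    obtain ⟨c, hc, hdc⟩ := exists_hasDerivAt_eq_zero (f := g) (f' := d) hab
      (hgc.mono (fun x hx => le_trans ha hx.1))
      (by rw [hga, hgb])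
      (fun x hx => hd x (lt_of_le_of_lt ha hx.1))
    exact ⟨c, hS' c (lt_of_le_of_lt ha hc.1) hdc, hc.1, hc.2⟩
  obtain ⟨S, hc, hsub⟩ := between_bound _ S' hbet
  classical
  refine ⟨S.erase 0, ?_, fun x hx hgx => ?_⟩
  · have h0 : (0:ℝ) ∈ S := hsub ⟨Set.self_mem_Ici, hg0⟩
    have := Finset.card_erase_of_mem h0
    omega
  · exact Finset.mem_erase.2 ⟨ne_of_gt hx, hsub ⟨Set.mem_Ici.2 (le_of_lt hx), hgx⟩⟩

noncomputable def G2 (a1 a2 a3 a4 a5 a6 a7 : ℝ) (x : ℝ) : ℝ :=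
  a1 + 2*a2*x + (a5 + a6*x^2)/(1+x^2) + 2*a6*x*Real.arctan x
    + ((2*a3+a7)*x + (a3+4*a4)*x^3 + 3*a4*x^5)/((1+x^2)*Real.sqrt (1 + x ^ 2))

lemma deriv_F (a1 a2 a3 a4 a5 a6 a7 : ℝ) (x : ℝ) :
    HasDerivAt (fun r => a1 * r + a2 * r ^ 2 + a3 * (r ^ 2 / Real.sqrt (1 + r ^ 2))
        + a4 * (r ^ 4 / Real.sqrt (1 + r ^ 2)) + a5 * Real.arctan r
        + a6 * (r ^ 2 * Real.arctan r)
        + a7 * (1 - 1 / Real.sqrt (1 + r ^ 2))) (G2 a1 a2 a3 a4 a5 a6 a7 x) x := by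
  have h0 : (0:ℝ) < 1 + x ^ 2 := by positivity
  have ht0 : 0 < Real.sqrt (1 + x ^ 2) := Real.sqrt_pos.2 h0
  have ht2 : Real.sqrt (1 + x ^ 2) ^ 2 = 1 + x ^ 2 := Real.sq_sqrt h0.le
  have hts := hasDerivAt_st x
  have harc := Real.hasDerivAt_arctan x
  have k1 := (hasDerivAt_id x).const_mul a1
  have k2 := (hasDerivAt_pow 2 x).const_mul a2
  have k3 := ((hasDerivAt_pow 2 x).div hts ht0.ne').const_mul a3
  have k4 := ((hasDerivAt_pow 4 x).div hts ht0.ne').const_mul a4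
  have k5 := harc.const_mul a5
  have k6 := ((hasDerivAt_pow 2 x).mul harc).const_mul a6
  have k7 := ((hasDerivAt_const x (1:ℝ)).sub
      ((hasDerivAt_const x (1:ℝ)).div hts ht0.ne')).const_mul a7
  have h := (((((k1.add k2).add k3).add k4).add k5).add k6).add k7
  refine h.congr_deriv ?_
  simp only [G2, Pi.mul_apply, Pi.add_apply]
  have hp3 : Real.sqrt (1 + x ^ 2) ^ 3 = (1+x^2) * Real.sqrt (1 + x ^ 2) := by
    rw [pow_succ, ht2]
  have hp4 : Real.sqrt (1 + x ^ 2) ^ 4 = (1+x^2)^2 := by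
    rw [show (4:ℕ) = 2*2 by norm_num, pow_mul, ht2]
  field_simp
  ring_nf
  simp only [ht2, hp3, hp4]
  ring

lemma deriv_G2 (a1 a2 a3 a4 a5 a6 a7 : ℝ) {x : ℝ} (hx : 0 < x) :
    HasDerivAt (fun y => G2 a1 a2 a3 a4 a5 a6 a7 y / y)
      (G3 a7 a3 a1 a5 a6 a4 x / (x^2*(1+x^2)^2*Real.sqrt (1 + x ^ 2))) x := by
  have h0 : (0:ℝ) < 1 + x ^ 2 := by positivity
  have ht0 : 0 < Real.sqrt (1 + x ^ 2) := Real.sqrt_pos.2 h0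
  have ht2 : Real.sqrt (1 + x ^ 2) ^ 2 = 1 + x ^ 2 := Real.sq_sqrt h0.le
  have hts := hasDerivAt_st x
  have harc := Real.hasDerivAt_arctan x
  have hden : HasDerivAt (fun y : ℝ => 1 + y ^ 2) ((2:ℕ) * x ^ 1) x :=
    (hasDerivAt_pow 2 x).const_add 1
  have t1 := hasDerivAt_const x a1
  have t2 := (hasDerivAt_id x).const_mul (2*a2)
  have t3 := ((hasDerivAt_const x a5).add ((hasDerivAt_pow 2 x).const_mul a6)).div
      hden h0.ne'
  have t4 := (((hasDerivAt_id x).const_mul (2*a6)).mul harc)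
  have t5num := (((hasDerivAt_id x).const_mul (2*a3+a7)).add
      ((hasDerivAt_pow 3 x).const_mul (a3+4*a4))).add ((hasDerivAt_pow 5 x).const_mul (3*a4))
  have t5 := t5num.div (hden.mul hts) (by simp only [Pi.mul_apply]; positivity)
  have hG2 := ((((t1.add t2).add t3).add t4).add t5).div (hasDerivAt_id x) hx.ne'
  refine hG2.congr_deriv ?_
  simp only [G3, Pi.mul_apply, Pi.add_apply, Pi.div_apply, id]
  have hp3 : Real.sqrt (1 + x ^ 2) ^ 3 = (1+x^2) * Real.sqrt (1 + x ^ 2) := by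
    rw [pow_succ, ht2]
  have hp4 : Real.sqrt (1 + x ^ 2) ^ 4 = (1+x^2)^2 := by
    rw [show (4:ℕ) = 2*2 by norm_num, pow_mul, ht2]
  have hp5 : Real.sqrt (1 + x ^ 2) ^ 5 = (1+x^2)^2 * Real.sqrt (1 + x ^ 2) := by
    rw [pow_succ, hp4]
  field_simp
  ring_nf
  simp only [ht2, hp3, hp4, hp5]
  ring

lemma L8 (c4 : ℝ) (hc4 : c4 ≠ 0) : ∀ x ∈ Ioi (0:ℝ), G8 c4 x ≠ 0 := by
  intro x _
  have ht0 : 0 < Real.sqrt (1 + x ^ 2) := Real.sqrt_pos.2 (by positivity)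
  have he : G8 c4 x = c4 * Real.sqrt (1 + x ^ 2) := by simp [G8]
  rw [he]
  exact mul_ne_zero hc4 ht0.ne'

lemma L7 (c6 c4 : ℝ) (hc : ¬(c6 = 0 ∧ c4 = 0)) :
    ∃ S : Finset ℝ, S.card ≤ 1 ∧ ∀ x ∈ Ioi (0:ℝ), G7 c6 c4 x = 0 → x ∈ S := by
  by_cases hc4 : c4 = 0
  · have hc6 : c6 ≠ 0 := fun h => hc ⟨h, hc4⟩
    refine ⟨∅, by simp, fun x hx hzero => absurd ?_ hc6⟩
    have he : G7 c6 c4 x = c6 * 4 := by simp only [G7, hc4]; ring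
    rw [he] at hzero
    linarith
  · have h8 := L8 c4 hc4
    obtain ⟨S, hcard, hS⟩ := rolleStep (G7 c6 c4) (fun y => G7 c6 c4 y / ((4:ℝ)))
      (fun x => -(1260*x^2+10500*x^4+29736*x^6+33984*x^8+13440*x^10)*G8 c4 x/(16*(1+x^2))) ∅
      (fun x _ h => by simp [h])
      (fun x hx => deriv_G7 c6 c4 hx)
      (fun x hx hzero => by
        exfalso
        have hx : (0:ℝ) < x := hx
        have hnum : (0:ℝ) < 1260*x^2+10500*x^4+29736*x^6+33984*x^8+13440*x^10 := by
          nlinarith [pow_pos hx 2, pow_pos hx 4, pow_pos hx 6, pow_pos hx 8, pow_pos hx 10]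
        exact (div_ne_zero (mul_ne_zero (neg_ne_zero.2 hnum.ne') (h8 x hx))
          (by positivity)) hzero)
    exact ⟨S, by simpa using hcard, hS⟩

lemma L6 (c5 c6 c4 : ℝ) (hc : ¬(c5 = 0 ∧ c6 = 0 ∧ c4 = 0)) :
    ∃ S : Finset ℝ, S.card ≤ 2 ∧ ∀ x ∈ Ioi (0:ℝ), G6 c5 c6 c4 x = 0 → x ∈ S := by
  by_cases h64 : c6 = 0 ∧ c4 = 0
  · have hc5 : c5 ≠ 0 := fun h => hc ⟨h, h64⟩
    refine ⟨∅, by simp, fun x hx hzero => absurd ?_ hc5⟩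
    have he : G6 c5 c6 c4 x = c5 * (3 + 7*x^2) := by simp only [G6, h64.1, h64.2]; ring
    rw [he] at hzero
    rcases mul_eq_zero.1 hzero with h | h
    · exact h
    · exact absurd h (by positivity)
  · obtain ⟨S7, hS7card, hS7⟩ := L7 c6 c4 h64
    obtain ⟨S, hcard, hS⟩ := rolleStep (G6 c5 c6 c4) (fun y => G6 c5 c6 c4 y / (3 + 7*y^2))
      (fun x => 12*x*G7 c6 c4 x / (3+7*x^2)^2) S7
      (fun x _ h => by simp [h])
      (fun x hx => deriv_G6 c5 c6 c4 hx)
      (fun x hx hzero => by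
        have hx' : (0:ℝ) < x := hx
        have h12 : 12*x ≠ 0 := (by linarith : (0:ℝ) < 12*x).ne'
        have hden : ((3:ℝ)+7*x^2)^2 ≠ 0 := by positivity
        have : G7 c6 c4 x = 0 := by
          rcases mul_eq_zero.1 ((div_eq_zero_iff.1 hzero).resolve_right hden) with h | h
          · exact absurd h h12
          · exact h
        exact hS7 x hx this)
    exact ⟨S, by omega, hS⟩

lemma L5 (c1 c5 c6 c4 : ℝ) (hc : ¬(c1 = 0 ∧ c5 = 0 ∧ c6 = 0 ∧ c4 = 0)) :
    ∃ S : Finset ℝ, S.card ≤ 3 ∧ ∀ x ∈ Ioi (0:ℝ), G5 c1 c5 c6 c4 x = 0 → x ∈ S := by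
  by_cases h564 : c5 = 0 ∧ c6 = 0 ∧ c4 = 0
  · have hc1 : c1 ≠ 0 := fun h => hc ⟨h, h564⟩
    refine ⟨∅, by simp, fun x hx hzero => absurd ?_ hc1⟩
    have ht0 : 0 < Real.sqrt (1 + x ^ 2) := Real.sqrt_pos.2 (by positivity)
    have he : G5 c1 c5 c6 c4 x = c1 * (15*(1+x^2)^2 * Real.sqrt (1 + x ^ 2)) := by
      simp only [G5, h564.1, h564.2.1, h564.2.2]; ring
    rw [he] at hzero
    rcases mul_eq_zero.1 hzero with h | h
    · exact h
    · exact absurd h (by positivity)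
  · obtain ⟨S6, hS6card, hS6⟩ := L6 c5 c6 c4 h564
    obtain ⟨S, hcard, hS⟩ := rolleStep (G5 c1 c5 c6 c4)
      (fun y => G5 c1 c5 c6 c4 y * Real.sqrt (1 + y ^ 2) / (15 + 45*y^2 + 45*y^4 + 15*y^6))
      (fun x => 2*x*G6 c5 c6 c4 x / (15*(1+x^2)^3)) S6
      (fun x _ h => by simp [h])
      (fun x hx => deriv_G5 c1 c5 c6 c4 hx)
      (fun x hx hzero => by
        have hx' : (0:ℝ) < x := hx
        have h2x : 2*x ≠ 0 := (by linarith : (0:ℝ) < 2*x).ne'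
        have hden : (15*((1:ℝ)+x^2)^3) ≠ 0 := by positivity
        have : G6 c5 c6 c4 x = 0 := by
          rcases mul_eq_zero.1 ((div_eq_zero_iff.1 hzero).resolve_right hden) with h | h
          · exact absurd h h2x
          · exact h
        exact hS6 x hx this)
    exact ⟨S, by omega, hS⟩

lemma L4 (c3 c1 c5 c6 c4 : ℝ) (hc : ¬(c3 = 0 ∧ c1 = 0 ∧ c5 = 0 ∧ c6 = 0 ∧ c4 = 0)) :
    ∃ S : Finset ℝ, S.card ≤ 4 ∧ ∀ x ∈ Ioi (0:ℝ), G4 c3 c1 c5 c6 c4 x = 0 → x ∈ S := by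
  by_cases hrest : c1 = 0 ∧ c5 = 0 ∧ c6 = 0 ∧ c4 = 0
  · have hc3 : c3 ≠ 0 := fun h => hc ⟨h, hrest⟩
    refine ⟨∅, by simp, fun x hx hzero => absurd ?_ hc3⟩
    have he : G4 c3 c1 c5 c6 c4 x = c3 * (2*x^5 + 2*x^7) := by
      simp only [G4, hrest.1, hrest.2.1, hrest.2.2.1, hrest.2.2.2]; ring
    rw [he] at hzero
    rcases mul_eq_zero.1 hzero with h | h
    · exact h
    · exact absurd h (by
        have hx : (0:ℝ) < x := hx
        have h5 := pow_pos hx 5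
        have h7 := pow_pos hx 7
        nlinarith)
  · obtain ⟨S5, hS5card, hS5⟩ := L5 c1 c5 c6 c4 hrest
    obtain ⟨S, hcard, hS⟩ := rolleStep (G4 c3 c1 c5 c6 c4)
      (fun y => G4 c3 c1 c5 c6 c4 y / (2*y^5 + 2*y^7))
      (fun x => G5 c1 c5 c6 c4 x / (2*x^6*(1+x^2)^2)) S5
      (fun x _ h => by simp [h])
      (fun x hx => deriv_G4 c3 c1 c5 c6 c4 hx)
      (fun x hx hzero => by
        have hden : (2*x^6*((1:ℝ)+x^2)^2) ≠ 0 := mul_ne_zero (mul_ne_zero two_ne_zero (pow_ne_zero 6 hx.ne')) (by positivity)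
        exact hS5 x hx ((div_eq_zero_iff.1 hzero).resolve_right hden))
    exact ⟨S, by omega, hS⟩

lemma L3 (c7 c3 c1 c5 c6 c4 : ℝ)
    (hc : ¬(c7 = 0 ∧ c3 = 0 ∧ c1 = 0 ∧ c5 = 0 ∧ c6 = 0 ∧ c4 = 0)) :
    ∃ S : Finset ℝ, S.card ≤ 5 ∧ ∀ x ∈ Ioi (0:ℝ), G3 c7 c3 c1 c5 c6 c4 x = 0 → x ∈ S := by
  by_cases hrest : c3 = 0 ∧ c1 = 0 ∧ c5 = 0 ∧ c6 = 0 ∧ c4 = 0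
  · have hc7 : c7 ≠ 0 := fun h => hc ⟨h, hrest⟩
    refine ⟨∅, by simp, fun x hx hzero => absurd ?_ hc7⟩
    have he : G3 c7 c3 c1 c5 c6 c4 x = c7 * (-(3*x^3)) := by
      simp only [G3, hrest.1, hrest.2.1, hrest.2.2.1, hrest.2.2.2.1, hrest.2.2.2.2]; ring
    rw [he] at hzero
    rcases mul_eq_zero.1 hzero with h | h
    · exact h
    · exact absurd h (by
        have hx : (0:ℝ) < x := hx
        have h3 := pow_pos hx 3
        intro hzz
        nlinarith)
  · obtain ⟨S4, hS4card, hS4⟩ := L4 c3 c1 c5 c6 c4 hrest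
    obtain ⟨S, hcard, hS⟩ := rolleStep (G3 c7 c3 c1 c5 c6 c4)
      (fun y => G3 c7 c3 c1 c5 c6 c4 y / ((-3)*y^3))
      (fun x => G4 c3 c1 c5 c6 c4 x / (3*x^4*(1+x^2))) S4
      (fun x _ h => by simp [h])
      (fun x hx => deriv_G3 c7 c3 c1 c5 c6 c4 hx)
      (fun x hx hzero => by
        have hden : (3*x^4*((1:ℝ)+x^2)) ≠ 0 := mul_ne_zero (mul_ne_zero three_ne_zero (pow_ne_zero 4 hx.ne')) (by positivity)
        exact hS4 x hx ((div_eq_zero_iff.1 hzero).resolve_right hden))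
    exact ⟨S, by omega, hS⟩

lemma F_continuous (α₁ α₂ α₃ α₄ α₅ α₆ α₇ : ℝ) :
    Continuous (fun r : ℝ => α₁ * r + α₂ * r ^ 2 + α₃ * (r ^ 2 / Real.sqrt (1 + r ^ 2))
        + α₄ * (r ^ 4 / Real.sqrt (1 + r ^ 2)) + α₅ * Real.arctan r
        + α₆ * (r ^ 2 * Real.arctan r) + α₇ * (1 - 1 / Real.sqrt (1 + r ^ 2))) := by
  have hsq : Continuous fun r : ℝ => Real.sqrt (1 + r ^ 2) :=
    Real.continuous_sqrt.comp (by continuity)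
  have hne : ∀ r : ℝ, Real.sqrt (1 + r ^ 2) ≠ 0 :=
    fun r => (Real.sqrt_pos.2 (by positivity)).ne'
  refine ((((((continuous_const.mul continuous_id).add
    (continuous_const.mul (continuous_pow 2))).add
    (continuous_const.mul ((continuous_pow 2).div hsq hne))).add
    (continuous_const.mul ((continuous_pow 4).div hsq hne))).add
    (continuous_const.mul Real.continuous_arctan)).add
    (continuous_const.mul ((continuous_pow 2).mul Real.continuous_arctan))).add
    (continuous_const.mul (continuous_const.sub (continuous_const.div hsq hne)))


end CombinationSevenAux

/-- Any nontrivial real linear combination of the seven generating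
functions `r`, `r²`, `r²/√(1+r²)`, `r⁴/√(1+r²)`, `arctan r`, `r² arctan r`,
`1 − 1/√(1+r²)` has at most 6 zeros in `(0, ∞)`. -/
theorem combination_seven_at_most_six_zeros
    (α₁ α₂ α₃ α₄ α₅ α₆ α₇ : ℝ)
    (hα : (α₁, α₂, α₃, α₄, α₅, α₆, α₇) ≠ (0, 0, 0, 0, 0, 0, 0)) :
    ∃ S : Finset ℝ, S.card ≤ 6 ∧ ∀ r ∈ Set.Ioi (0:ℝ),
      α₁ * r + α₂ * r ^ 2 + α₃ * (r ^ 2 / Real.sqrt (1 + r ^ 2))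
        + α₄ * (r ^ 4 / Real.sqrt (1 + r ^ 2)) + α₅ * Real.arctan r
        + α₆ * (r ^ 2 * Real.arctan r)
        + α₇ * (1 - 1 / Real.sqrt (1 + r ^ 2)) = 0 → r ∈ S := by
  by_cases hall : α₁ = 0 ∧ α₃ = 0 ∧ α₄ = 0 ∧ α₅ = 0 ∧ α₆ = 0 ∧ α₇ = 0
  · obtain ⟨h1, h3, h4, h5, h6, h7⟩ := hall
    have h2 : α₂ ≠ 0 := by
      intro h2; exact hα (by rw [h1, h2, h3, h4, h5, h6, h7])
    refine ⟨∅, by simp, fun r hr hzero => ?_⟩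
    exfalso
    have hr' : (0:ℝ) < r := hr
    rw [h1, h3, h4, h5, h6, h7] at hzero
    have hz2 : α₂ * r ^ 2 = 0 := by linear_combination hzero
    exact h2 ((mul_eq_zero.1 hz2).resolve_right (pow_ne_zero 2 hr'.ne'))
  · have hc3 : ¬(α₇ = 0 ∧ α₃ = 0 ∧ α₁ = 0 ∧ α₅ = 0 ∧ α₆ = 0 ∧ α₄ = 0) := by tauto
    obtain ⟨S3, hS3card, hS3⟩ := L3 α₇ α₃ α₁ α₅ α₆ α₄ hc3
    obtain ⟨S2, hS2card, hS2⟩ := rolleStep (G2 α₁ α₂ α₃ α₄ α₅ α₆ α₇)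
      (fun y => G2 α₁ α₂ α₃ α₄ α₅ α₆ α₇ y / y)
      (fun x => G3 α₇ α₃ α₁ α₅ α₆ α₄ x / (x^2*(1+x^2)^2*Real.sqrt (1 + x ^ 2))) S3
      (fun x _ h => by simp [h])
      (fun x hx => deriv_G2 α₁ α₂ α₃ α₄ α₅ α₆ α₇ hx)
      (fun x hx hzero => by
        have hx' : (0:ℝ) < x := hx
        have ht0 : 0 < Real.sqrt (1 + x ^ 2) := Real.sqrt_pos.2 (by positivity)
        have hden : (x^2*((1:ℝ)+x^2)^2*Real.sqrt (1 + x ^ 2)) ≠ 0 :=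
          mul_ne_zero (mul_ne_zero (pow_ne_zero 2 hx'.ne') (by positivity)) ht0.ne'
        exact hS3 x hx ((div_eq_zero_iff.1 hzero).resolve_right hden))
    obtain ⟨S, hScard, hS⟩ := rolleStep0
      (fun r => α₁ * r + α₂ * r ^ 2 + α₃ * (r ^ 2 / Real.sqrt (1 + r ^ 2))
        + α₄ * (r ^ 4 / Real.sqrt (1 + r ^ 2)) + α₅ * Real.arctan r
        + α₆ * (r ^ 2 * Real.arctan r) + α₇ * (1 - 1 / Real.sqrt (1 + r ^ 2)))
      (fun x => G2 α₁ α₂ α₃ α₄ α₅ α₆ α₇ x) S2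
      (by norm_num)
      ((F_continuous α₁ α₂ α₃ α₄ α₅ α₆ α₇).continuousOn)
      (fun x _ => deriv_F α₁ α₂ α₃ α₄ α₅ α₆ α₇ x)
      (fun x hx hzero => hS2 x hx hzero)
    exact ⟨S, by omega, fun r hr hz => hS r hr hz⟩
end

section
/- For every vector of real coefficients (β₂, β₃, β₄, β₇) ≠ (0,0,0,0), the function r ↦ β₂ f₂(r) + β₃ f₃(r) + β₄ f₄(r) + β₇ f₇(r) has at most 3 zeros in the open interval (0, ∞). -/
open Polynomial

/-- Any nontrivial real linear combination of the functions
`r²`, `r²/√(1+r²)`, `r⁴/√(1+r²)`, `1 − 1/√(1+r²)` has at most 3 zeros in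
`(0, ∞)`. -/
theorem combination_four_at_most_three_zeros
    (β₂ β₃ β₄ β₇ : ℝ) (hβ : (β₂, β₃, β₄, β₇) ≠ (0, 0, 0, 0)) :
    ∃ S : Finset ℝ, S.card ≤ 3 ∧ ∀ r ∈ Set.Ioi (0:ℝ),
      β₂ * r ^ 2 + β₃ * (r ^ 2 / Real.sqrt (1 + r ^ 2))
        + β₄ * (r ^ 4 / Real.sqrt (1 + r ^ 2))
        + β₇ * (1 - 1 / Real.sqrt (1 + r ^ 2)) = 0 → r ∈ S := by
  set P : ℝ[X] := C β₄ * X ^ 3 + C (β₂ + β₄) * X ^ 2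
      + C (β₂ + β₃ - β₄) * X + C (β₃ - β₄ + β₇) with hP
  have hP0 : P ≠ 0 := by
    intro h
    apply hβ
    have c3 : P.coeff 3 = β₄ := by simp [hP, coeff_add, coeff_sub, coeff_C_mul, coeff_X_pow, coeff_C, add_mul, sub_mul]
    have c2 : P.coeff 2 = β₂ + β₄ := by simp [hP, coeff_add, coeff_sub, coeff_C_mul, coeff_X_pow, coeff_C, add_mul, sub_mul]
    have c1 : P.coeff 1 = β₂ + β₃ - β₄ := by simp [hP, coeff_add, coeff_sub, coeff_C_mul, coeff_X_pow, coeff_C, add_mul, sub_mul]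
    have c0 : P.coeff 0 = β₃ - β₄ + β₇ := by simp [hP, coeff_add, coeff_sub, coeff_C_mul, coeff_X_pow, coeff_C, add_mul, sub_mul]
    rw [h] at c3 c2 c1 c0
    simp at c3 c2 c1 c0
    have h2 : β₂ = 0 := by linarith
    have h3 : β₃ = 0 := by linarith
    have h7 : β₇ = 0 := by linarith
    simp [h2, h3, ← c3, h7]
  have hdeg : P.natDegree ≤ 3 := by
    rw [hP]; compute_degree
  refine ⟨P.roots.toFinset.image (fun s => Real.sqrt (s ^ 2 - 1)), ?_, ?_⟩
  · calc (P.roots.toFinset.image _).card ≤ P.roots.toFinset.card := Finset.card_image_le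
      _ ≤ Multiset.card P.roots := P.roots.toFinset_card_le
      _ ≤ P.natDegree := P.card_roots'
      _ ≤ 3 := hdeg
  · intro r hr heq
    have hr0 : (0:ℝ) < r := hr
    set s := Real.sqrt (1 + r ^ 2) with hs
    have hs2 : s ^ 2 = 1 + r ^ 2 := Real.sq_sqrt (by positivity)
    have hs1 : 1 < s := by nlinarith [Real.sqrt_nonneg (1 + r ^ 2)]
    have hsne : s ≠ 0 := by linarith
    have hr2 : r ^ 2 = s ^ 2 - 1 := by linarith
    have hr4 : r ^ 4 = (s ^ 2 - 1) ^ 2 := by rw [show r ^ 4 = (r ^ 2) ^ 2 by ring, hr2]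
    have hPs : P.eval s = 0 := by
      have key : (s - 1) * P.eval s = s * (β₂ * r ^ 2 + β₃ * (r ^ 2 / s)
          + β₄ * (r ^ 4 / s) + β₇ * (1 - 1 / s)) := by
        rw [hr2, hr4]
        simp only [hP, eval_add, eval_mul, eval_pow, eval_C, eval_X]
        field_simp
        ring
      rw [heq, mul_zero] at key
      have : s - 1 ≠ 0 := by linarith
      exact (mul_eq_zero.1 key).resolve_left this
    refine Finset.mem_image.2 ⟨s, ?_, ?_⟩
    · exact Multiset.mem_toFinset.2 ((mem_roots hP0).2 hPs)
    · rw [hs2, show (1:ℝ) + r ^ 2 - 1 = r ^ 2 by ring, Real.sqrt_sq hr0.le]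
end

section
/- For all real r > 0, the Wronskians of the first three and first four generating functions satisfy W[f₁, f₂, f₃](r) = −3r⁴/(r²+1)^{5/2} and W[f₁, f₂, f₃, f₄](r) = −6r⁷(4r²+5)/(r²+1)⁵. -/
lemma hasDerivAt_mul_rpow (p : ℝ → ℝ) (p' c x : ℝ) (hp : HasDerivAt p p' x) :
    HasDerivAt (fun y => p y * (1 + y ^ 2) ^ c)
      ((p' * (1 + x ^ 2) + 2 * c * x * p x) * (1 + x ^ 2) ^ (c - 1)) x := by
  have h0 : (0:ℝ) < 1 + x ^ 2 := by positivity
  have h1 : HasDerivAt (fun y : ℝ => 1 + y ^ 2) (2 * x) x := by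
    simpa using ((hasDerivAt_pow 2 x).const_add 1)
  have h2 : HasDerivAt (fun y : ℝ => (1 + y ^ 2) ^ c)
      (c * (1 + x ^ 2) ^ (c - 1) * (2 * x)) x := by
    have := (Real.hasDerivAt_rpow_const (x := 1 + x ^ 2) (p := c) (Or.inl h0.ne')).comp x h1
    exact this.congr_deriv (by ring)
  have h3 : (1 + x ^ 2) ^ c = (1 + x ^ 2) ^ (c - 1) * (1 + x ^ 2) := by
    rw [← Real.rpow_add_one h0.ne' (c - 1)]; ring_nf
  have := hp.mul h2
  rw [h3] at this
  exact this.congr_deriv (by ring)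

lemma deriv_step (p p' q : ℝ → ℝ) (c c' : ℝ)
    (hp : ∀ x, HasDerivAt p (p' x) x)
    (hc : c' = c - 1)
    (hq : ∀ x, p' x * (1 + x ^ 2) + 2 * c * x * p x = q x) :
    deriv (fun y => p y * (1 + y ^ 2) ^ c) = fun x => q x * (1 + x ^ 2) ^ c' := by
  funext x
  rw [(hasDerivAt_mul_rpow p (p' x) c x (hp x)).deriv, hq, hc]

lemma rpow_to_inv_sqrt (r c : ℝ) (k : ℕ) (hc : c = -(2 * (k:ℝ) + 1) / 2) :
    (1 + r ^ 2) ^ c = 1 / ((1 + r ^ 2) ^ k * Real.sqrt (1 + r ^ 2)) := by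
  have h0 : (0:ℝ) < 1 + r ^ 2 := by positivity
  rw [Real.sqrt_eq_rpow, ← Real.rpow_natCast (1 + r ^ 2) k, ← Real.rpow_add h0,
    one_div, ← Real.rpow_neg h0.le]
  congr 1
  rw [hc]; push_cast; ring

lemma rpow_to_sqrt_div (r c : ℝ) (k : ℕ) (hc : c = -(2 * (k:ℝ) + 1) / 2) :
    (1 + r ^ 2) ^ c = Real.sqrt (1 + r ^ 2) / (1 + r ^ 2) ^ (k + 1) := by
  have h0 : (0:ℝ) < 1 + r ^ 2 := by positivity
  rw [Real.sqrt_eq_rpow, ← Real.rpow_natCast (1 + r ^ 2) (k + 1), ← Real.rpow_sub h0]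
  congr 1
  rw [hc]; push_cast; ring

lemma e30 : (fun x : ℝ => x ^ 2 / Real.sqrt (1 + x ^ 2))
    = fun x : ℝ => x ^ 2 * (1 + x ^ 2) ^ (-1/2 : ℝ) := by
  funext x
  rw [rpow_to_inv_sqrt x (-1/2) 0 (by norm_num)]
  simp [div_eq_mul_inv]

lemma e31 : deriv (fun x : ℝ => x ^ 2 * (1 + x ^ 2) ^ (-1/2 : ℝ))
    = fun x : ℝ => (x ^ 3 + 2 * x) * (1 + x ^ 2) ^ (-3/2 : ℝ) := by
  apply deriv_step _ (fun x => 2 * x) _ _ _ (fun x => by simpa using hasDerivAt_pow 2 x)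
    (by norm_num) (fun x => by ring)

lemma e32 : deriv (fun x : ℝ => (x ^ 3 + 2 * x) * (1 + x ^ 2) ^ (-3/2 : ℝ))
    = fun x : ℝ => (2 - x ^ 2) * (1 + x ^ 2) ^ (-5/2 : ℝ) := by
  apply deriv_step _ (fun x => 3 * x ^ 2 + 2) _ _ _
    (fun x => by simpa [Pi.add_def] using (hasDerivAt_pow 3 x).add ((hasDerivAt_id x).const_mul 2))
    (by norm_num) (fun x => by ring)

lemma e33 : deriv (fun x : ℝ => (2 - x ^ 2) * (1 + x ^ 2) ^ (-5/2 : ℝ))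
    = fun x : ℝ => (3 * x ^ 3 - 12 * x) * (1 + x ^ 2) ^ (-7/2 : ℝ) := by
  apply deriv_step _ (fun x => -(2 * x)) _ _ _
    (fun x => by simpa using (hasDerivAt_pow 2 x).const_sub 2)
    (by norm_num) (fun x => by ring)

lemma e40 : (fun x : ℝ => x ^ 4 / Real.sqrt (1 + x ^ 2))
    = fun x : ℝ => x ^ 4 * (1 + x ^ 2) ^ (-1/2 : ℝ) := by
  funext x
  rw [rpow_to_inv_sqrt x (-1/2) 0 (by norm_num)]
  simp [div_eq_mul_inv]

lemma e41 : deriv (fun x : ℝ => x ^ 4 * (1 + x ^ 2) ^ (-1/2 : ℝ))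
    = fun x : ℝ => (3 * x ^ 5 + 4 * x ^ 3) * (1 + x ^ 2) ^ (-3/2 : ℝ) := by
  apply deriv_step _ (fun x => 4 * x ^ 3) _ _ _ (fun x => by simpa using hasDerivAt_pow 4 x)
    (by norm_num) (fun x => by ring)

lemma e42 : deriv (fun x : ℝ => (3 * x ^ 5 + 4 * x ^ 3) * (1 + x ^ 2) ^ (-3/2 : ℝ))
    = fun x : ℝ => (6 * x ^ 6 + 15 * x ^ 4 + 12 * x ^ 2) * (1 + x ^ 2) ^ (-5/2 : ℝ) := by
  apply deriv_step _ (fun x => 15 * x ^ 4 + 12 * x ^ 2) _ _ _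
    (fun x => by
      have h := ((hasDerivAt_pow 5 x).const_mul 3).add ((hasDerivAt_pow 3 x).const_mul 4)
      have e : (15:ℝ) * x ^ 4 + 12 * x ^ 2 = 3 * (↑5 * x ^ (5-1)) + 4 * (↑3 * x ^ (3-1)) := by
        norm_num; ring
      show HasDerivAt _ ((15:ℝ) * x ^ 4 + 12 * x ^ 2) x
      rw [e]; exact h)
    (by norm_num) (fun x => by ring)

lemma e43 : deriv (fun x : ℝ => (6 * x ^ 6 + 15 * x ^ 4 + 12 * x ^ 2) * (1 + x ^ 2) ^ (-5/2 : ℝ))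
    = fun x : ℝ => (6 * x ^ 7 + 21 * x ^ 5 + 24 * x ^ 3 + 24 * x) * (1 + x ^ 2) ^ (-7/2 : ℝ) := by
  apply deriv_step _ (fun x => 36 * x ^ 5 + 60 * x ^ 3 + 24 * x) _ _ _
    (fun x => by
      have h := (((hasDerivAt_pow 6 x).const_mul 6).add ((hasDerivAt_pow 4 x).const_mul 15)).add
        ((hasDerivAt_pow 2 x).const_mul 12)
      have e : (36:ℝ) * x ^ 5 + 60 * x ^ 3 + 24 * x
          = 6 * (↑6 * x ^ (6-1)) + 15 * (↑4 * x ^ (4-1)) + 12 * (↑2 * x ^ (2-1)) := by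
        norm_num; ring
      show HasDerivAt _ ((36:ℝ) * x ^ 5 + 60 * x ^ 3 + 24 * x) x
      rw [e]; exact h)
    (by norm_num) (fun x => by ring)

lemma iter2 (f : ℝ → ℝ) : iteratedDeriv 2 f = deriv (deriv f) := by
  show iteratedDeriv (1 + 1) f = _
  rw [iteratedDeriv_succ, iteratedDeriv_one]

lemma iter3 (f : ℝ → ℝ) : iteratedDeriv 3 f = deriv (deriv (deriv f)) := by
  show iteratedDeriv (2 + 1) f = _
  rw [iteratedDeriv_succ, iter2]



/-- The first four generating functions `f₁, f₂, f₃, f₄`. -/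
noncomputable def genFun4 : Fin 4 → ℝ → ℝ :=
  ![fun r => r,
    fun r => r ^ 2,
    fun r => r ^ 2 / Real.sqrt (1 + r ^ 2),
    fun r => r ^ 4 / Real.sqrt (1 + r ^ 2)]

/-- For all `r > 0`,
`W[f₁, f₂, f₃](r) = −3r⁴/(r²+1)^{5/2}` and
`W[f₁, f₂, f₃, f₄](r) = −6r⁷(4r²+5)/(r²+1)⁵`. -/
theorem wronskian_three_and_four (r : ℝ) (hr : 0 < r) :
    (Matrix.of fun i j : Fin 3 =>
        iteratedDeriv (i : ℕ) (genFun4 (Fin.castLE (by norm_num) j)) r).det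
      = -(3 * r ^ 4) / Real.sqrt (r ^ 2 + 1) ^ 5 ∧
    (Matrix.of fun i j : Fin 4 =>
        iteratedDeriv (i : ℕ) (genFun4 j) r).det
      = -(6 * r ^ 7 * (4 * r ^ 2 + 5)) / (r ^ 2 + 1) ^ 5 := by
  have hu : (0:ℝ) < 1 + r ^ 2 := by positivity
  have hS : (0:ℝ) < Real.sqrt (1 + r ^ 2) := Real.sqrt_pos.mpr hu
  have hS2 : Real.sqrt (1 + r ^ 2) ^ 2 = 1 + r ^ 2 := Real.sq_sqrt hu.le
  have g0 : genFun4 0 = fun x => x := rfl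
  have g1 : genFun4 1 = fun x : ℝ => x ^ 2 := rfl
  have g2 : genFun4 2 = fun x : ℝ => x ^ 2 / Real.sqrt (1 + x ^ 2) := rfl
  have g3 : genFun4 3 = fun x : ℝ => x ^ 4 / Real.sqrt (1 + x ^ 2) := rfl
  -- column 1
  have d_id : deriv (fun x : ℝ => x) = fun _ => (1:ℝ) := by funext x; simp
  have d_one : deriv (fun _ : ℝ => (1:ℝ)) = fun _ => (0:ℝ) := by funext x; simp
  have d_zero : deriv (fun _ : ℝ => (0:ℝ)) = fun _ => (0:ℝ) := by funext x; simp
  have b0 : deriv (genFun4 0) r = 1 := by rw [g0, d_id]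
  have i12 : iteratedDeriv 2 (genFun4 0) r = 0 := by rw [iter2, g0, d_id, d_one]
  have i13 : iteratedDeriv 3 (genFun4 0) r = 0 := by rw [iter3, g0, d_id, d_one, d_zero]
  -- column 2
  have d_sq : deriv (fun x : ℝ => x ^ 2) = fun x => 2 * x := by funext x; simp [mul_comm]
  have d_2x : deriv (fun x : ℝ => 2 * x) = fun _ => (2:ℝ) := by
    funext x; simpa using ((hasDerivAt_id' (𝕜 := ℝ) x).const_mul (2:ℝ)).deriv
  have d_c2 : deriv (fun _ : ℝ => (2:ℝ)) = fun _ => (0:ℝ) := by funext x; simp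
  have b1 : deriv (genFun4 1) r = 2 * r := by rw [g1, d_sq]
  have i22 : iteratedDeriv 2 (genFun4 1) r = 2 := by rw [iter2, g1, d_sq, d_2x]
  have i23 : iteratedDeriv 3 (genFun4 1) r = 0 := by rw [iter3, g1, d_sq, d_2x, d_c2]
  -- column 3 : inverse-sqrt form
  have a2 : genFun4 2 r = r ^ 2 * (1 / ((1 + r ^ 2) ^ 0 * Real.sqrt (1 + r ^ 2))) := by
    rw [g2]
    show r ^ 2 / Real.sqrt (1 + r ^ 2) = _
    rw [pow_zero, one_mul, div_eq_mul_inv, one_div]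
  have b2 : deriv (genFun4 2) r
      = (r ^ 3 + 2 * r) * (1 / ((1 + r ^ 2) ^ 1 * Real.sqrt (1 + r ^ 2))) := by
    rw [g2, e30, e31]
    beta_reduce
    rw [rpow_to_inv_sqrt r (-3/2) 1 (by norm_num)]
  have i32 : iteratedDeriv 2 (genFun4 2) r
      = (2 - r ^ 2) * (1 / ((1 + r ^ 2) ^ 2 * Real.sqrt (1 + r ^ 2))) := by
    rw [iter2, g2, e30, e31, e32]
    beta_reduce
    rw [rpow_to_inv_sqrt r (-5/2) 2 (by norm_num)]
  have i33 : iteratedDeriv 3 (genFun4 2) r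
      = (3 * r ^ 3 - 12 * r) * (1 / ((1 + r ^ 2) ^ 3 * Real.sqrt (1 + r ^ 2))) := by
    rw [iter3, g2, e30, e31, e32, e33]
    beta_reduce
    rw [rpow_to_inv_sqrt r (-7/2) 3 (by norm_num)]
  -- column 4 : sqrt-numerator form
  have a3 : genFun4 3 r = r ^ 4 * (Real.sqrt (1 + r ^ 2) / (1 + r ^ 2) ^ 1) := by
    rw [g3]
    show r ^ 4 / Real.sqrt (1 + r ^ 2) = _
    rw [pow_one]
    field_simp
    linear_combination (-1) * hS2
  have b3 : deriv (genFun4 3) r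
      = (3 * r ^ 5 + 4 * r ^ 3) * (Real.sqrt (1 + r ^ 2) / (1 + r ^ 2) ^ 2) := by
    rw [g3, e40, e41]
    beta_reduce
    rw [rpow_to_sqrt_div r (-3/2) 1 (by norm_num)]
  have i42 : iteratedDeriv 2 (genFun4 3) r
      = (6 * r ^ 6 + 15 * r ^ 4 + 12 * r ^ 2) * (Real.sqrt (1 + r ^ 2) / (1 + r ^ 2) ^ 3) := by
    rw [iter2, g3, e40, e41, e42]
    beta_reduce
    rw [rpow_to_sqrt_div r (-5/2) 2 (by norm_num)]
  have i43 : iteratedDeriv 3 (genFun4 3) r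
      = (6 * r ^ 7 + 21 * r ^ 5 + 24 * r ^ 3 + 24 * r)
        * (Real.sqrt (1 + r ^ 2) / (1 + r ^ 2) ^ 4) := by
    rw [iter3, g3, e40, e41, e42, e43]
    beta_reduce
    rw [rpow_to_sqrt_div r (-7/2) 3 (by norm_num)]
  have a0 : genFun4 0 r = r := rfl
  have a1 : genFun4 1 r = r ^ 2 := rfl
  constructor
  · rw [Matrix.det_fin_three]
    simp only [Matrix.of_apply, Fin.val_zero, Fin.val_one, Fin.val_two, Fin.isValue]
    norm_num [Fin.castLE]
    simp only [show (⟨2, by norm_num⟩ : Fin 4) = 2 from rfl]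
    rw [a0, a1, a2, b0, b1, b2, i12, i22, i32,
      show r ^ 2 + 1 = 1 + r ^ 2 by ring,
      show Real.sqrt (1 + r ^ 2) ^ 5 = (1 + r ^ 2) ^ 2 * Real.sqrt (1 + r ^ 2) by
        rw [show (5:ℕ) = 2 * 2 + 1 from rfl, pow_succ, pow_mul, hS2]]
    field_simp
    ring
  · simp only [Matrix.det_succ_row_zero, Fin.sum_univ_succ, Matrix.of_apply,
      Matrix.submatrix_apply, Fin.succAbove_zero, Matrix.det_unique]
    norm_num [Fin.succ_zero_eq_one, Fin.succAbove, Fin.lt_def, Fin.castSucc, Fin.castAdd,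
      Fin.castLE, Fin.succ]
    simp only [show (⟨2, by norm_num⟩ : Fin 4) = 2 from rfl,
      show (⟨3, by norm_num⟩ : Fin 4) = 3 from rfl]
    rw [a0, a1, a2, a3, b0, b1, b2, b3, i12, i22, i32, i42, i13, i23, i33, i43,
      show r ^ 2 + 1 = 1 + r ^ 2 by ring]
    field_simp
    ring
end

section
/- For all real r > 0, g₁(r) > 0, where g₁(r) = 12r¹⁰ arctan r − 27r⁸ arctan r + 12r⁹ − 258r⁶ arctan r + 169r⁷ − 507r⁴ arctan r + 411r⁵ − 408r² arctan r + 373r³ − 120 arctan r + 120r. -/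
lemma arctan_lb (x : ℝ) (hx : 0 ≤ x) : 3 * x / (3 + x ^ 2) ≤ Real.arctan x := by
  set F : ℝ → ℝ := fun y => Real.arctan y - 3 * y / (3 + y ^ 2) with hF
  have hden : ∀ y : ℝ, (3 : ℝ) + y ^ 2 ≠ 0 := fun y => by positivity
  have hder : ∀ y : ℝ, HasDerivAt F
      (1 / (1 + y ^ 2) - (3 * (3 + y ^ 2) - 3 * y * (2 * y)) / (3 + y ^ 2) ^ 2) y := by
    intro y
    have h1 : HasDerivAt (fun y : ℝ => 3 * y) 3 y := by
      simpa using (hasDerivAt_id y).const_mul (3 : ℝ)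
    have h2 : HasDerivAt (fun y : ℝ => 3 + y ^ 2) (2 * y) y := by
      simpa using ((hasDerivAt_pow 2 y).const_add (3 : ℝ))
    exact (Real.hasDerivAt_arctan y).sub (h1.div h2 (hden y))
  have hmono : Monotone F :=
    monotone_of_deriv_nonneg (fun y => (hder y).differentiableAt) (by
      intro y
      rw [(hder y).deriv]
      have heq : 1 / (1 + y ^ 2) - (3 * (3 + y ^ 2) - 3 * y * (2 * y)) / (3 + y ^ 2) ^ 2
          = 4 * y ^ 4 / ((1 + y ^ 2) * (3 + y ^ 2) ^ 2) := by
        field_simp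
        ring
      rw [heq]; positivity)
  have h0 : F 0 = 0 := by simp [hF]
  have := hmono hx
  rw [h0] at this
  simpa [hF, sub_nonneg] using this

lemma arctan_ub (x : ℝ) (hx : 0 ≤ x) : Real.arctan x ≤ x * (15 + 4 * x ^ 2) / (15 + 9 * x ^ 2) := by
  set F : ℝ → ℝ := fun y => y * (15 + 4 * y ^ 2) / (15 + 9 * y ^ 2) - Real.arctan y with hF
  have hden : ∀ y : ℝ, (15 : ℝ) + 9 * y ^ 2 ≠ 0 := fun y => by positivity
  have hder : ∀ y : ℝ, HasDerivAt F
      (((15 + 4 * y ^ 2) + y * (4 * (2 * y))) * (15 + 9 * y ^ 2) / (15 + 9 * y ^ 2) ^ 2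
        - y * (15 + 4 * y ^ 2) * (9 * (2 * y)) / (15 + 9 * y ^ 2) ^ 2
        - 1 / (1 + y ^ 2)) y := by
    intro y
    have h1 : HasDerivAt (fun y : ℝ => y * (15 + 4 * y ^ 2))
        ((1 : ℝ) * (15 + 4 * y ^ 2) + y * (4 * (2 * y))) y := by
      have ha : HasDerivAt (fun y : ℝ => y) 1 y := hasDerivAt_id y
      have hb : HasDerivAt (fun y : ℝ => 15 + 4 * y ^ 2) (4 * (2 * y)) y := by
        simpa using ((hasDerivAt_pow 2 y).const_mul (4 : ℝ)).const_add (15 : ℝ)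
      exact ha.mul hb
    have h2 : HasDerivAt (fun y : ℝ => 15 + 9 * y ^ 2) (9 * (2 * y)) y := by
      simpa using ((hasDerivAt_pow 2 y).const_mul (9 : ℝ)).const_add (15 : ℝ)
    have := (h1.div h2 (hden y)).sub (Real.hasDerivAt_arctan y)
    exact this.congr_deriv (by ring)
  have hmono : Monotone F :=
    monotone_of_deriv_nonneg (fun y => (hder y).differentiableAt) (by
      intro y
      rw [(hder y).deriv]
      have heq : ((15 + 4 * y ^ 2) + y * (4 * (2 * y))) * (15 + 9 * y ^ 2) / (15 + 9 * y ^ 2) ^ 2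
          - y * (15 + 4 * y ^ 2) * (9 * (2 * y)) / (15 + 9 * y ^ 2) ^ 2
          - 1 / (1 + y ^ 2)
          = 36 * y ^ 6 / ((1 + y ^ 2) * (15 + 9 * y ^ 2) ^ 2) := by
        field_simp
        ring
      rw [heq]; positivity)
  have h0 : F 0 = 0 := by simp [hF]
  have := hmono hx
  rw [h0] at this
  simpa [hF, sub_nonneg] using this

/-- For all real `r > 0`, `g₁(r) > 0`, where `g₁` is the factor
appearing in the Wronskian `W[f₁, …, f₅](r) = 12 r³ g₁(r)/(r²+1)⁹`. -/
theorem g1_pos (r : ℝ) (hr : 0 < r) :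
    0 < 12 * r ^ 10 * Real.arctan r - 27 * r ^ 8 * Real.arctan r + 12 * r ^ 9
      - 258 * r ^ 6 * Real.arctan r + 169 * r ^ 7
      - 507 * r ^ 4 * Real.arctan r + 411 * r ^ 5
      - 408 * r ^ 2 * Real.arctan r + 373 * r ^ 3
      - 120 * Real.arctan r + 120 * r := by
  set a := Real.arctan r with ha
  set g : ℝ := 12 * r ^ 10 * a - 27 * r ^ 8 * a + 12 * r ^ 9
      - 258 * r ^ 6 * a + 169 * r ^ 7
      - 507 * r ^ 4 * a + 411 * r ^ 5
      - 408 * r ^ 2 * a + 373 * r ^ 3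
      - 120 * a + 120 * r with hg
  have hD1 : (0 : ℝ) < 3 + r ^ 2 := by positivity
  have hD2 : (0 : ℝ) < 15 + 9 * r ^ 2 := by positivity
  have hlb : 3 * r ≤ a * (3 + r ^ 2) := by
    have := arctan_lb r hr.le
    rw [div_le_iff₀ hD1] at this
    linarith
  have hub : a * (15 + 9 * r ^ 2) ≤ r * (15 + 4 * r ^ 2) := by
    have := arctan_ub r hr.le
    rw [le_div_iff₀ hD2] at this
    linarith
  have key : g * ((3 + r ^ 2) * (15 + 9 * r ^ 2))
      = 12 * r ^ 10 * (15 + 9 * r ^ 2) * (a * (3 + r ^ 2) - 3 * r)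
        + (27 * r ^ 8 + 258 * r ^ 6 + 507 * r ^ 4 + 408 * r ^ 2 + 120) * (3 + r ^ 2)
          * (r * (15 + 4 * r ^ 2) - a * (15 + 9 * r ^ 2))
        + (225 * r ^ 3 + 930 * r ^ 5 + 1293 * r ^ 7 + 1128 * r ^ 9
          + 804 * r ^ 11 + 324 * r ^ 13) := by
    rw [hg]; ring
  have hP : (0 : ℝ) < 225 * r ^ 3 + 930 * r ^ 5 + 1293 * r ^ 7 + 1128 * r ^ 9
      + 804 * r ^ 11 + 324 * r ^ 13 := by positivity
  have ht1 : (0 : ℝ) ≤ 12 * r ^ 10 * (15 + 9 * r ^ 2) * (a * (3 + r ^ 2) - 3 * r) := by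
    apply mul_nonneg (by positivity); linarith
  have ht2 : (0 : ℝ) ≤ (27 * r ^ 8 + 258 * r ^ 6 + 507 * r ^ 4 + 408 * r ^ 2 + 120)
      * (3 + r ^ 2) * (r * (15 + 4 * r ^ 2) - a * (15 + 9 * r ^ 2)) := by
    apply mul_nonneg (by positivity); linarith
  have hgD : 0 * ((3 + r ^ 2) * (15 + 9 * r ^ 2)) < g * ((3 + r ^ 2) * (15 + 9 * r ^ 2)) := by
    rw [key]; rw [zero_mul]; linarith
  exact lt_of_mul_lt_mul_right hgD (by positivity)
end

section
/- For all real r > 0, g₃(r) > 0, where g₃(r) = 3120r¹¹ arctan r − 4864r¹⁰√(r²+1) + 10500r⁹ arctan r + 3120r¹⁰ − 14048r⁸√(r²+1) + 13155r⁷ arctan r + 9460r⁸ − 14224r⁶√(r²+1) + 7350r⁵ arctan r + 10279r⁶ − 6020r⁴√(r²+1) + 1575r³ arctan r + 4985r⁴ − 1120r²√(r²+1) + 1200r² − 160√(r²+1) + 160. -/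
lemma sqrt_newton (x c : ℝ) (hx : 0 ≤ x) (hc : 0 < c) :
    Real.sqrt x ≤ (x + c ^ 2) / (2 * c) := by
  rw [le_div_iff₀ (by linarith)]
  nlinarith [sq_nonneg (Real.sqrt x - c), Real.sq_sqrt hx, Real.sqrt_nonneg x]

lemma atan_lb19 (x : ℝ) (hx : 0 ≤ x) : x - x ^ 3 / 3 + x ^ 5 / 5 - x ^ 7 / 7 + x ^ 9 / 9 - x ^ 11 / 11 + x ^ 13 / 13 - x ^ 15 / 15 + x ^ 17 / 17 - x ^ 19 / 19 ≤ Real.arctan x := by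
  have H : ∀ t : ℝ, HasDerivAt (fun y : ℝ => Real.arctan y - (y - y ^ 3 / 3 + y ^ 5 / 5 - y ^ 7 / 7 + y ^ 9 / 9 - y ^ 11 / 11 + y ^ 13 / 13 - y ^ 15 / 15 + y ^ 17 / 17 - y ^ 19 / 19)) (1 / (1 + t ^ 2) - (1 - t ^ 2 + t ^ 4 - t ^ 6 + t ^ 8 - t ^ 10 + t ^ 12 - t ^ 14 + t ^ 16 - t ^ 18)) t := by
    intro t
    have base := (Real.hasDerivAt_arctan t).sub (((((((((((hasDerivAt_id t).sub ((hasDerivAt_pow 3 t).div_const 3)).add ((hasDerivAt_pow 5 t).div_const 5)).sub ((hasDerivAt_pow 7 t).div_const 7)).add ((hasDerivAt_pow 9 t).div_const 9)).sub ((hasDerivAt_pow 11 t).div_const 11)).add ((hasDerivAt_pow 13 t).div_const 13)).sub ((hasDerivAt_pow 15 t).div_const 15)).add ((hasDerivAt_pow 17 t).div_const 17)).sub ((hasDerivAt_pow 19 t).div_const 19)))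
    refine base.congr_deriv ?_
    push_cast
    ring
  have mono : Monotone (fun y : ℝ => Real.arctan y - (y - y ^ 3 / 3 + y ^ 5 / 5 - y ^ 7 / 7 + y ^ 9 / 9 - y ^ 11 / 11 + y ^ 13 / 13 - y ^ 15 / 15 + y ^ 17 / 17 - y ^ 19 / 19)) := by
    apply monotone_of_deriv_nonneg (fun t => (H t).differentiableAt)
    intro t
    rw [(H t).deriv]
    have h1 : (0:ℝ) < 1 + t ^ 2 := by positivity
    have h2 : 1 / (1 + t ^ 2) - (1 - t ^ 2 + t ^ 4 - t ^ 6 + t ^ 8 - t ^ 10 + t ^ 12 - t ^ 14 + t ^ 16 - t ^ 18) = t ^ 20 / (1 + t ^ 2) := by field_simp; ring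
    rw [h2]; positivity
  have hm := mono hx
  simp only [Real.arctan_zero] at hm
  nlinarith [hm]

lemma atan_ub13 (x : ℝ) (hx : 0 ≤ x) : Real.arctan x ≤ x - x ^ 3 / 3 + x ^ 5 / 5 - x ^ 7 / 7 + x ^ 9 / 9 - x ^ 11 / 11 + x ^ 13 / 13 := by
  have H : ∀ t : ℝ, HasDerivAt (fun y : ℝ => (y - y ^ 3 / 3 + y ^ 5 / 5 - y ^ 7 / 7 + y ^ 9 / 9 - y ^ 11 / 11 + y ^ 13 / 13) - Real.arctan y) ((1 - t ^ 2 + t ^ 4 - t ^ 6 + t ^ 8 - t ^ 10 + t ^ 12) - 1 / (1 + t ^ 2)) t := by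
    intro t
    have base := ((((((((hasDerivAt_id t).sub ((hasDerivAt_pow 3 t).div_const 3)).add ((hasDerivAt_pow 5 t).div_const 5)).sub ((hasDerivAt_pow 7 t).div_const 7)).add ((hasDerivAt_pow 9 t).div_const 9)).sub ((hasDerivAt_pow 11 t).div_const 11)).add ((hasDerivAt_pow 13 t).div_const 13))).sub (Real.hasDerivAt_arctan t)
    refine base.congr_deriv ?_
    push_cast
    ring
  have mono : Monotone (fun y : ℝ => (y - y ^ 3 / 3 + y ^ 5 / 5 - y ^ 7 / 7 + y ^ 9 / 9 - y ^ 11 / 11 + y ^ 13 / 13) - Real.arctan y) := by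
    apply monotone_of_deriv_nonneg (fun t => (H t).differentiableAt)
    intro t
    rw [(H t).deriv]
    have h1 : (0:ℝ) < 1 + t ^ 2 := by positivity
    have h2 : (1 - t ^ 2 + t ^ 4 - t ^ 6 + t ^ 8 - t ^ 10 + t ^ 12) - 1 / (1 + t ^ 2) = t ^ 14 / (1 + t ^ 2) := by field_simp; ring
    rw [h2]; positivity
  have hm := mono hx
  simp only [Real.arctan_zero] at hm
  nlinarith [hm]

lemma atan_lb3b (x : ℝ) (hx : 0 ≤ x) : x - x ^ 3 / 3 ≤ Real.arctan x := by
  have H : ∀ t : ℝ, HasDerivAt (fun y : ℝ => Real.arctan y - (y - y ^ 3 / 3)) (1 / (1 + t ^ 2) - (1 - t ^ 2)) t := by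
    intro t
    have base := (Real.hasDerivAt_arctan t).sub (((hasDerivAt_id t).sub ((hasDerivAt_pow 3 t).div_const 3)))
    refine base.congr_deriv ?_
    push_cast
    ring
  have mono : Monotone (fun y : ℝ => Real.arctan y - (y - y ^ 3 / 3)) := by
    apply monotone_of_deriv_nonneg (fun t => (H t).differentiableAt)
    intro t
    rw [(H t).deriv]
    have h1 : (0:ℝ) < 1 + t ^ 2 := by positivity
    have h2 : 1 / (1 + t ^ 2) - (1 - t ^ 2) = t ^ 4 / (1 + t ^ 2) := by field_simp; ring
    rw [h2]; positivity
  have hm := mono hx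
  simp only [Real.arctan_zero] at hm
  nlinarith [hm]

set_option maxHeartbeats 4000000 in
/-- For all real `r > 0`, `g₃(r) > 0`, where `g₃` is the factor
appearing in the Wronskian `W[f₁, …, f₇](r) = 1728 g₃(r)/(r²+1)^{35/2}`. -/
theorem g3_pos (r : ℝ) (hr : 0 < r) :
    0 < 3120 * r ^ 11 * Real.arctan r - 4864 * r ^ 10 * Real.sqrt (r ^ 2 + 1)
      + 10500 * r ^ 9 * Real.arctan r + 3120 * r ^ 10
      - 14048 * r ^ 8 * Real.sqrt (r ^ 2 + 1)
      + 13155 * r ^ 7 * Real.arctan r + 9460 * r ^ 8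
      - 14224 * r ^ 6 * Real.sqrt (r ^ 2 + 1)
      + 7350 * r ^ 5 * Real.arctan r + 10279 * r ^ 6
      - 6020 * r ^ 4 * Real.sqrt (r ^ 2 + 1)
      + 1575 * r ^ 3 * Real.arctan r + 4985 * r ^ 4
      - 1120 * r ^ 2 * Real.sqrt (r ^ 2 + 1) + 1200 * r ^ 2
      - 160 * Real.sqrt (r ^ 2 + 1) + 160 := by
  rcases le_or_gt r (3 / 4) with hsplit | hsplit
  · -- small region
    have hr0 : (0:ℝ) ≤ r := hr.le
    have hA : (0:ℝ) ≤ (3120 * r ^ 11 + 10500 * r ^ 9 + 13155 * r ^ 7 + 7350 * r ^ 5 + 1575 * r ^ 3) := by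
      have h3 : (0:ℝ) ≤ r ^ 3 := pow_nonneg hr0 3
      have h5 : (0:ℝ) ≤ r ^ 5 := pow_nonneg hr0 5
      have h7 : (0:ℝ) ≤ r ^ 7 := pow_nonneg hr0 7
      have h9 : (0:ℝ) ≤ r ^ 9 := pow_nonneg hr0 9
      have h11 : (0:ℝ) ≤ r ^ 11 := pow_nonneg hr0 11
      linarith
    have hB : (0:ℝ) ≤ (4864 * r ^ 10 + 14048 * r ^ 8 + 14224 * r ^ 6 + 6020 * r ^ 4 + 1120 * r ^ 2 + 160) := by positivity
    have ha : (r - r ^ 3 / 3 + r ^ 5 / 5 - r ^ 7 / 7 + r ^ 9 / 9 - r ^ 11 / 11 + r ^ 13 / 13 - r ^ 15 / 15 + r ^ 17 / 17 - r ^ 19 / 19) ≤ Real.arctan r := atan_lb19 r hr0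
    have hc : (0:ℝ) < (r ^ 2 + 2) / 2 := by positivity
    have hs := sqrt_newton (r ^ 2 + 1) ((r ^ 2 + 2) / 2) (by positivity) hc
    have hs2 : Real.sqrt (r ^ 2 + 1) * (2 * ((r ^ 2 + 2) / 2)) ≤ (r ^ 2 + 1 + ((r ^ 2 + 2) / 2) ^ 2) := by
      rw [← le_div_iff₀ (by positivity)]
      exact hs
    have e1 : (0:ℝ) ≤ ((3120 * r ^ 11 + 10500 * r ^ 9 + 13155 * r ^ 7 + 7350 * r ^ 5 + 1575 * r ^ 3) * (r ^ 2 + 2)) * (Real.arctan r - (r - r ^ 3 / 3 + r ^ 5 / 5 - r ^ 7 / 7 + r ^ 9 / 9 - r ^ 11 / 11 + r ^ 13 / 13 - r ^ 15 / 15 + r ^ 17 / 17 - r ^ 19 / 19)) :=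
      mul_nonneg (mul_nonneg hA (by positivity)) (by linarith)
    have e2 : (0:ℝ) ≤ (4864 * r ^ 10 + 14048 * r ^ 8 + 14224 * r ^ 6 + 6020 * r ^ 4 + 1120 * r ^ 2 + 160) * ((r ^ 2 + 1 + ((r ^ 2 + 2) / 2) ^ 2) - (r ^ 2 + 2) * Real.sqrt (r ^ 2 + 1)) :=
      mul_nonneg hB (by nlinarith [hs2])
    have hD : (0:ℝ) < (r ^ 2 + 2) := by
      positivity
    have hBern : (0:ℝ) < r ^ 8 * (1 + ((3940649673949184/282429536481) * r ^ 0 * (3 / 4 - r) ^ 24 + ((31525197391593472/94143178827) * r ^ 1 * (3 / 4 - r) ^ 23 + ((365706363491319808/94143178827) * r ^ 2 * (3 / 4 - r) ^ 22 + ((8184870110280810496/282429536481) * r ^ 3 * (3 / 4 - r) ^ 21 + ((14689026746343227392/94143178827) * r ^ 4 * (3 / 4 - r) ^ 20 + ((60702928661792161792/94143178827) * r ^ 5 * (3 / 4 - r) ^ 19 + ((46180335197253573541888/21747074309037) * r ^ 6 * (3 / 4 - r) ^ 18 + ((13801060196977190371328/2416341589893) * r ^ 7 * (3 / 4 - r)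 ^ 17 + ((400686738250562281668608/31412440668609) * r ^ 8 * (3 / 4 - r) ^ 16 + ((6762844906415574820585472/282711966017481) * r ^ 9 * (3 / 4 - r) ^ 15 + ((3576354870919633064427520/94237322005827) * r ^ 10 * (3 / 4 - r) ^ 14 + ((688736234077386000302080/13462474572261) * r ^ 11 * (3 / 4 - r) ^ 13 + ((282201178503249832422932480/4806103422297177) * r ^ 12 * (3 / 4 - r) ^ 12 + ((91891918635303794666110976/1602034474099059) * r ^ 13 * (3 / 4 - r) ^ 11 + ((1448075566061019101879336960/30438655007882121) * r ^ 14 * (3 / 4 - r) ^ 10 + ((234180237154619488341065728/7024305001818951) * r ^ 15 * (3 / 4 - r) ^ 9 + ((15291062910358331519795200/780478333535439) * r ^ 16 * (3 / 4 - r) ^ 8 + ((8809340793164015892168704/922383485087337) * r ^ 17 * (3 / 4 - r) ^ 7 + ((49614584017453172362932224/13045137860520909) * r ^ 18 * (3 / 4 - r) ^ 6 + ((3350368360368819806953472/2767150455262011) * r ^ 19 * (3 / 4 - r) ^ 5 + ((9087906898251668046168832/30438655007882121) * r ^ 20 * (3 / 4 - r) ^ 4 + ((4958809070905705958253568/91315965023646363)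 * r ^ 21 * (3 / 4 - r) ^ 3 + ((823096143884802094528/123233421084543) * r ^ 22 * (3 / 4 - r) ^ 2 + ((13786745902192195739776/30438655007882121) * r ^ 23 * (3 / 4 - r) ^ 1 + ((73894416938986866800/13045137860520909) * r ^ 24 * (3 / 4 - r) ^ 0)))))))))))))))))))))))))) := by
      have h34 : (0:ℝ) ≤ 3 / 4 - r := by linarith
      have hterms : ∀ k m : ℕ, ∀ q : ℝ, 0 ≤ q → 0 ≤ q * r ^ k * (3 / 4 - r) ^ m :=
        fun k m q hq => mul_nonneg (mul_nonneg hq (pow_nonneg hr0 k)) (pow_nonneg h34 m)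
      have t0 : (0:ℝ) ≤ (3940649673949184/282429536481) * r ^ 0 * (3 / 4 - r) ^ 24 := hterms 0 24 _ (by norm_num)
      have t1 : (0:ℝ) ≤ (31525197391593472/94143178827) * r ^ 1 * (3 / 4 - r) ^ 23 := hterms 1 23 _ (by norm_num)
      have t2 : (0:ℝ) ≤ (365706363491319808/94143178827) * r ^ 2 * (3 / 4 - r) ^ 22 := hterms 2 22 _ (by norm_num)
      have t3 : (0:ℝ) ≤ (8184870110280810496/282429536481) * r ^ 3 * (3 / 4 - r) ^ 21 := hterms 3 21 _ (by norm_num)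
      have t4 : (0:ℝ) ≤ (14689026746343227392/94143178827) * r ^ 4 * (3 / 4 - r) ^ 20 := hterms 4 20 _ (by norm_num)
      have t5 : (0:ℝ) ≤ (60702928661792161792/94143178827) * r ^ 5 * (3 / 4 - r) ^ 19 := hterms 5 19 _ (by norm_num)
      have t6 : (0:ℝ) ≤ (46180335197253573541888/21747074309037) * r ^ 6 * (3 / 4 - r) ^ 18 := hterms 6 18 _ (by norm_num)
      have t7 : (0:ℝ) ≤ (13801060196977190371328/2416341589893) * r ^ 7 * (3 / 4 - r) ^ 17 := hterms 7 17 _ (by norm_num)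
      have t8 : (0:ℝ) ≤ (400686738250562281668608/31412440668609) * r ^ 8 * (3 / 4 - r) ^ 16 := hterms 8 16 _ (by norm_num)
      have t9 : (0:ℝ) ≤ (6762844906415574820585472/282711966017481) * r ^ 9 * (3 / 4 - r) ^ 15 := hterms 9 15 _ (by norm_num)
      have t10 : (0:ℝ) ≤ (3576354870919633064427520/94237322005827) * r ^ 10 * (3 / 4 - r) ^ 14 := hterms 10 14 _ (by norm_num)
      have t11 : (0:ℝ) ≤ (688736234077386000302080/13462474572261) * r ^ 11 * (3 / 4 - r) ^ 13 := hterms 11 13 _ (by norm_num)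
      have t12 : (0:ℝ) ≤ (282201178503249832422932480/4806103422297177) * r ^ 12 * (3 / 4 - r) ^ 12 := hterms 12 12 _ (by norm_num)
      have t13 : (0:ℝ) ≤ (91891918635303794666110976/1602034474099059) * r ^ 13 * (3 / 4 - r) ^ 11 := hterms 13 11 _ (by norm_num)
      have t14 : (0:ℝ) ≤ (1448075566061019101879336960/30438655007882121) * r ^ 14 * (3 / 4 - r) ^ 10 := hterms 14 10 _ (by norm_num)
      have t15 : (0:ℝ) ≤ (234180237154619488341065728/7024305001818951) * r ^ 15 * (3 / 4 - r) ^ 9 := hterms 15 9 _ (by norm_num)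
      have t16 : (0:ℝ) ≤ (15291062910358331519795200/780478333535439) * r ^ 16 * (3 / 4 - r) ^ 8 := hterms 16 8 _ (by norm_num)
      have t17 : (0:ℝ) ≤ (8809340793164015892168704/922383485087337) * r ^ 17 * (3 / 4 - r) ^ 7 := hterms 17 7 _ (by norm_num)
      have t18 : (0:ℝ) ≤ (49614584017453172362932224/13045137860520909) * r ^ 18 * (3 / 4 - r) ^ 6 := hterms 18 6 _ (by norm_num)
      have t19 : (0:ℝ) ≤ (3350368360368819806953472/2767150455262011) * r ^ 19 * (3 / 4 - r) ^ 5 := hterms 19 5 _ (by norm_num)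
      have t20 : (0:ℝ) ≤ (9087906898251668046168832/30438655007882121) * r ^ 20 * (3 / 4 - r) ^ 4 := hterms 20 4 _ (by norm_num)
      have t21 : (0:ℝ) ≤ (4958809070905705958253568/91315965023646363) * r ^ 21 * (3 / 4 - r) ^ 3 := hterms 21 3 _ (by norm_num)
      have t22 : (0:ℝ) ≤ (823096143884802094528/123233421084543) * r ^ 22 * (3 / 4 - r) ^ 2 := hterms 22 2 _ (by norm_num)
      have t23 : (0:ℝ) ≤ (13786745902192195739776/30438655007882121) * r ^ 23 * (3 / 4 - r) ^ 1 := hterms 23 1 _ (by norm_num)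
      have t24 : (0:ℝ) ≤ (73894416938986866800/13045137860520909) * r ^ 24 * (3 / 4 - r) ^ 0 := hterms 24 0 _ (by norm_num)
      have hS : (0:ℝ) ≤ ((3940649673949184/282429536481) * r ^ 0 * (3 / 4 - r) ^ 24 + ((31525197391593472/94143178827) * r ^ 1 * (3 / 4 - r) ^ 23 + ((365706363491319808/94143178827) * r ^ 2 * (3 / 4 - r) ^ 22 + ((8184870110280810496/282429536481) * r ^ 3 * (3 / 4 - r) ^ 21 + ((14689026746343227392/94143178827) * r ^ 4 * (3 / 4 - r) ^ 20 + ((60702928661792161792/94143178827) * r ^ 5 * (3 / 4 - r) ^ 19 + ((46180335197253573541888/21747074309037) * r ^ 6 * (3 / 4 - r) ^ 18 + ((13801060196977190371328/2416341589893) * r ^ 7 * (3 / 4 - r) ^ 17 + ((400686738250562281668608/31412440668609) * r ^ 8 * (3 / 4 - r) ^ 16 + ((6762844906415574820585472/282711966017481) * r ^ 9 * (3 / 4 - r) ^ 15 + ((3576354870919633064427520/94237322005827) * r ^ 10 * (3 / 4 - r) ^ 14 + ((688736234077386000302080/13462474572261) * r ^ 11 * (3 / 4 - r) ^ 13 + ((282201178503249832422932480/4806103422297177)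 * r ^ 12 * (3 / 4 - r) ^ 12 + ((91891918635303794666110976/1602034474099059) * r ^ 13 * (3 / 4 - r) ^ 11 + ((1448075566061019101879336960/30438655007882121) * r ^ 14 * (3 / 4 - r) ^ 10 + ((234180237154619488341065728/7024305001818951) * r ^ 15 * (3 / 4 - r) ^ 9 + ((15291062910358331519795200/780478333535439) * r ^ 16 * (3 / 4 - r) ^ 8 + ((8809340793164015892168704/922383485087337) * r ^ 17 * (3 / 4 - r) ^ 7 + ((49614584017453172362932224/13045137860520909) * r ^ 18 * (3 / 4 - r) ^ 6 + ((3350368360368819806953472/2767150455262011) * r ^ 19 * (3 / 4 - r) ^ 5 + ((9087906898251668046168832/30438655007882121) * r ^ 20 * (3 / 4 - r) ^ 4 + ((4958809070905705958253568/91315965023646363) * r ^ 21 * (3 / 4 - r) ^ 3 + ((823096143884802094528/123233421084543) * r ^ 22 * (3 / 4 - r) ^ 2 + ((13786745902192195739776/30438655007882121) * r ^ 23 * (3 / 4 - r) ^ 1 + ((73894416938986866800/13045137860520909) * r ^ 24 * (3 / 4 - r) ^ 0))))))))))))))))))))))))) := add_nonneg t0 (add_nonneg t1 (add_nonneg t2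 (add_nonneg t3 (add_nonneg t4 (add_nonneg t5 (add_nonneg t6 (add_nonneg t7 (add_nonneg t8 (add_nonneg t9 (add_nonneg t10 (add_nonneg t11 (add_nonneg t12 (add_nonneg t13 (add_nonneg t14 (add_nonneg t15 (add_nonneg t16 (add_nonneg t17 (add_nonneg t18 (add_nonneg t19 (add_nonneg t20 (add_nonneg t21 (add_nonneg t22 (add_nonneg t23 t24)))))))))))))))))))))))
      exact mul_pos (pow_pos hr 8) (add_pos_of_pos_of_nonneg one_pos hS)
    have ident : ((r ^ 2 + 2)) * (3120 * r ^ 11 * Real.arctan r - 4864 * r ^ 10 * Real.sqrt (r ^ 2 + 1)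
      + 10500 * r ^ 9 * Real.arctan r + 3120 * r ^ 10
      - 14048 * r ^ 8 * Real.sqrt (r ^ 2 + 1)
      + 13155 * r ^ 7 * Real.arctan r + 9460 * r ^ 8
      - 14224 * r ^ 6 * Real.sqrt (r ^ 2 + 1)
      + 7350 * r ^ 5 * Real.arctan r + 10279 * r ^ 6
      - 6020 * r ^ 4 * Real.sqrt (r ^ 2 + 1)
      + 1575 * r ^ 3 * Real.arctan r + 4985 * r ^ 4
      - 1120 * r ^ 2 * Real.sqrt (r ^ 2 + 1) + 1200 * r ^ 2
      - 160 * Real.sqrt (r ^ 2 + 1) + 160)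
        = (r ^ 8 * (1 + ((3940649673949184/282429536481) * r ^ 0 * (3 / 4 - r) ^ 24 + ((31525197391593472/94143178827) * r ^ 1 * (3 / 4 - r) ^ 23 + ((365706363491319808/94143178827) * r ^ 2 * (3 / 4 - r) ^ 22 + ((8184870110280810496/282429536481) * r ^ 3 * (3 / 4 - r) ^ 21 + ((14689026746343227392/94143178827) * r ^ 4 * (3 / 4 - r) ^ 20 + ((60702928661792161792/94143178827) * r ^ 5 * (3 / 4 - r) ^ 19 + ((46180335197253573541888/21747074309037) * r ^ 6 * (3 / 4 - r) ^ 18 + ((13801060196977190371328/2416341589893) * r ^ 7 * (3 / 4 - r) ^ 17 + ((400686738250562281668608/31412440668609) * r ^ 8 * (3 / 4 - r) ^ 16 + ((6762844906415574820585472/282711966017481) * r ^ 9 * (3 / 4 - r) ^ 15 + ((3576354870919633064427520/94237322005827) * r ^ 10 * (3 / 4 - r) ^ 14 + ((688736234077386000302080/13462474572261) * r ^ 11 * (3 / 4 - r) ^ 13 + ((282201178503249832422932480/4806103422297177) * r ^ 12 * (3 / 4 - r) ^ 12 + ((91891918635303794666110976/1602034474099059) * r ^ 13 * (3 / 4 -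 r) ^ 11 + ((1448075566061019101879336960/30438655007882121) * r ^ 14 * (3 / 4 - r) ^ 10 + ((234180237154619488341065728/7024305001818951) * r ^ 15 * (3 / 4 - r) ^ 9 + ((15291062910358331519795200/780478333535439) * r ^ 16 * (3 / 4 - r) ^ 8 + ((8809340793164015892168704/922383485087337) * r ^ 17 * (3 / 4 - r) ^ 7 + ((49614584017453172362932224/13045137860520909) * r ^ 18 * (3 / 4 - r) ^ 6 + ((3350368360368819806953472/2767150455262011) * r ^ 19 * (3 / 4 - r) ^ 5 + ((9087906898251668046168832/30438655007882121) * r ^ 20 * (3 / 4 - r) ^ 4 + ((4958809070905705958253568/91315965023646363) * r ^ 21 * (3 / 4 - r) ^ 3 + ((823096143884802094528/123233421084543) * r ^ 22 * (3 / 4 - r) ^ 2 + ((13786745902192195739776/30438655007882121) * r ^ 23 * (3 / 4 - r) ^ 1 + ((73894416938986866800/13045137860520909) * r ^ 24 * (3 / 4 - r) ^ 0))))))))))))))))))))))))))) + (((3120 * r ^ 11 + 10500 * r ^ 9 + 13155 * r ^ 7 + 7350 * r ^ 5 + 1575 * r ^ 3) * (r ^ 2 + 2)) * (Real.arctan r -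 (r - r ^ 3 / 3 + r ^ 5 / 5 - r ^ 7 / 7 + r ^ 9 / 9 - r ^ 11 / 11 + r ^ 13 / 13 - r ^ 15 / 15 + r ^ 17 / 17 - r ^ 19 / 19))) + ((4864 * r ^ 10 + 14048 * r ^ 8 + 14224 * r ^ 6 + 6020 * r ^ 4 + 1120 * r ^ 2 + 160) * ((r ^ 2 + 1 + ((r ^ 2 + 2) / 2) ^ 2) - (r ^ 2 + 2) * Real.sqrt (r ^ 2 + 1))) := by ring
    have hDE : (0:ℝ) < ((r ^ 2 + 2)) * (3120 * r ^ 11 * Real.arctan r - 4864 * r ^ 10 * Real.sqrt (r ^ 2 + 1)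
      + 10500 * r ^ 9 * Real.arctan r + 3120 * r ^ 10
      - 14048 * r ^ 8 * Real.sqrt (r ^ 2 + 1)
      + 13155 * r ^ 7 * Real.arctan r + 9460 * r ^ 8
      - 14224 * r ^ 6 * Real.sqrt (r ^ 2 + 1)
      + 7350 * r ^ 5 * Real.arctan r + 10279 * r ^ 6
      - 6020 * r ^ 4 * Real.sqrt (r ^ 2 + 1)
      + 1575 * r ^ 3 * Real.arctan r + 4985 * r ^ 4
      - 1120 * r ^ 2 * Real.sqrt (r ^ 2 + 1) + 1200 * r ^ 2
      - 160 * Real.sqrt (r ^ 2 + 1) + 160) := by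
      rw [ident]
      exact add_pos_of_pos_of_nonneg (add_pos_of_pos_of_nonneg hBern e1) e2
    rcases mul_pos_iff.mp hDE with ⟨_, hgoal⟩ | ⟨hneg, _⟩
    · exact hgoal
    · linarith
  · rcases le_or_gt r (3 / 2) with hsplit2 | hsplit2
    · -- mid region
      have hr0 : (0:ℝ) ≤ r := hr.le
      have hA : (0:ℝ) ≤ (3120 * r ^ 11 + 10500 * r ^ 9 + 13155 * r ^ 7 + 7350 * r ^ 5 + 1575 * r ^ 3) := by
        have h3 : (0:ℝ) ≤ r ^ 3 := pow_nonneg hr0 3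
        have h5 : (0:ℝ) ≤ r ^ 5 := pow_nonneg hr0 5
        have h7 : (0:ℝ) ≤ r ^ 7 := pow_nonneg hr0 7
        have h9 : (0:ℝ) ≤ r ^ 9 := pow_nonneg hr0 9
        have h11 : (0:ℝ) ≤ r ^ 11 := pow_nonneg hr0 11
        linarith
      have hB : (0:ℝ) ≤ (4864 * r ^ 10 + 14048 * r ^ 8 + 14224 * r ^ 6 + 6020 * r ^ 4 + 1120 * r ^ 2 + 160) := by positivity
      have h4 : (0:ℝ) < 3 * r + 4 := by linarith
      have ht0 : (0:ℝ) ≤ ((4 * r - 3) / (3 * r + 4)) := div_nonneg (by linarith) h4.le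
      have hL : (3217 / 5000 : ℝ) ≤ Real.arctan (3 / 4) := by
        have h := atan_lb19 (3 / 4) (by norm_num)
        norm_num at h
        linarith
      have hadd := Real.arctan_add (x := ((4 * r - 3) / (3 * r + 4))) (y := (3 / 4 : ℝ))
        (by rw [div_mul_eq_mul_div, div_lt_one h4]; linarith)
      have harg : (((4 * r - 3) / (3 * r + 4)) + 3 / 4) / (1 - ((4 * r - 3) / (3 * r + 4)) * (3 / 4)) = r := by
        rw [div_eq_iff]
        · field_simp
          ring
        · rw [sub_ne_zero]
          intro hcon
          rw [div_mul_eq_mul_div, eq_comm, div_eq_one_iff_eq (by linarith)] at hcon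
          linarith
      rw [harg] at hadd
      have htl := atan_lb3b ((4 * r - 3) / (3 * r + 4)) ht0
      have ha : (3217 / 5000 + ((4 * r - 3) / (3 * r + 4)) - ((4 * r - 3) / (3 * r + 4)) ^ 3 / 3) ≤ Real.arctan r := by
        rw [← hadd]
        linarith
      have ha2 : (3 * r + 4) ^ 3 * (3217 / 5000 + ((4 * r - 3) / (3 * r + 4)) - ((4 * r - 3) / (3 * r + 4)) ^ 3 / 3) ≤ (3 * r + 4) ^ 3 * Real.arctan r :=
        mul_le_mul_of_nonneg_left ha (by positivity)
      have heqa : (3 * r + 4) ^ 3 * (3217 / 5000 + ((4 * r - 3) / (3 * r + 4)) - ((4 * r - 3) / (3 * r + 4)) ^ 3 / 3) = (3217 / 5000 * (3 * r + 4) ^ 3 + (4 * r - 3) * (3 * r + 4) ^ 2 - (4 * r - 3) ^ 3 / 3) := by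
        field_simp
      have hc : (0:ℝ) < ((25 * r ^ 2 + 74) / 70) := by positivity
      have hs := sqrt_newton (r ^ 2 + 1) ((25 * r ^ 2 + 74) / 70) (by positivity) hc
      have hs2 : Real.sqrt (r ^ 2 + 1) * (2 * ((25 * r ^ 2 + 74) / 70)) ≤ r ^ 2 + 1 + ((25 * r ^ 2 + 74) / 70) ^ 2 := by
        rw [← le_div_iff₀ (by positivity)]
        exact hs
      have e1 : (0:ℝ) ≤ ((3120 * r ^ 11 + 10500 * r ^ 9 + 13155 * r ^ 7 + 7350 * r ^ 5 + 1575 * r ^ 3) * (140 * (25 * r ^ 2 + 74))) * ((3 * r + 4) ^ 3 * Real.arctan r - (3217 / 5000 * (3 * r + 4) ^ 3 + (4 * r - 3) * (3 * r + 4) ^ 2 - (4 * r - 3) ^ 3 / 3)) :=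
        mul_nonneg (mul_nonneg hA (by positivity)) (by linarith)
      have e2 : (0:ℝ) ≤ ((4864 * r ^ 10 + 14048 * r ^ 8 + 14224 * r ^ 6 + 6020 * r ^ 4 + 1120 * r ^ 2 + 160) * (3 * r + 4) ^ 3) * ((4900 * (r ^ 2 + 1) + (25 * r ^ 2 + 74) ^ 2) - (140 * (25 * r ^ 2 + 74)) * Real.sqrt (r ^ 2 + 1)) :=
        mul_nonneg (mul_nonneg hB (by positivity)) (by nlinarith [hs2])
      have hD : (0:ℝ) < ((3 * r + 4) ^ 3 * (140 * (25 * r ^ 2 + 74))) := by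
        have h4b : (0:ℝ) < 3 * r + 4 := by linarith
        have h5b : (0:ℝ) < 140 * (25 * r ^ 2 + 74) := by positivity
        exact mul_pos (pow_pos h4b 3) h5b
      have hBern : (0:ℝ) < (1000 + ((133534780290316000/129140163) * (r - 3 / 4) ^ 0 * (3 / 2 - r) ^ 17 + ((4006620583237772000/129140163) * (r - 3 / 4) ^ 1 * (3 / 2 - r) ^ 16 + ((55107448030757180800/129140163) * (r - 3 / 4) ^ 2 * (3 / 2 - r) ^ 15 + ((466120790950983131264/129140163) * (r - 3 / 4) ^ 3 * (3 / 2 - r) ^ 14 + ((68307123028913246250496/3228504075) * (r - 3 / 4) ^ 4 * (3 / 2 - r) ^ 13 + ((295590773067401987062784/3228504075) * (r - 3 / 4) ^ 5 * (3 / 2 - r) ^ 12 + ((196003979685416629815296/645700815) * (r - 3 / 4) ^ 6 * (3 / 2 - r) ^ 11 + ((2545508471809926399260672/3228504075) * (r - 3 / 4) ^ 7 * (3 / 2 - r) ^ 10 + ((5244791201800042784579584/3228504075) * (r - 3 / 4) ^ 8 * (3 / 2 - r) ^ 9 + ((8615723438492762944749568/3228504075) * (r - 3 / 4) ^ 9 *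 (3 / 2 - r) ^ 8 + ((11268239019028398521090048/3228504075) * (r - 3 / 4) ^ 10 * (3 / 2 - r) ^ 7 + ((11640684572973299303415808/3228504075) * (r - 3 / 4) ^ 11 * (3 / 2 - r) ^ 6 + ((9351643561824326631686144/3228504075) * (r - 3 / 4) ^ 12 * (3 / 2 - r) ^ 5 + ((5692420786676976720805888/3228504075) * (r - 3 / 4) ^ 13 * (3 / 2 - r) ^ 4 + ((2517028777345840787750912/3228504075) * (r - 3 / 4) ^ 14 * (3 / 2 - r) ^ 3 + ((150557531075690097016832/645700815) * (r - 3 / 4) ^ 15 * (3 / 2 - r) ^ 2 + ((133036293093091878895616/3228504075) * (r - 3 / 4) ^ 16 * (3 / 2 - r) ^ 1 + ((399110017407413911552/129140163) * (r - 3 / 4) ^ 17 * (3 / 2 - r) ^ 0))))))))))))))))))) := by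
        have hlo : (0:ℝ) ≤ r - 3 / 4 := by linarith
        have hhi : (0:ℝ) ≤ 3 / 2 - r := by linarith
        have hterms : ∀ k m : ℕ, ∀ q : ℝ, 0 ≤ q → 0 ≤ q * (r - 3 / 4) ^ k * (3 / 2 - r) ^ m :=
          fun k m q hq => mul_nonneg (mul_nonneg hq (pow_nonneg hlo k)) (pow_nonneg hhi m)
        have t0 : (0:ℝ) ≤ (133534780290316000/129140163) * (r - 3 / 4) ^ 0 * (3 / 2 - r) ^ 17 := hterms 0 17 _ (by norm_num)
        have t1 : (0:ℝ) ≤ (4006620583237772000/129140163) * (r - 3 / 4) ^ 1 * (3 / 2 - r) ^ 16 := hterms 1 16 _ (by norm_num)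
        have t2 : (0:ℝ) ≤ (55107448030757180800/129140163) * (r - 3 / 4) ^ 2 * (3 / 2 - r) ^ 15 := hterms 2 15 _ (by norm_num)
        have t3 : (0:ℝ) ≤ (466120790950983131264/129140163) * (r - 3 / 4) ^ 3 * (3 / 2 - r) ^ 14 := hterms 3 14 _ (by norm_num)
        have t4 : (0:ℝ) ≤ (68307123028913246250496/3228504075) * (r - 3 / 4) ^ 4 * (3 / 2 - r) ^ 13 := hterms 4 13 _ (by norm_num)
        have t5 : (0:ℝ) ≤ (295590773067401987062784/3228504075) * (r - 3 / 4) ^ 5 * (3 / 2 - r) ^ 12 := hterms 5 12 _ (by norm_num)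
        have t6 : (0:ℝ) ≤ (196003979685416629815296/645700815) * (r - 3 / 4) ^ 6 * (3 / 2 - r) ^ 11 := hterms 6 11 _ (by norm_num)
        have t7 : (0:ℝ) ≤ (2545508471809926399260672/3228504075) * (r - 3 / 4) ^ 7 * (3 / 2 - r) ^ 10 := hterms 7 10 _ (by norm_num)
        have t8 : (0:ℝ) ≤ (5244791201800042784579584/3228504075) * (r - 3 / 4) ^ 8 * (3 / 2 - r) ^ 9 := hterms 8 9 _ (by norm_num)
        have t9 : (0:ℝ) ≤ (8615723438492762944749568/3228504075) * (r - 3 / 4) ^ 9 * (3 / 2 - r) ^ 8 := hterms 9 8 _ (by norm_num)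
        have t10 : (0:ℝ) ≤ (11268239019028398521090048/3228504075) * (r - 3 / 4) ^ 10 * (3 / 2 - r) ^ 7 := hterms 10 7 _ (by norm_num)
        have t11 : (0:ℝ) ≤ (11640684572973299303415808/3228504075) * (r - 3 / 4) ^ 11 * (3 / 2 - r) ^ 6 := hterms 11 6 _ (by norm_num)
        have t12 : (0:ℝ) ≤ (9351643561824326631686144/3228504075) * (r - 3 / 4) ^ 12 * (3 / 2 - r) ^ 5 := hterms 12 5 _ (by norm_num)
        have t13 : (0:ℝ) ≤ (5692420786676976720805888/3228504075) * (r - 3 / 4) ^ 13 * (3 / 2 - r) ^ 4 := hterms 13 4 _ (by norm_num)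
        have t14 : (0:ℝ) ≤ (2517028777345840787750912/3228504075) * (r - 3 / 4) ^ 14 * (3 / 2 - r) ^ 3 := hterms 14 3 _ (by norm_num)
        have t15 : (0:ℝ) ≤ (150557531075690097016832/645700815) * (r - 3 / 4) ^ 15 * (3 / 2 - r) ^ 2 := hterms 15 2 _ (by norm_num)
        have t16 : (0:ℝ) ≤ (133036293093091878895616/3228504075) * (r - 3 / 4) ^ 16 * (3 / 2 - r) ^ 1 := hterms 16 1 _ (by norm_num)
        have t17 : (0:ℝ) ≤ (399110017407413911552/129140163) * (r - 3 / 4) ^ 17 * (3 / 2 - r) ^ 0 := hterms 17 0 _ (by norm_num)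
        have hS : (0:ℝ) ≤ ((133534780290316000/129140163) * (r - 3 / 4) ^ 0 * (3 / 2 - r) ^ 17 + ((4006620583237772000/129140163) * (r - 3 / 4) ^ 1 * (3 / 2 - r) ^ 16 + ((55107448030757180800/129140163) * (r - 3 / 4) ^ 2 * (3 / 2 - r) ^ 15 + ((466120790950983131264/129140163) * (r - 3 / 4) ^ 3 * (3 / 2 - r) ^ 14 + ((68307123028913246250496/3228504075) * (r - 3 / 4) ^ 4 * (3 / 2 - r) ^ 13 + ((295590773067401987062784/3228504075) * (r - 3 / 4) ^ 5 * (3 / 2 - r) ^ 12 + ((196003979685416629815296/645700815) * (r - 3 / 4) ^ 6 * (3 / 2 - r) ^ 11 + ((2545508471809926399260672/3228504075) * (r - 3 / 4) ^ 7 * (3 / 2 - r) ^ 10 + ((5244791201800042784579584/3228504075) * (r - 3 / 4) ^ 8 * (3 / 2 - r) ^ 9 + ((8615723438492762944749568/3228504075) * (r - 3 / 4) ^ 9 * (3 / 2 - r) ^ 8 + ((11268239019028398521090048/3228504075) * (r - 3 / 4) ^ 10 * (3 / 2 - r) ^ 7 + ((11640684572973299303415808/3228504075) * (r - 3 / 4)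 ^ 11 * (3 / 2 - r) ^ 6 + ((9351643561824326631686144/3228504075) * (r - 3 / 4) ^ 12 * (3 / 2 - r) ^ 5 + ((5692420786676976720805888/3228504075) * (r - 3 / 4) ^ 13 * (3 / 2 - r) ^ 4 + ((2517028777345840787750912/3228504075) * (r - 3 / 4) ^ 14 * (3 / 2 - r) ^ 3 + ((150557531075690097016832/645700815) * (r - 3 / 4) ^ 15 * (3 / 2 - r) ^ 2 + ((133036293093091878895616/3228504075) * (r - 3 / 4) ^ 16 * (3 / 2 - r) ^ 1 + ((399110017407413911552/129140163) * (r - 3 / 4) ^ 17 * (3 / 2 - r) ^ 0)))))))))))))))))) := add_nonneg t0 (add_nonneg t1 (add_nonneg t2 (add_nonneg t3 (add_nonneg t4 (add_nonneg t5 (add_nonneg t6 (add_nonneg t7 (add_nonneg t8 (add_nonneg t9 (add_nonneg t10 (add_nonneg t11 (add_nonneg t12 (add_nonneg t13 (add_nonneg t14 (add_nonneg t15 (add_nonneg t16 t17))))))))))))))))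
        exact add_pos_of_pos_of_nonneg (by norm_num) hS
      have ident : (((3 * r + 4) ^ 3 * (140 * (25 * r ^ 2 + 74)))) * (3120 * r ^ 11 * Real.arctan r - 4864 * r ^ 10 * Real.sqrt (r ^ 2 + 1)
      + 10500 * r ^ 9 * Real.arctan r + 3120 * r ^ 10
      - 14048 * r ^ 8 * Real.sqrt (r ^ 2 + 1)
      + 13155 * r ^ 7 * Real.arctan r + 9460 * r ^ 8
      - 14224 * r ^ 6 * Real.sqrt (r ^ 2 + 1)
      + 7350 * r ^ 5 * Real.arctan r + 10279 * r ^ 6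
      - 6020 * r ^ 4 * Real.sqrt (r ^ 2 + 1)
      + 1575 * r ^ 3 * Real.arctan r + 4985 * r ^ 4
      - 1120 * r ^ 2 * Real.sqrt (r ^ 2 + 1) + 1200 * r ^ 2
      - 160 * Real.sqrt (r ^ 2 + 1) + 160)
          = ((1000 + ((133534780290316000/129140163) * (r - 3 / 4) ^ 0 * (3 / 2 - r) ^ 17 + ((4006620583237772000/129140163) * (r - 3 / 4) ^ 1 * (3 / 2 - r) ^ 16 + ((55107448030757180800/129140163) * (r - 3 / 4) ^ 2 * (3 / 2 - r) ^ 15 + ((466120790950983131264/129140163) * (r - 3 / 4) ^ 3 * (3 / 2 - r) ^ 14 + ((68307123028913246250496/3228504075) * (r - 3 / 4) ^ 4 * (3 / 2 - r) ^ 13 + ((295590773067401987062784/3228504075) * (r - 3 / 4) ^ 5 * (3 / 2 - r) ^ 12 + ((196003979685416629815296/645700815) * (r - 3 / 4) ^ 6 * (3 / 2 - r) ^ 11 + ((2545508471809926399260672/3228504075) * (r - 3 / 4) ^ 7 * (3 / 2 - r) ^ 10 + ((5244791201800042784579584/3228504075) * (r - 3 / 4) ^ 8 * (3 / 2 - r)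 ^ 9 + ((8615723438492762944749568/3228504075) * (r - 3 / 4) ^ 9 * (3 / 2 - r) ^ 8 + ((11268239019028398521090048/3228504075) * (r - 3 / 4) ^ 10 * (3 / 2 - r) ^ 7 + ((11640684572973299303415808/3228504075) * (r - 3 / 4) ^ 11 * (3 / 2 - r) ^ 6 + ((9351643561824326631686144/3228504075) * (r - 3 / 4) ^ 12 * (3 / 2 - r) ^ 5 + ((5692420786676976720805888/3228504075) * (r - 3 / 4) ^ 13 * (3 / 2 - r) ^ 4 + ((2517028777345840787750912/3228504075) * (r - 3 / 4) ^ 14 * (3 / 2 - r) ^ 3 + ((150557531075690097016832/645700815) * (r - 3 / 4) ^ 15 * (3 / 2 - r) ^ 2 + ((133036293093091878895616/3228504075) * (r - 3 / 4) ^ 16 * (3 / 2 - r) ^ 1 + ((399110017407413911552/129140163) * (r - 3 / 4) ^ 17 * (3 / 2 - r) ^ 0)))))))))))))))))))) + (((3120 * r ^ 11 + 10500 * r ^ 9 + 13155 * r ^ 7 + 7350 * r ^ 5 + 1575 * r ^ 3) * (140 * (25 * r ^ 2 + 74))) * ((3 * r + 4) ^ 3 * Real.arctan r - (3217 / 5000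 * (3 * r + 4) ^ 3 + (4 * r - 3) * (3 * r + 4) ^ 2 - (4 * r - 3) ^ 3 / 3))) + (((4864 * r ^ 10 + 14048 * r ^ 8 + 14224 * r ^ 6 + 6020 * r ^ 4 + 1120 * r ^ 2 + 160) * (3 * r + 4) ^ 3) * ((4900 * (r ^ 2 + 1) + (25 * r ^ 2 + 74) ^ 2) - (140 * (25 * r ^ 2 + 74)) * Real.sqrt (r ^ 2 + 1))) := by ring
      have hDE : (0:ℝ) < (((3 * r + 4) ^ 3 * (140 * (25 * r ^ 2 + 74)))) * (3120 * r ^ 11 * Real.arctan r - 4864 * r ^ 10 * Real.sqrt (r ^ 2 + 1)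
      + 10500 * r ^ 9 * Real.arctan r + 3120 * r ^ 10
      - 14048 * r ^ 8 * Real.sqrt (r ^ 2 + 1)
      + 13155 * r ^ 7 * Real.arctan r + 9460 * r ^ 8
      - 14224 * r ^ 6 * Real.sqrt (r ^ 2 + 1)
      + 7350 * r ^ 5 * Real.arctan r + 10279 * r ^ 6
      - 6020 * r ^ 4 * Real.sqrt (r ^ 2 + 1)
      + 1575 * r ^ 3 * Real.arctan r + 4985 * r ^ 4
      - 1120 * r ^ 2 * Real.sqrt (r ^ 2 + 1) + 1200 * r ^ 2
      - 160 * Real.sqrt (r ^ 2 + 1) + 160) := by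
        rw [ident]
        exact add_pos_of_pos_of_nonneg (add_pos_of_pos_of_nonneg hBern e1) e2
      rcases mul_pos_iff.mp hDE with ⟨_, hgoal⟩ | ⟨hneg, _⟩
      · exact hgoal
      · linarith
    · -- big region
      have hr0 : (0:ℝ) ≤ r := hr.le
      have hA : (0:ℝ) ≤ (3120 * r ^ 11 + 10500 * r ^ 9 + 13155 * r ^ 7 + 7350 * r ^ 5 + 1575 * r ^ 3) := by
        have h3 : (0:ℝ) ≤ r ^ 3 := pow_nonneg hr0 3
        have h5 : (0:ℝ) ≤ r ^ 5 := pow_nonneg hr0 5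
        have h7 : (0:ℝ) ≤ r ^ 7 := pow_nonneg hr0 7
        have h9 : (0:ℝ) ≤ r ^ 9 := pow_nonneg hr0 9
        have h11 : (0:ℝ) ≤ r ^ 11 := pow_nonneg hr0 11
        linarith
      have hB : (0:ℝ) ≤ (4864 * r ^ 10 + 14048 * r ^ 8 + 14224 * r ^ 6 + 6020 * r ^ 4 + 1120 * r ^ 2 + 160) := by positivity
      have hrne : r ≠ 0 := ne_of_gt hr
      have hinv : Real.arctan r⁻¹ = Real.pi / 2 - Real.arctan r := Real.arctan_inv_of_pos hr
      have hub := atan_ub13 r⁻¹ (by positivity)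
      have hpi : (3.141592 : ℝ) < Real.pi := Real.pi_gt_d6
      have hpi' : (392699 / 125000 : ℝ) < Real.pi := by
        norm_num at hpi ⊢
        linarith
      have ha : (392699 / 250000 - (r⁻¹ - r⁻¹ ^ 3 / 3 + r⁻¹ ^ 5 / 5 - r⁻¹ ^ 7 / 7 + r⁻¹ ^ 9 / 9 - r⁻¹ ^ 11 / 11 + r⁻¹ ^ 13 / 13)) ≤ Real.arctan r := by linarith
      have ha2 : (45045 * r ^ 13) * (392699 / 250000 - (r⁻¹ - r⁻¹ ^ 3 / 3 + r⁻¹ ^ 5 / 5 - r⁻¹ ^ 7 / 7 + r⁻¹ ^ 9 / 9 - r⁻¹ ^ 11 / 11 + r⁻¹ ^ 13 / 13)) ≤ (45045 * r ^ 13) * Real.arctan r :=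
        mul_le_mul_of_nonneg_left ha (by positivity)
      have heqa : (45045 * r ^ 13) * (392699 / 250000 - (r⁻¹ - r⁻¹ ^ 3 / 3 + r⁻¹ ^ 5 / 5 - r⁻¹ ^ 7 / 7 + r⁻¹ ^ 9 / 9 - r⁻¹ ^ 11 / 11 + r⁻¹ ^ 13 / 13)) = (392699 / 250000 * (45045 * r ^ 13) - 45045 * r ^ 12 + 15015 * r ^ 10 - 9009 * r ^ 8 + 6435 * r ^ 6 - 5005 * r ^ 4 + 4095 * r ^ 2 - 3465) := by
        field_simp
        ring
      have hc : (0:ℝ) < ((2 * r ^ 2 + 1) / (2 * r)) := by positivity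
      have hs := sqrt_newton (r ^ 2 + 1) ((2 * r ^ 2 + 1) / (2 * r)) (by positivity) hc
      have hs2 : Real.sqrt (r ^ 2 + 1) * (2 * ((2 * r ^ 2 + 1) / (2 * r))) ≤ r ^ 2 + 1 + ((2 * r ^ 2 + 1) / (2 * r)) ^ 2 := by
        rw [← le_div_iff₀ (by positivity)]
        exact hs
      have hs3 : (4 * r * (2 * r ^ 2 + 1)) * Real.sqrt (r ^ 2 + 1) ≤ (4 * r ^ 2 * (r ^ 2 + 1) + (2 * r ^ 2 + 1) ^ 2) := by
        have hm := mul_le_mul_of_nonneg_left hs2 (by positivity : (0:ℝ) ≤ 4 * r ^ 2)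
        have heqL : 4 * r ^ 2 * (Real.sqrt (r ^ 2 + 1) * (2 * ((2 * r ^ 2 + 1) / (2 * r)))) = (4 * r * (2 * r ^ 2 + 1)) * Real.sqrt (r ^ 2 + 1) := by
          field_simp
        have heqR : 4 * r ^ 2 * (r ^ 2 + 1 + ((2 * r ^ 2 + 1) / (2 * r)) ^ 2) = (4 * r ^ 2 * (r ^ 2 + 1) + (2 * r ^ 2 + 1) ^ 2) := by
          field_simp
          ring
        linarith
      have e1 : (0:ℝ) ≤ ((3120 * r ^ 11 + 10500 * r ^ 9 + 13155 * r ^ 7 + 7350 * r ^ 5 + 1575 * r ^ 3) * (4 * r * (2 * r ^ 2 + 1))) * ((45045 * r ^ 13) * Real.arctan r - (392699 / 250000 * (45045 * r ^ 13) - 45045 * r ^ 12 + 15015 * r ^ 10 - 9009 * r ^ 8 + 6435 * r ^ 6 - 5005 * r ^ 4 + 4095 * r ^ 2 - 3465)) :=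
        mul_nonneg (mul_nonneg hA (by positivity)) (by linarith)
      have e2 : (0:ℝ) ≤ ((4864 * r ^ 10 + 14048 * r ^ 8 + 14224 * r ^ 6 + 6020 * r ^ 4 + 1120 * r ^ 2 + 160) * (45045 * r ^ 13)) * ((4 * r ^ 2 * (r ^ 2 + 1) + (2 * r ^ 2 + 1) ^ 2) - (4 * r * (2 * r ^ 2 + 1)) * Real.sqrt (r ^ 2 + 1)) :=
        mul_nonneg (mul_nonneg hB (by positivity)) (by linarith)
      have hD : (0:ℝ) < ((45045 * r ^ 13) * (4 * r * (2 * r ^ 2 + 1))) := by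
        positivity
      have hBern : (0:ℝ) < ((433519017578897245281/419430400) + ((98269365834106847399511/5242880000) * (r - 3 / 2) ^ 1 + ((211077491349385759224123/1310720000) * (r - 3 / 2) ^ 2 + ((576996975032602026722553/655360000) * (r - 3 / 2) ^ 3 + ((452697117594363364064049/131072000) * (r - 3 / 2) ^ 4 + ((3398621026094112619163529/327680000) * (r - 3 / 2) ^ 5 + ((4065660053520415073825517/163840000) * (r - 3 / 2) ^ 6 + ((3979777173861596941770057/81920000) * (r - 3 / 2) ^ 7 + ((406001536940763137216331/5120000) * (r - 3 / 2) ^ 8 + ((224009932137698008125657/2048000) * (r - 3 / 2) ^ 9 + ((1318469531160556758104157/10240000) * (r - 3 / 2) ^ 10 + ((666956135673962326912581/5120000) * (r - 3 / 2) ^ 11 + ((145696858439162151630933/1280000) * (r - 3 / 2) ^ 12 + ((55148874282511039431297/640000) * (r - 3 / 2) ^ 13 + ((3622534388943822094509/64000) * (r - 3 / 2) ^ 14 + ((5161723924023581120973/160000) * (r - 3 / 2) ^ 15 + ((2548960414228181274633/160000) * (r - 3 / 2) ^ 16 + ((543625955239993423083/80000) * (r - 3 / 2) ^ 17 + ((3114470600311780281/1250)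 * (r - 3 / 2) ^ 18 + ((779844477796813143/1000) * (r - 3 / 2) ^ 19 + ((2063550380546035953/10000) * (r - 3 / 2) ^ 20 + ((227775115452233349/5000) * (r - 3 / 2) ^ 21 + ((20593761197218209/2500) * (r - 3 / 2) ^ 22 + ((1485800689594221/1250) * (r - 3 / 2) ^ 23 + ((658201125582/5) * (r - 3 / 2) ^ 24 + ((6567687053928/625) * (r - 3 / 2) ^ 25 + ((336437177076/625) * (r - 3 / 2) ^ 26 + ((8307090792/625) * (r - 3 / 2) ^ 27)))))))))))))))))))))))))))) := by
        have hlo : (0:ℝ) ≤ r - 3 / 2 := by linarith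
        have hterms : ∀ k : ℕ, ∀ q : ℝ, 0 ≤ q → 0 ≤ q * (r - 3 / 2) ^ k :=
          fun k q hq => mul_nonneg hq (pow_nonneg hlo k)
        have t1 : (0:ℝ) ≤ (98269365834106847399511/5242880000) * (r - 3 / 2) ^ 1 := hterms 1 _ (by norm_num)
        have t2 : (0:ℝ) ≤ (211077491349385759224123/1310720000) * (r - 3 / 2) ^ 2 := hterms 2 _ (by norm_num)
        have t3 : (0:ℝ) ≤ (576996975032602026722553/655360000) * (r - 3 / 2) ^ 3 := hterms 3 _ (by norm_num)
        have t4 : (0:ℝ) ≤ (452697117594363364064049/131072000) * (r - 3 / 2) ^ 4 := hterms 4 _ (by norm_num)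
        have t5 : (0:ℝ) ≤ (3398621026094112619163529/327680000) * (r - 3 / 2) ^ 5 := hterms 5 _ (by norm_num)
        have t6 : (0:ℝ) ≤ (4065660053520415073825517/163840000) * (r - 3 / 2) ^ 6 := hterms 6 _ (by norm_num)
        have t7 : (0:ℝ) ≤ (3979777173861596941770057/81920000) * (r - 3 / 2) ^ 7 := hterms 7 _ (by norm_num)
        have t8 : (0:ℝ) ≤ (406001536940763137216331/5120000) * (r - 3 / 2) ^ 8 := hterms 8 _ (by norm_num)
        have t9 : (0:ℝ) ≤ (224009932137698008125657/2048000) * (r - 3 / 2) ^ 9 := hterms 9 _ (by norm_num)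
        have t10 : (0:ℝ) ≤ (1318469531160556758104157/10240000) * (r - 3 / 2) ^ 10 := hterms 10 _ (by norm_num)
        have t11 : (0:ℝ) ≤ (666956135673962326912581/5120000) * (r - 3 / 2) ^ 11 := hterms 11 _ (by norm_num)
        have t12 : (0:ℝ) ≤ (145696858439162151630933/1280000) * (r - 3 / 2) ^ 12 := hterms 12 _ (by norm_num)
        have t13 : (0:ℝ) ≤ (55148874282511039431297/640000) * (r - 3 / 2) ^ 13 := hterms 13 _ (by norm_num)
        have t14 : (0:ℝ) ≤ (3622534388943822094509/64000) * (r - 3 / 2) ^ 14 := hterms 14 _ (by norm_num)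
        have t15 : (0:ℝ) ≤ (5161723924023581120973/160000) * (r - 3 / 2) ^ 15 := hterms 15 _ (by norm_num)
        have t16 : (0:ℝ) ≤ (2548960414228181274633/160000) * (r - 3 / 2) ^ 16 := hterms 16 _ (by norm_num)
        have t17 : (0:ℝ) ≤ (543625955239993423083/80000) * (r - 3 / 2) ^ 17 := hterms 17 _ (by norm_num)
        have t18 : (0:ℝ) ≤ (3114470600311780281/1250) * (r - 3 / 2) ^ 18 := hterms 18 _ (by norm_num)
        have t19 : (0:ℝ) ≤ (779844477796813143/1000) * (r - 3 / 2) ^ 19 := hterms 19 _ (by norm_num)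
        have t20 : (0:ℝ) ≤ (2063550380546035953/10000) * (r - 3 / 2) ^ 20 := hterms 20 _ (by norm_num)
        have t21 : (0:ℝ) ≤ (227775115452233349/5000) * (r - 3 / 2) ^ 21 := hterms 21 _ (by norm_num)
        have t22 : (0:ℝ) ≤ (20593761197218209/2500) * (r - 3 / 2) ^ 22 := hterms 22 _ (by norm_num)
        have t23 : (0:ℝ) ≤ (1485800689594221/1250) * (r - 3 / 2) ^ 23 := hterms 23 _ (by norm_num)
        have t24 : (0:ℝ) ≤ (658201125582/5) * (r - 3 / 2) ^ 24 := hterms 24 _ (by norm_num)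
        have t25 : (0:ℝ) ≤ (6567687053928/625) * (r - 3 / 2) ^ 25 := hterms 25 _ (by norm_num)
        have t26 : (0:ℝ) ≤ (336437177076/625) * (r - 3 / 2) ^ 26 := hterms 26 _ (by norm_num)
        have t27 : (0:ℝ) ≤ (8307090792/625) * (r - 3 / 2) ^ 27 := hterms 27 _ (by norm_num)
        have hS : (0:ℝ) ≤ ((98269365834106847399511/5242880000) * (r - 3 / 2) ^ 1 + ((211077491349385759224123/1310720000) * (r - 3 / 2) ^ 2 + ((576996975032602026722553/655360000) * (r - 3 / 2) ^ 3 + ((452697117594363364064049/131072000) * (r - 3 / 2) ^ 4 + ((3398621026094112619163529/327680000) * (r - 3 / 2) ^ 5 + ((4065660053520415073825517/163840000) * (r - 3 / 2) ^ 6 + ((3979777173861596941770057/81920000) * (r - 3 / 2) ^ 7 + ((406001536940763137216331/5120000) * (r - 3 / 2) ^ 8 + ((224009932137698008125657/2048000) * (r - 3 / 2) ^ 9 + ((1318469531160556758104157/10240000) * (r - 3 / 2) ^ 10 + ((666956135673962326912581/5120000) * (r - 3 / 2) ^ 11 + ((145696858439162151630933/1280000) * (r - 3 / 2) ^ 12 +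 ((55148874282511039431297/640000) * (r - 3 / 2) ^ 13 + ((3622534388943822094509/64000) * (r - 3 / 2) ^ 14 + ((5161723924023581120973/160000) * (r - 3 / 2) ^ 15 + ((2548960414228181274633/160000) * (r - 3 / 2) ^ 16 + ((543625955239993423083/80000) * (r - 3 / 2) ^ 17 + ((3114470600311780281/1250) * (r - 3 / 2) ^ 18 + ((779844477796813143/1000) * (r - 3 / 2) ^ 19 + ((2063550380546035953/10000) * (r - 3 / 2) ^ 20 + ((227775115452233349/5000) * (r - 3 / 2) ^ 21 + ((20593761197218209/2500) * (r - 3 / 2) ^ 22 + ((1485800689594221/1250) * (r - 3 / 2) ^ 23 + ((658201125582/5) * (r - 3 / 2) ^ 24 + ((6567687053928/625) * (r - 3 / 2) ^ 25 + ((336437177076/625) * (r - 3 / 2) ^ 26 + ((8307090792/625) * (r - 3 / 2) ^ 27))))))))))))))))))))))))))) := add_nonneg t1 (add_nonneg t2 (add_nonneg t3 (add_nonneg t4 (add_nonneg t5 (add_nonneg t6 (add_nonneg t7 (add_nonneg t8 (add_nonneg t9 (add_nonneg t10 (add_nonneg t11 (add_nonneg t12 (add_nonneg t13 (add_nonneg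 t14 (add_nonneg t15 (add_nonneg t16 (add_nonneg t17 (add_nonneg t18 (add_nonneg t19 (add_nonneg t20 (add_nonneg t21 (add_nonneg t22 (add_nonneg t23 (add_nonneg t24 (add_nonneg t25 (add_nonneg t26 t27)))))))))))))))))))))))))
        exact add_pos_of_pos_of_nonneg (by norm_num) hS
      have ident : (((45045 * r ^ 13) * (4 * r * (2 * r ^ 2 + 1)))) * (3120 * r ^ 11 * Real.arctan r - 4864 * r ^ 10 * Real.sqrt (r ^ 2 + 1)
      + 10500 * r ^ 9 * Real.arctan r + 3120 * r ^ 10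
      - 14048 * r ^ 8 * Real.sqrt (r ^ 2 + 1)
      + 13155 * r ^ 7 * Real.arctan r + 9460 * r ^ 8
      - 14224 * r ^ 6 * Real.sqrt (r ^ 2 + 1)
      + 7350 * r ^ 5 * Real.arctan r + 10279 * r ^ 6
      - 6020 * r ^ 4 * Real.sqrt (r ^ 2 + 1)
      + 1575 * r ^ 3 * Real.arctan r + 4985 * r ^ 4
      - 1120 * r ^ 2 * Real.sqrt (r ^ 2 + 1) + 1200 * r ^ 2
      - 160 * Real.sqrt (r ^ 2 + 1) + 160)
          = (((433519017578897245281/419430400) + ((98269365834106847399511/5242880000) * (r - 3 / 2) ^ 1 + ((211077491349385759224123/1310720000) * (r - 3 / 2) ^ 2 + ((576996975032602026722553/655360000) * (r - 3 / 2) ^ 3 + ((452697117594363364064049/131072000) * (r - 3 / 2) ^ 4 + ((3398621026094112619163529/327680000) * (r - 3 / 2) ^ 5 + ((4065660053520415073825517/163840000) * (r - 3 / 2) ^ 6 + ((3979777173861596941770057/81920000) * (r - 3 / 2) ^ 7 + ((406001536940763137216331/5120000) * (r - 3 / 2) ^ 8 + ((224009932137698008125657/2048000) * (r - 3 / 2)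 ^ 9 + ((1318469531160556758104157/10240000) * (r - 3 / 2) ^ 10 + ((666956135673962326912581/5120000) * (r - 3 / 2) ^ 11 + ((145696858439162151630933/1280000) * (r - 3 / 2) ^ 12 + ((55148874282511039431297/640000) * (r - 3 / 2) ^ 13 + ((3622534388943822094509/64000) * (r - 3 / 2) ^ 14 + ((5161723924023581120973/160000) * (r - 3 / 2) ^ 15 + ((2548960414228181274633/160000) * (r - 3 / 2) ^ 16 + ((543625955239993423083/80000) * (r - 3 / 2) ^ 17 + ((3114470600311780281/1250) * (r - 3 / 2) ^ 18 + ((779844477796813143/1000) * (r - 3 / 2) ^ 19 + ((2063550380546035953/10000) * (r - 3 / 2) ^ 20 + ((227775115452233349/5000) * (r - 3 / 2) ^ 21 + ((20593761197218209/2500) * (r - 3 / 2) ^ 22 + ((1485800689594221/1250) * (r - 3 / 2) ^ 23 + ((658201125582/5) * (r - 3 / 2) ^ 24 + ((6567687053928/625) * (r - 3 / 2) ^ 25 + ((336437177076/625) * (r - 3 / 2) ^ 26 + ((8307090792/625) * (r - 3 / 2) ^ 27))))))))))))))))))))))))))))) + (((3120 * r ^ 11 + 10500 * r ^ 9 + 13155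 * r ^ 7 + 7350 * r ^ 5 + 1575 * r ^ 3) * (4 * r * (2 * r ^ 2 + 1))) * ((45045 * r ^ 13) * Real.arctan r - (392699 / 250000 * (45045 * r ^ 13) - 45045 * r ^ 12 + 15015 * r ^ 10 - 9009 * r ^ 8 + 6435 * r ^ 6 - 5005 * r ^ 4 + 4095 * r ^ 2 - 3465))) + (((4864 * r ^ 10 + 14048 * r ^ 8 + 14224 * r ^ 6 + 6020 * r ^ 4 + 1120 * r ^ 2 + 160) * (45045 * r ^ 13)) * ((4 * r ^ 2 * (r ^ 2 + 1) + (2 * r ^ 2 + 1) ^ 2) - (4 * r * (2 * r ^ 2 + 1)) * Real.sqrt (r ^ 2 + 1))) := by ring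
      have hDE : (0:ℝ) < (((45045 * r ^ 13) * (4 * r * (2 * r ^ 2 + 1)))) * (3120 * r ^ 11 * Real.arctan r - 4864 * r ^ 10 * Real.sqrt (r ^ 2 + 1)
      + 10500 * r ^ 9 * Real.arctan r + 3120 * r ^ 10
      - 14048 * r ^ 8 * Real.sqrt (r ^ 2 + 1)
      + 13155 * r ^ 7 * Real.arctan r + 9460 * r ^ 8
      - 14224 * r ^ 6 * Real.sqrt (r ^ 2 + 1)
      + 7350 * r ^ 5 * Real.arctan r + 10279 * r ^ 6
      - 6020 * r ^ 4 * Real.sqrt (r ^ 2 + 1)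
      + 1575 * r ^ 3 * Real.arctan r + 4985 * r ^ 4
      - 1120 * r ^ 2 * Real.sqrt (r ^ 2 + 1) + 1200 * r ^ 2
      - 160 * Real.sqrt (r ^ 2 + 1) + 160) := by
        rw [ident]
        exact add_pos_of_pos_of_nonneg (add_pos_of_pos_of_nonneg hBern e1) e2
      rcases mul_pos_iff.mp hDE with ⟨_, hgoal⟩ | ⟨hneg, _⟩
      · exact hgoal
      · linarith
end
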